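/- arXiv:1807.02837 — 10 statements merged into one kernel-verified Lean document; each statement's English description precedes it below -/
import Mathlib

section
/- Let L : (0,∞) → (0,∞) be slowly varying at ∞ and let t₀ ∈ (0,∞) be such that L is bounded on every compact subset of [t₀, ∞). If α > 0, then ∫_{t₀}^{t} L(u) α u^{α−1} du is asymptotically equivalent to t^α L(t) as t → ∞, i.e. (∫_{t₀}^{t} L(u) α u^{α−1} du) / (t^α L(t)) → 1 as t → ∞. -/
open MeasureTheory Filter Real Set

/-- `L : (0,∞) → (0,∞)` is slowly varying at `∞`: for every `u > 0`,
`L(ut)/L(t) → 1` as `t → ∞`. -/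
def SlowlyVaryingAtTop (L : ℝ → ℝ) : Prop :=
  ∀ u : ℝ, 0 < u → Filter.Tendsto (fun t => L (u * t) / L t) Filter.atTop (nhds 1)

lemma uct_core (h : ℝ → ℝ) (hm : Measurable h)
    (hconv : ∀ u : ℝ, Tendsto (fun x => h (x + u) - h x) atTop (nhds 0))
    (c ε₀ : ℝ) (hc : 0 < c) (hε₀ : 0 < ε₀) :
    ∃ X : ℝ, ∀ x ≥ X, ∀ u ∈ Icc (0:ℝ) c, |h (x + u) - h x| ≤ 2 * ε₀ := by
  by_contra hcon
  push_neg at hcon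
  choose x hx u hu hbig using fun n : ℕ => hcon n
  have hxT : Tendsto x atTop atTop :=
    tendsto_atTop_mono hx tendsto_natCast_atTop_atTop
  have hxuT : Tendsto (fun n => x n + u n) atTop atTop := by
    apply tendsto_atTop_mono (fun n => ?_) hxT
    exact le_add_of_nonneg_right (hu n).1
  -- the two families of good sets
  set E : ℕ → Set ℝ := fun n =>
    Icc 0 (2*c) ∩ ⋂ (m : ℕ) (_ : n ≤ m), {t | |h (x m + t) - h (x m)| ≤ ε₀} with hE
  set F : ℕ → Set ℝ := fun n =>
    Icc 0 (2*c) ∩ ⋂ (m : ℕ) (_ : n ≤ m), {t | |h (x m + u m + t) - h (x m + u m)| ≤ ε₀} with hF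
  have meas : ∀ (y : ℕ → ℝ) (m : ℕ), MeasurableSet {t : ℝ | |h (y m + t) - h (y m)| ≤ ε₀} := by
    intro y m
    have : Measurable fun t : ℝ => |h (y m + t) - h (y m)| :=
      ((hm.comp (measurable_const_add (y m))).sub measurable_const).abs
    exact measurableSet_le this measurable_const
  have hEmeas : ∀ n, MeasurableSet (E n) := fun n =>
    measurableSet_Icc.inter (MeasurableSet.iInter fun m => MeasurableSet.iInter fun _ => meas x m)
  have hFmeas : ∀ n, MeasurableSet (F n) := fun n =>
    measurableSet_Icc.inter (MeasurableSet.iInter fun m => MeasurableSet.iInter fun _ =>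
      meas (fun m => x m + u m) m)
  have key : ∀ (y : ℕ → ℝ), Tendsto y atTop atTop → ∀ t : ℝ,
      ∃ n : ℕ, ∀ m ≥ n, |h (y m + t) - h (y m)| ≤ ε₀ := by
    intro y hy t
    have : Tendsto (fun m => h (y m + t) - h (y m)) atTop (nhds 0) := by
      have := (hconv t).comp hy
      exact this
    have := (this.eventually (eventually_le_nhds (by linarith : (0:ℝ) < ε₀))).and
      (this.eventually (eventually_ge_nhds (by linarith : -ε₀ < (0:ℝ))))
    rw [eventually_atTop] at this
    obtain ⟨n, hn⟩ := this
    exact ⟨n, fun m hm' => abs_le.2 ⟨(hn m hm').2, (hn m hm').1⟩⟩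
  have hEunion : ∀ (G : ℕ → Set ℝ) (y : ℕ → ℝ), Tendsto y atTop atTop →
      (G = fun n => Icc 0 (2*c) ∩ ⋂ (m : ℕ) (_ : n ≤ m), {t | |h (y m + t) - h (y m)| ≤ ε₀}) →
      ⋃ n, G n = Icc 0 (2*c) := by
    intro G y hy hG
    apply Subset.antisymm
    · refine iUnion_subset fun n => ?_
      rw [hG]; exact inter_subset_left
    · intro t ht
      obtain ⟨n, hn⟩ := key y hy t
      refine mem_iUnion.2 ⟨n, ?_⟩
      rw [hG]
      exact ⟨ht, by simpa [Set.mem_iInter] using hn⟩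
  have hmonoG : ∀ (G : ℕ → Set ℝ) (y : ℕ → ℝ),
      (G = fun n => Icc 0 (2*c) ∩ ⋂ (m : ℕ) (_ : n ≤ m), {t | |h (y m + t) - h (y m)| ≤ ε₀}) →
      Monotone G := by
    intro G y hG n n' hnn'
    rw [hG]
    refine inter_subset_inter_right _ ?_
    intro t ht
    simp only [Set.mem_iInter] at ht ⊢
    exact fun m hm' => ht m (le_trans hnn' hm')
  have hvol : ∀ (G : ℕ → Set ℝ) (y : ℕ → ℝ), Tendsto y atTop atTop →
      (G = fun n => Icc 0 (2*c) ∩ ⋂ (m : ℕ) (_ : n ≤ m), {t | |h (y m + t) - h (y m)| ≤ ε₀}) →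
      ∃ n, ENNReal.ofReal (3*c/2) < volume (G n) := by
    intro G y hy hG
    have hT : Tendsto (fun n => volume (G n)) atTop (nhds (volume (⋃ n, G n))) :=
      tendsto_measure_iUnion_atTop (hmonoG G y hG)
    rw [hEunion G y hy hG, Real.volume_Icc] at hT
    have hlt : ENNReal.ofReal (3*c/2) < ENNReal.ofReal (2*c - 0) := by
      rw [ENNReal.ofReal_lt_ofReal_iff (by linarith)]
      linarith
    exact (hT.eventually_const_lt hlt).exists
  obtain ⟨n₁, hn₁⟩ := hvol E x hxT hE
  obtain ⟨n₂, hn₂⟩ := hvol F (fun n => x n + u n) hxuT hF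
  set n := max n₁ n₂ with hn
  have hEvol : ENNReal.ofReal (3*c/2) < volume (E n) :=
    lt_of_lt_of_le hn₁ (measure_mono (hmonoG E x hE (le_max_left _ _)))
  have hFvol : ENNReal.ofReal (3*c/2) < volume (F n) :=
    lt_of_lt_of_le hn₂ (measure_mono (hmonoG F (fun n => x n + u n) hF (le_max_right _ _)))
  -- the translate of F n
  set B : Set ℝ := (fun t => t + (- u n)) ⁻¹' (F n) with hB
  have hBmeas : MeasurableSet B := (hFmeas n).preimage (measurable_add_const _)
  have hBvol : volume B = volume (F n) := by
    rw [hB]; exact measure_preimage_add_right volume (-u n) (F n)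
  have hsub : E n ∪ B ⊆ Icc 0 (3*c) := by
    rintro t (ht | ht)
    · have := ((hE ▸ ht) : t ∈ Icc 0 (2*c) ∩ _).1
      exact ⟨this.1, by nlinarith [this.2]⟩
    · have ht' : t + (-u n) ∈ F n := ht
      have : t + (-u n) ∈ Icc 0 (2*c) := ((hF ▸ ht') : t + (-u n) ∈ Icc 0 (2*c) ∩ _).1
      constructor
      · nlinarith [this.1, (hu n).1]
      · nlinarith [this.2, (hu n).2]
  -- E n and B must intersect
  have hne : (E n ∩ B).Nonempty := by
    by_contra hempty
    rw [Set.not_nonempty_iff_eq_empty] at hempty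
    have hdisj : Disjoint (E n) B := Set.disjoint_iff_inter_eq_empty.2 hempty
    have h1 : volume (E n ∪ B) = volume (E n) + volume B := measure_union hdisj hBmeas
    have h2 : volume (E n ∪ B) ≤ ENNReal.ofReal (3*c) := by
      calc volume (E n ∪ B) ≤ volume (Icc 0 (3*c)) := measure_mono hsub
        _ = ENNReal.ofReal (3*c - 0) := Real.volume_Icc
        _ = ENNReal.ofReal (3*c) := by norm_num
    have h3 : ENNReal.ofReal (3*c) < volume (E n) + volume B := by
      rw [hBvol]
      calc ENNReal.ofReal (3*c) = ENNReal.ofReal (3*c/2) + ENNReal.ofReal (3*c/2) := by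
            rw [← ENNReal.ofReal_add (by linarith) (by linarith)]; norm_num
        _ < volume (E n) + volume (F n) := by
            exact ENNReal.add_lt_add hEvol hFvol
    exact absurd (h1 ▸ h2) (not_le.2 h3)
  obtain ⟨t, htE, htB⟩ := hne
  have h1 : |h (x n + t) - h (x n)| ≤ ε₀ := by
    have := (hE ▸ htE : t ∈ Icc 0 (2*c) ∩ _).2
    simp only [Set.mem_iInter] at this
    exact this n le_rfl
  have h2 : |h (x n + u n + (t + - u n)) - h (x n + u n)| ≤ ε₀ := by
    have htB' : t + -u n ∈ F n := htB
    have := (hF ▸ htB' : t + -u n ∈ Icc 0 (2*c) ∩ _).2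
    simp only [Set.mem_iInter] at this
    exact this n le_rfl
  have h2' : |h (x n + t) - h (x n + u n)| ≤ ε₀ := by
    have : x n + u n + (t + -u n) = x n + t := by ring
    rwa [this] at h2
  have : |h (x n + u n) - h (x n)| ≤ 2 * ε₀ := by
    calc |h (x n + u n) - h (x n)|
        ≤ |h (x n + u n) - h (x n + t)| + |h (x n + t) - h (x n)| := abs_sub_le _ _ _
      _ ≤ ε₀ + ε₀ := add_le_add (by rw [abs_sub_comm]; exact h2') h1
      _ = 2 * ε₀ := by ring
  exact absurd this (not_le.2 (hbig n))

lemma uct (L : ℝ → ℝ) (hLmeas : Measurable L) (hLpos : ∀ t > 0, 0 < L t)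
    (hL : SlowlyVaryingAtTop L) (a ε : ℝ) (ha : 0 < a) (ha1 : a ≤ 1) (hε : 0 < ε) :
    ∃ T : ℝ, 1 ≤ T ∧ ∀ t ≥ T, ∀ s ∈ Icc a 1, |L (s * t) / L t - 1| ≤ ε := by
  set h : ℝ → ℝ := fun x => Real.log (L (Real.exp x)) with hh
  have hm : Measurable h := Real.measurable_log.comp (hLmeas.comp Real.measurable_exp)
  have hdiff : ∀ u x : ℝ, h (x + u) - h x = Real.log (L (Real.exp u * Real.exp x) / L (Real.exp x)) := by
    intro u x
    rw [hh]
    simp only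
    rw [Real.log_div (ne_of_gt (hLpos _ (by positivity))) (ne_of_gt (hLpos _ (Real.exp_pos x)))]
    rw [← Real.exp_add, add_comm u x]
  have hconv : ∀ u : ℝ, Tendsto (fun x => h (x + u) - h x) atTop (nhds 0) := by
    intro u
    have h1 : Tendsto (fun t => Real.log (L (Real.exp u * t) / L t)) atTop (nhds 0) := by
      have := (hL (Real.exp u) (Real.exp_pos u)).log one_ne_zero
      simpa using this
    have := h1.comp Real.tendsto_exp_atTop
    simp only [Function.comp_def] at this
    convert this using 2 with x
    exact hdiff u x
  have hε₀ : 0 < Real.log (1 + ε) / 2 := by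
    have : (0:ℝ) < Real.log (1 + ε) := Real.log_pos (by linarith)
    linarith
  have hla : 0 ≤ Real.log (1/a) := by
    rw [one_div, Real.log_inv]
    exact neg_nonneg.2 (Real.log_nonpos ha.le ha1)
  obtain ⟨X, hX⟩ := uct_core h hm hconv (Real.log (1/a) + 1) (Real.log (1 + ε) / 2)
    (by linarith) hε₀
  refine ⟨max 1 (Real.exp (X + Real.log (1/a))), le_max_left _ _, ?_⟩
  intro t ht s hs
  have ht1 : (1:ℝ) ≤ t := le_trans (le_max_left _ _) ht
  have ht0 : (0:ℝ) < t := by linarith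
  have hs0 : 0 < s := lt_of_lt_of_le ha hs.1
  have hst : 0 < s * t := by positivity
  set x := Real.log (s * t) with hx
  set u := -Real.log s with hu
  have hu0 : 0 ≤ u := neg_nonneg.2 (Real.log_nonpos hs0.le hs.2)
  have hlas : Real.log a ≤ Real.log s := Real.log_le_log ha hs.1
  have huc : u ≤ Real.log (1/a) + 1 := by
    rw [hu, one_div, Real.log_inv]
    linarith
  have hxX : X ≤ x := by
    have h2 : Real.exp (X + Real.log (1/a)) ≤ t := le_trans (le_max_right _ _) ht
    have h3 : X + Real.log (1/a) ≤ Real.log t := (Real.le_log_iff_exp_le ht0).2 h2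
    rw [hx, Real.log_mul hs0.ne' ht0.ne']
    rw [one_div, Real.log_inv] at h3
    linarith
  have key := hX x hxX u ⟨hu0, huc⟩
  have hxu : x + u = Real.log t := by
    rw [hx, hu, Real.log_mul hs0.ne' ht0.ne']; ring
  rw [hxu] at key
  have e1 : h (Real.log t) = Real.log (L t) := by
    rw [hh]; simp only; rw [Real.exp_log ht0]
  have e2 : h x = Real.log (L (s*t)) := by
    rw [hh, hx]; simp only; rw [Real.exp_log hst]
  rw [e1, e2] at key
  set r := L (s*t) / L t with hr
  have hr0 : 0 < r := div_pos (hLpos _ hst) (hLpos _ ht0)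
  have hlogr : |Real.log r| ≤ Real.log (1+ε) := by
    rw [hr, Real.log_div (hLpos _ hst).ne' (hLpos _ ht0).ne', abs_sub_comm]
    linarith [key]
  have hub : r ≤ 1 + ε := by
    have h1 := (abs_le.1 hlogr).2
    have h2 := Real.exp_le_exp.2 h1
    rwa [Real.exp_log hr0, Real.exp_log (by linarith : (0:ℝ) < 1 + ε)] at h2
  have hlb : (1+ε)⁻¹ ≤ r := by
    have h1 := (abs_le.1 hlogr).1
    have h2 := Real.exp_le_exp.2 h1
    rwa [Real.exp_neg, Real.exp_log hr0, Real.exp_log (by linarith : (0:ℝ) < 1 + ε)] at h2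
  rw [abs_le]
  constructor
  · have hεp : (0:ℝ) < 1 + ε := by linarith
    have h5 : (1:ℝ) - ε ≤ 1/(1+ε) := (le_div_iff₀ hεp).2 (by nlinarith)
    rw [one_div] at h5
    linarith
  · linarith

lemma chain (L : ℝ → ℝ) (hLpos : ∀ t > 0, 0 < L t) (ρ T : ℝ) (hρ0 : 0 < ρ) (hρ1 : ρ < 1)
    (hT : 1 ≤ T)
    (hstep : ∀ t ≥ T, ∀ s ∈ Icc ρ 1, L (s * t) ≤ 2 * L t) :
    ∀ k : ℕ, ∀ t ≥ T, ∀ u, T ≤ u → u ≤ t → ρ^k * t ≤ u → L u ≤ 2^(k+1) * L t := by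
  intro k
  induction k with
  | zero =>
    intro t ht u hTu hut hρu
    have ht0 : (0:ℝ) < t := by linarith
    have : u = t := le_antisymm hut (by simpa using hρu)
    subst this
    have := hLpos u (by linarith)
    norm_num
    linarith
  | succ k ih =>
    intro t ht u hTu hut hρu
    have ht0 : (0:ℝ) < t := by linarith
    have hu0 : (0:ℝ) < u := by linarith
    by_cases hcase : ρ * t ≤ u
    · have hs : u/t ∈ Icc ρ 1 := ⟨(le_div_iff₀ ht0).2 (by linarith), (div_le_one ht0).2 hut⟩
      have h1 := hstep t ht (u/t) hs
      rw [div_mul_cancel₀ _ ht0.ne'] at h1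
      have h2 : (1:ℝ) ≤ 2^(k+1) := one_le_pow₀ (by norm_num)
      have := (hLpos t ht0).le
      calc L u ≤ 2 * L t := h1
        _ ≤ 2^(k+1+1) * L t := by
          rw [pow_succ]
          nlinarith
    · push_neg at hcase
      set u' := u / ρ with hu'
      have hu'T : T ≤ u' := le_trans hTu (by
        rw [hu', le_div_iff₀ hρ0]; nlinarith)
      have hu't : u' ≤ t := by
        rw [hu', div_le_iff₀ hρ0]; nlinarith
      have hρu' : ρ^k * t ≤ u' := by
        rw [hu', le_div_iff₀ hρ0]
        calc ρ^k * t * ρ = ρ^(k+1) * t := by ring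
          _ ≤ u := hρu
      have ih' := ih t ht u' hu'T hu't hρu'
      have hst := hstep u' hu'T ρ ⟨le_rfl, hρ1.le⟩
      have hρu'' : ρ * u' = u := by
        rw [hu']; field_simp
      rw [hρu''] at hst
      calc L u ≤ 2 * L u' := hst
        _ ≤ 2 * (2^(k+1) * L t) := by linarith
        _ = 2^(k+1+1) * L t := by ring

lemma potter (L : ℝ → ℝ) (hLpos : ∀ t > 0, 0 < L t) (ρ T η : ℝ) (hρ0 : 0 < ρ) (hρ1 : ρ < 1)
    (hT : 1 ≤ T) (hη : 0 < η) (hρη : Real.log (1/ρ) = Real.log 2 / η)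
    (hstep : ∀ t ≥ T, ∀ s ∈ Icc ρ 1, L (s * t) ≤ 2 * L t) :
    ∀ t ≥ T, ∀ u, T ≤ u → u ≤ t → L u ≤ 4 * (t/u)^η * L t := by
  intro t ht u hTu hut
  have ht0 : (0:ℝ) < t := by linarith
  have hu0 : (0:ℝ) < u := by linarith
  have htu1 : (1:ℝ) ≤ t / u := (le_div_iff₀ hu0).2 (by linarith)
  have hlogtu : 0 ≤ Real.log (t/u) := Real.log_nonneg htu1
  have hlρ : 0 < Real.log (1/ρ) := by
    refine Real.log_pos ?_
    rw [lt_div_iff₀ hρ0]; linarith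
  set β := Real.log (t/u) / Real.log (1/ρ) with hβ
  have hβ0 : 0 ≤ β := div_nonneg hlogtu hlρ.le
  set k := ⌈β⌉₊ with hk
  have hβk : β ≤ (k:ℝ) := Nat.le_ceil β
  have hkβ : (k:ℝ) < β + 1 := Nat.ceil_lt_add_one hβ0
  -- ρ^k * t ≤ u
  have hρk : ρ^k * t ≤ u := by
    have h1 : Real.log (t/u) ≤ k * Real.log (1/ρ) := by
      calc Real.log (t/u) = β * Real.log (1/ρ) := by
            rw [hβ]; field_simp
        _ ≤ k * Real.log (1/ρ) := by nlinarith
    have h2 : (k:ℝ) * Real.log ρ ≤ Real.log (u/t) := by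
      rw [one_div, Real.log_inv] at h1
      have : Real.log (u/t) = - Real.log (t/u) := by
        rw [← Real.log_inv]; congr 1; field_simp
      rw [this]; nlinarith
    have h3 : ρ^k ≤ u/t := by
      have := Real.exp_le_exp.2 h2
      rwa [Real.exp_nat_mul, Real.exp_log hρ0, Real.exp_log (by positivity)] at this
    rw [← le_div_iff₀ ht0]
    exact h3
  have hchain := chain L hLpos ρ T hρ0 hρ1 hT hstep k t ht u hTu hut hρk
  -- 2^(k+1) ≤ 4 * (t/u)^η
  have hl2 : (0:ℝ) < Real.log 2 := Real.log_pos one_lt_two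
  have hpow : (2:ℝ)^(k+1) ≤ 4 * (t/u)^η := by
    have h1 : ((k:ℝ)+1) * Real.log 2 ≤ (β + 2) * Real.log 2 := by nlinarith
    have h2 : (2:ℝ)^(k+1) = Real.exp (((k:ℝ)+1) * Real.log 2) := by
      rw [show ((k:ℝ)+1) = ((k+1 : ℕ):ℝ) by push_cast; ring, Real.exp_nat_mul,
        Real.exp_log two_pos]
    have h3 : (t/u)^η = Real.exp (β * Real.log 2) := by
      rw [Real.rpow_def_of_pos (by positivity)]
      congr 1
      rw [hβ, hρη]
      field_simp
    calc (2:ℝ)^(k+1) = Real.exp (((k:ℝ)+1) * Real.log 2) := h2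
      _ ≤ Real.exp ((β+2) * Real.log 2) := Real.exp_le_exp.2 h1
      _ = Real.exp (β * Real.log 2) * Real.exp (2 * Real.log 2) := by
          rw [← Real.exp_add]; ring_nf
      _ = 4 * (t/u)^η := by
          rw [← h3, show (2:ℝ) * Real.log 2 = Real.log 4 by
            rw [show (4:ℝ) = 2^(2:ℕ) by norm_num, Real.log_pow]; push_cast; ring]
          rw [Real.exp_log (by norm_num : (0:ℝ) < 4)]
          ring
  have := (hLpos t ht0).le
  calc L u ≤ 2^(k+1) * L t := hchain
    _ ≤ 4 * (t/u)^η * L t := by nlinarith [Real.rpow_nonneg (by positivity : (0:ℝ) ≤ t/u) η]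

lemma int_rpow (β a b : ℝ) (hβ : 0 < β) (ha : 0 < a) (hab : a ≤ b) :
    ∫ u in Ioc a b, β * u^(β-1) = b^β - a^β := by
  rw [← intervalIntegral.integral_of_le hab, intervalIntegral.integral_const_mul,
    integral_rpow (Or.inl (by linarith))]
  have h1 : β - 1 + 1 = β := by ring
  rw [h1]
  field_simp

lemma integrableOn_f (L : ℝ → ℝ) (hLmeas : Measurable L) (hLpos : ∀ t > 0, 0 < L t)
    (t₀ : ℝ) (ht₀ : 0 < t₀)
    (hbdd : ∀ K : Set ℝ, IsCompact K → K ⊆ Set.Ici t₀ → ∃ M : ℝ, ∀ t ∈ K, L t ≤ M)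
    (α : ℝ) (b : ℝ) :
    IntegrableOn (fun u => L u * (α * u^(α-1))) (Ioc t₀ b) := by
  rcases le_or_gt b t₀ with h | h
  · rw [Ioc_eq_empty (not_lt.2 h)]; exact integrableOn_empty
  obtain ⟨M, hM⟩ := hbdd (Icc t₀ b) isCompact_Icc Icc_subset_Ici_self
  have hC : ∀ x ∈ Ioc t₀ b, x^(α-1) ≤ max (t₀^(α-1)) (b^(α-1)) := by
    intro x hx
    rcases le_or_gt 0 (α-1) with hα | hα
    · exact le_max_of_le_right (Real.rpow_le_rpow (by linarith [hx.1]) hx.2 hα)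
    · exact le_max_of_le_left (Real.rpow_le_rpow_of_nonpos ht₀ hx.1.le hα.le)
  set C := |M| * (|α| * max (t₀^(α-1)) (b^(α-1))) with hCdef
  apply Measure.integrableOn_of_bounded (M := C)
  · exact measure_Ioc_lt_top.ne
  · exact (hLmeas.mul (measurable_const.mul (by fun_prop))).aestronglyMeasurable
  · rw [ae_restrict_iff' measurableSet_Ioc]
    refine Eventually.of_forall fun x hx => ?_
    have hx0 : (0:ℝ) < x := lt_trans ht₀ hx.1
    have hLx := hLpos x hx0
    have hrp : (0:ℝ) ≤ x^(α-1) := Real.rpow_nonneg hx0.le _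
    have hMx : L x ≤ |M| := le_trans (hM x ⟨hx.1.le, hx.2⟩) (le_abs_self M)
    have hCx : x^(α-1) ≤ max (t₀^(α-1)) (b^(α-1)) := hC x hx
    rw [Real.norm_eq_abs, abs_mul, abs_mul, abs_of_pos hLx, abs_of_nonneg hrp, hCdef]
    calc L x * (|α| * x^(α-1)) ≤ |M| * (|α| * x^(α-1)) :=
          mul_le_mul_of_nonneg_right hMx (by positivity)
      _ ≤ |M| * (|α| * max (t₀^(α-1)) (b^(α-1))) :=
          mul_le_mul_of_nonneg_left (mul_le_mul_of_nonneg_left hCx (abs_nonneg α)) (abs_nonneg M)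

lemma integrableOn_crpow (c β a b : ℝ) (ha : 0 < a) :
    IntegrableOn (fun u => c * (β * u^(β-1))) (Ioc a b) := by
  rcases le_or_gt b a with h | h
  · rw [Ioc_eq_empty (not_lt.2 h)]; exact integrableOn_empty
  have hco : ContinuousOn (fun u : ℝ => c * (β * u^(β-1))) (Icc a b) := by
    apply continuousOn_const.mul
    apply continuousOn_const.mul
    exact ContinuousOn.rpow_const continuousOn_id
      (fun x hx => Or.inl (ne_of_gt (lt_of_lt_of_le ha hx.1)))
  exact hco.integrableOn_Icc.mono_set Ioc_subset_Icc_self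

set_option maxHeartbeats 1000000 in
/-- Karamata: if `L` is slowly varying at `∞` and locally bounded on `[t₀, ∞)`, and `α > 0`,
then `∫_{t₀}^t L(u) α u^{α-1} du ∼ t^α L(t)` as `t → ∞`. -/
theorem stmt_1 (L : ℝ → ℝ) (hLmeas : Measurable L) (hLpos : ∀ t > 0, 0 < L t)
    (hL : SlowlyVaryingAtTop L) (t₀ : ℝ) (ht₀ : 0 < t₀)
    (hbdd : ∀ K : Set ℝ, IsCompact K → K ⊆ Set.Ici t₀ → ∃ M : ℝ, ∀ t ∈ K, L t ≤ M)
    (α : ℝ) (hα : 0 < α) :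
    Filter.Tendsto
      (fun t => (∫ u in Set.Ioc t₀ t, L u * (α * u ^ (α - 1))) / (t ^ α * L t))
      Filter.atTop (nhds 1) := by
  have hη : (0:ℝ) < α/2 := by linarith
  have hl2 : (0:ℝ) < Real.log 2 := Real.log_pos one_lt_two
  set ρ := Real.exp (-(Real.log 2 / (α/2))) with hρdef
  have hρ0 : 0 < ρ := Real.exp_pos _
  have hρ1 : ρ < 1 := by
    rw [hρdef, Real.exp_lt_one_iff]
    have : 0 < Real.log 2 / (α/2) := by positivity
    linarith
  have hρη : Real.log (1/ρ) = Real.log 2 / (α/2) := by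
    rw [hρdef, one_div, ← Real.exp_neg, Real.log_exp, neg_neg]
  obtain ⟨T₁, hT₁1, hT₁⟩ := uct L hLmeas hLpos hL ρ 1 hρ0 hρ1.le one_pos
  set T := max T₁ (t₀ + 1) with hTdef
  have hT1 : (1:ℝ) ≤ T := le_trans hT₁1 (le_max_left _ _)
  have hTt₀ : t₀ < T := lt_of_lt_of_le (by linarith) (le_max_right _ _)
  have hTpos : (0:ℝ) < T := by linarith
  have hstep : ∀ t ≥ T, ∀ s ∈ Icc ρ 1, L (s * t) ≤ 2 * L t := by
    intro t ht s hs
    have ht' : t ≥ T₁ := le_trans (le_max_left _ _) ht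
    have h1 := (abs_le.1 (hT₁ t ht' s hs)).2
    have hLt := hLpos t (by linarith)
    have h2 : L (s*t) / L t ≤ 2 := by linarith
    calc L (s*t) = (L (s*t)/L t) * L t := by field_simp
      _ ≤ 2 * L t := mul_le_mul_of_nonneg_right h2 hLt.le
  have hpot := potter L hLpos ρ T (α/2) hρ0 hρ1 hT1 hη hρη hstep
  have hLT : 0 < L T := hLpos T hTpos
  have hTη : (0:ℝ) < T^(α/2) := Real.rpow_pos_of_pos hTpos _
  -- growth of t^α * L t
  have hgrow : Tendsto (fun t => t^α * L t) atTop atTop := by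
    have hc : 0 < L T * T^(α/2) / 4 := by positivity
    have h1 : Tendsto (fun t : ℝ => L T * T^(α/2) / 4 * t^(α - α/2)) atTop atTop :=
      (tendsto_rpow_atTop (by linarith)).const_mul_atTop hc
    apply tendsto_atTop_mono' _ _ h1
    filter_upwards [eventually_ge_atTop T] with t ht
    have ht0 : (0:ℝ) < t := lt_of_lt_of_le hTpos ht
    have h2 := hpot t ht T le_rfl ht
    have htη : (0:ℝ) < t^(α/2) := Real.rpow_pos_of_pos ht0 _
    have htα : (0:ℝ) < t^α := Real.rpow_pos_of_pos ht0 _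
    rw [Real.div_rpow ht0.le hTpos.le] at h2
    have h5 : L T * T^(α/2) ≤ 4 * t^(α/2) * L t := by
      have h6 := mul_le_mul_of_nonneg_right h2 hTη.le
      calc L T * T^(α/2) ≤ (4*(t^(α/2)/T^(α/2))*L t) * T^(α/2) := h6
        _ = 4 * t^(α/2) * L t := by field_simp
    have h7 : t^(α - α/2) = t^α / t^(α/2) := Real.rpow_sub ht0 _ _
    rw [h7]
    have h8 : L T * T^(α/2) / 4 * (t^α / t^(α/2)) = (L T * T^(α/2) * t^α) / (4 * t^(α/2)) := by
      ring
    rw [h8, div_le_iff₀ (by positivity)]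
    nlinarith [mul_le_mul_of_nonneg_right h5 htα.le]
  -- the ε-argument
  rw [Metric.tendsto_atTop]
  intro ε' hε'
  set εm := min 1 (ε'/4) with hεmdef
  have hεm0 : 0 < εm := lt_min one_pos (by linarith)
  have hεm4 : εm ≤ ε'/4 := min_le_right _ _
  set m := min 1 (ε'/32) with hmdef
  have hm0 : 0 < m := lt_min one_pos (by linarith)
  have hm1 : m ≤ 1 := min_le_left _ _
  have hm32 : m ≤ ε'/32 := min_le_right _ _
  set δ := m ^ (2/α) with hδdef
  have hδ0 : 0 < δ := Real.rpow_pos_of_pos hm0 _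
  have hδ1 : δ ≤ 1 := Real.rpow_le_one hm0.le hm1 (by positivity)
  have hδhalf : δ^(α/2) = m := by
    rw [hδdef, ← Real.rpow_mul hm0.le, show (2/α)*(α/2) = 1 by field_simp, Real.rpow_one]
  have hδα : δ^α ≤ m := by
    have h1 : δ^α = δ^(α/2) * δ^(α/2) := by
      rw [← Real.rpow_add hδ0]; norm_num
    rw [h1, hδhalf]; nlinarith
  have hδα0 : 0 ≤ δ^α := Real.rpow_nonneg hδ0.le _
  obtain ⟨T₃, hT₃1, hT₃⟩ := uct L hLmeas hLpos hL δ εm hδ0 hδ1 hεm0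
  set C₀ := ∫ u in Ioc t₀ T, L u * (α * u^(α-1)) with hC₀def
  have hC₀0 : 0 ≤ C₀ := by
    refine setIntegral_nonneg measurableSet_Ioc (fun x hx => ?_)
    have hx0 : 0 < x := lt_trans ht₀ hx.1
    have h1 := (hLpos x hx0).le
    have h2 : (0:ℝ) ≤ x^(α-1) := Real.rpow_nonneg hx0.le _
    positivity
  have hev := (hgrow.eventually_ge_atTop (4*C₀/ε')).and
    (eventually_ge_atTop (max (max T₃ (T/δ)) 1))
  rw [eventually_atTop] at hev
  obtain ⟨N, hN⟩ := hev
  refine ⟨N, fun t htN => ?_⟩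
  obtain ⟨hgt, htmax⟩ := hN t htN
  have ht1 : (1:ℝ) ≤ t := le_trans (le_max_right _ _) htmax
  have ht0 : (0:ℝ) < t := by linarith
  have hLt : 0 < L t := hLpos t ht0
  have htT₃ : T₃ ≤ t := le_trans (le_trans (le_max_left _ _) (le_max_left _ _)) htmax
  have htTδ : T/δ ≤ t := le_trans (le_trans (le_max_right _ _) (le_max_left _ _)) htmax
  have hTδt : T ≤ δ * t := by
    have := (div_le_iff₀ hδ0).1 htTδ
    linarith [mul_comm t δ]
  have hδtt : δ * t ≤ t := by nlinarith
  have ht₀T : t₀ ≤ T := hTt₀.le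
  have hδt0 : 0 < δ * t := by positivity
  have htT : T ≤ t := le_trans hTδt hδtt
  -- integrability
  have hint1 : IntegrableOn (fun u => L u * (α * u^(α-1))) (Ioc t₀ T) :=
    integrableOn_f L hLmeas hLpos t₀ ht₀ hbdd α T
  have hint2' : IntegrableOn (fun u => L u * (α * u^(α-1))) (Ioc t₀ (δ*t)) :=
    integrableOn_f L hLmeas hLpos t₀ ht₀ hbdd α (δ*t)
  have hint2 : IntegrableOn (fun u => L u * (α * u^(α-1))) (Ioc T (δ*t)) :=
    hint2'.mono_set (Ioc_subset_Ioc_left ht₀T)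
  have hint3' : IntegrableOn (fun u => L u * (α * u^(α-1))) (Ioc t₀ t) :=
    integrableOn_f L hLmeas hLpos t₀ ht₀ hbdd α t
  have hint3 : IntegrableOn (fun u => L u * (α * u^(α-1))) (Ioc (δ*t) t) :=
    hint3'.mono_set (Ioc_subset_Ioc_left (le_trans ht₀T hTδt))
  -- split
  have hsplit : ∫ u in Ioc t₀ t, L u * (α * u^(α-1))
      = C₀ + (∫ u in Ioc T (δ*t), L u * (α * u^(α-1)))
        + (∫ u in Ioc (δ*t) t, L u * (α * u^(α-1))) := by
    have e1 : Ioc t₀ t = Ioc t₀ (δ*t) ∪ Ioc (δ*t) t :=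
      (Ioc_union_Ioc_eq_Ioc (le_trans ht₀T hTδt) hδtt).symm
    have e2 : Ioc t₀ (δ*t) = Ioc t₀ T ∪ Ioc T (δ*t) :=
      (Ioc_union_Ioc_eq_Ioc ht₀T hTδt).symm
    rw [e1, setIntegral_union (Ioc_disjoint_Ioc_of_le le_rfl) measurableSet_Ioc hint2' hint3, e2,
      setIntegral_union (Ioc_disjoint_Ioc_of_le le_rfl) measurableSet_Ioc hint1 hint2]
  -- tail bound
  have hI₂ : ∫ u in Ioc T (δ*t), L u * (α * u^(α-1)) ≤ 8 * m * (t^α * L t) := by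
    have hg : ∀ u ∈ Ioc T (δ*t), L u * (α * u^(α-1))
        ≤ (8 * L t * t^(α/2)) * ((α/2) * u^(α/2-1)) := by
      intro u hu
      have huT : T ≤ u := hu.1.le
      have hu0 : 0 < u := lt_of_lt_of_le hTpos huT
      have hut : u ≤ t := le_trans hu.2 hδtt
      have h1 := hpot t htT u huT hut
      have h3 : (0:ℝ) ≤ α * u^(α-1) := mul_nonneg hα.le (Real.rpow_nonneg hu0.le _)
      have h4 := mul_le_mul_of_nonneg_right h1 h3
      have huη : (0:ℝ) < u^(α/2) := Real.rpow_pos_of_pos hu0 _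
      have h5 : (4 * (t/u)^(α/2) * L t) * (α * u^(α-1))
          = (8 * L t * t^(α/2)) * ((α/2) * u^(α/2-1)) := by
        rw [Real.div_rpow ht0.le hu0.le]
        have h6 : u^(α-1) = u^(α/2-1) * u^(α/2) := by
          rw [← Real.rpow_add hu0]; ring_nf
        rw [h6]
        field_simp
        ring
      rw [h5] at h4
      exact h4
    have hgint : IntegrableOn (fun u => (8*L t*t^(α/2)) * ((α/2) * u^(α/2-1))) (Ioc T (δ*t)) :=
      integrableOn_crpow _ _ _ _ hTpos
    have h6 := setIntegral_mono_on hint2 hgint measurableSet_Ioc hg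
    rw [integral_const_mul, int_rpow (α/2) T (δ*t) hη hTpos hTδt] at h6
    have h8 : (δ*t)^(α/2) = m * t^(α/2) := by
      rw [Real.mul_rpow hδ0.le ht0.le, hδhalf]
    have h9 : t^(α/2) * t^(α/2) = t^α := by
      rw [← Real.rpow_add ht0]; norm_num
    have htη : (0:ℝ) < t^(α/2) := Real.rpow_pos_of_pos ht0 _
    calc ∫ u in Ioc T (δ*t), L u * (α * u^(α-1))
        ≤ (8*L t*t^(α/2)) * ((δ*t)^(α/2) - T^(α/2)) := h6
      _ ≤ (8*L t*t^(α/2)) * (m * t^(α/2)) := by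
          rw [h8]
          have h10 : (0:ℝ) ≤ 8*L t*t^(α/2) := by positivity
          exact mul_le_mul_of_nonneg_left (by linarith [hTη]) h10
      _ = 8 * m * (t^α * L t) := by
          rw [show (8*L t*t^(α/2)) * (m*t^(α/2)) = 8*m*(t^(α/2)*t^(α/2)*L t) by ring, h9]
  -- main interval bounds
  have hmain : ∀ u ∈ Ioc (δ*t) t,
      ((1-εm) * L t) * (α*u^(α-1)) ≤ L u * (α * u^(α-1))
      ∧ L u * (α * u^(α-1)) ≤ ((1+εm) * L t) * (α*u^(α-1)) := by
    intro u hu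
    have hu0 : 0 < u := lt_trans hδt0 hu.1
    have hs : u/t ∈ Icc δ 1 :=
      ⟨(le_div_iff₀ ht0).2 (by nlinarith [hu.1]), (div_le_one ht0).2 hu.2⟩
    have h1 := hT₃ t htT₃ (u/t) hs
    rw [div_mul_cancel₀ _ ht0.ne'] at h1
    have h2 := abs_le.1 h1
    have h3 : (1-εm) * L t ≤ L u := by
      have h4 : 1 - εm ≤ L u / L t := by linarith [h2.1]
      calc (1-εm) * L t ≤ (L u / L t) * L t := mul_le_mul_of_nonneg_right h4 hLt.le
        _ = L u := by field_simp
    have h5 : L u ≤ (1+εm) * L t := by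
      have h6 : L u / L t ≤ 1 + εm := by linarith [h2.2]
      calc L u = (L u/L t) * L t := by field_simp
        _ ≤ (1+εm)*L t := mul_le_mul_of_nonneg_right h6 hLt.le
    have h7 : (0:ℝ) ≤ α * u^(α-1) := mul_nonneg hα.le (Real.rpow_nonneg hu0.le _)
    exact ⟨mul_le_mul_of_nonneg_right h3 h7, mul_le_mul_of_nonneg_right h5 h7⟩
  have hcintl : IntegrableOn (fun u => ((1-εm)*L t) * (α*u^(α-1))) (Ioc (δ*t) t) :=
    integrableOn_crpow _ _ _ _ hδt0
  have hcintu : IntegrableOn (fun u => ((1+εm)*L t) * (α*u^(α-1))) (Ioc (δ*t) t) :=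
    integrableOn_crpow _ _ _ _ hδt0
  have hlow : ((1-εm)*L t) * (t^α - (δ*t)^α) ≤ ∫ u in Ioc (δ*t) t, L u * (α * u^(α-1)) := by
    have := setIntegral_mono_on hcintl hint3 measurableSet_Ioc (fun u hu => (hmain u hu).1)
    rwa [integral_const_mul, int_rpow α (δ*t) t hα hδt0 hδtt] at this
  have hupp : ∫ u in Ioc (δ*t) t, L u * (α * u^(α-1)) ≤ ((1+εm)*L t) * (t^α - (δ*t)^α) := by
    have := setIntegral_mono_on hint3 hcintu measurableSet_Ioc (fun u hu => (hmain u hu).2)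
    rwa [integral_const_mul, int_rpow α (δ*t) t hα hδt0 hδtt] at this
  have hδtα : (δ*t)^α = δ^α * t^α := Real.mul_rpow hδ0.le ht0.le
  have htα0 : (0:ℝ) < t^α := Real.rpow_pos_of_pos ht0 _
  have hD0 : (0:ℝ) < t^α * L t := mul_pos htα0 hLt
  have hC₀le : C₀ ≤ (ε'/4) * (t^α * L t) := by
    have h1 := mul_le_mul_of_nonneg_left hgt (by linarith : (0:ℝ) ≤ ε'/4)
    calc C₀ = (ε'/4) * (4*C₀/ε') := by field_simp
      _ ≤ (ε'/4) * (t^α * L t) := h1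
  have hI₂0 : 0 ≤ ∫ u in Ioc T (δ*t), L u * (α * u^(α-1)) := by
    refine setIntegral_nonneg measurableSet_Ioc (fun x hx => ?_)
    have hx0 : 0 < x := lt_of_lt_of_le hTpos hx.1.le
    have h1 := (hLpos x hx0).le
    have h2 : (0:ℝ) ≤ x^(α-1) := Real.rpow_nonneg hx0.le _
    positivity
  rw [Real.dist_eq, abs_sub_lt_iff, hsplit]
  have hεm1 : εm ≤ 1 := min_le_left _ _
  set I₂ := ∫ u in Ioc T (δ*t), L u * (α * u^(α-1)) with hI₂def
  set I₃ := ∫ u in Ioc (δ*t) t, L u * (α * u^(α-1)) with hI₃def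
  set D := t^α * L t with hDdef
  constructor
  · have h3 : (0:ℝ) ≤ (δ*t)^α := Real.rpow_nonneg hδt0.le _
    have hb3 : I₃ ≤ (1+εm) * D := by
      refine le_trans hupp ?_
      rw [hDdef]
      have h2 : (0:ℝ) ≤ (1+εm)*L t := by positivity
      calc ((1+εm)*L t) * (t^α - (δ*t)^α) ≤ ((1+εm)*L t) * t^α :=
            mul_le_mul_of_nonneg_left (by linarith) h2
        _ = (1+εm) * (t^α * L t) := by ring
    have b1 : I₂ ≤ (ε'/4) * D :=
      le_trans hI₂ (mul_le_mul_of_nonneg_right (by linarith) hD0.le)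
    have b2 : I₃ ≤ (1+ε'/4) * D :=
      le_trans hb3 (mul_le_mul_of_nonneg_right (by linarith) hD0.le)
    have b5 : (ε'/4)*D + (ε'/4)*D + (1+ε'/4)*D = (3*(ε'/4)+1)*D := by ring
    have b6 : (3*(ε'/4)+1)*D < (ε'+1)*D := mul_lt_mul_of_pos_right (by linarith) hD0
    rw [sub_lt_iff_lt_add, div_lt_iff₀ hD0]
    linarith
  · have hb1 : ((1-εm)*(1-δ^α)) * D ≤ I₃ := by
      refine le_trans (le_of_eq ?_) hlow
      rw [hDdef, hδtα]; ring
    have hF : (1 - ε') * D < C₀ + I₂ + I₃ := by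
      have key : (1-ε') * D < ((1-εm)*(1-δ^α)) * D := by
        refine mul_lt_mul_of_pos_right ?_ hD0
        have e1 : εm + δ^α < ε' := by linarith
        have expand : (1-εm)*(1-δ^α) = 1 - εm - δ^α + εm*δ^α := by ring
        rw [expand]
        linarith [mul_nonneg hεm0.le hδα0]
      linarith
    rw [sub_lt_iff_lt_add]
    have hfin : 1 - ε' < (C₀+I₂+I₃)/D := (lt_div_iff₀ hD0).2 hF
    linarith
end

section
/- Let L : (0,∞) → (0,∞) be slowly varying at ∞. If α < 0, then ∫_{t}^{∞} L(u) (−α) u^{α−1} du < ∞ for all sufficiently large t, and this integral is asymptotically equivalent to t^α L(t) as t → ∞, i.e. (∫_{t}^{∞} L(u) (−α) u^{α−1} du) / (t^α L(t)) → 1 as t → ∞. -/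
open MeasureTheory Filter Real Set

lemma karamata_unif (h : ℝ → ℝ) (hmeas : Measurable h)
    (hpt : ∀ u : ℝ, Tendsto (fun x => h (x + u) - h x) atTop (nhds 0))
    {ε : ℝ} (hε : 0 < ε) :
    ∃ X : ℝ, ∀ x ≥ X, ∀ u ∈ Icc (0:ℝ) 1, |h (x + u) - h x| ≤ ε := by
  by_contra hcon
  push_neg at hcon
  choose x hxge u hu hgt using fun n : ℕ => hcon n
  have hx_top : Tendsto x atTop atTop :=
    tendsto_atTop_mono hxge tendsto_natCast_atTop_atTop
  have hxu_top : Tendsto (fun n => x n + u n) atTop atTop :=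
    tendsto_atTop_mono (fun n => le_add_of_nonneg_right (hu n).1) hx_top
  -- the general family of sets
  set S : (ℕ → ℝ) → ℕ → Set ℝ := fun b n =>
    Icc 0 2 ∩ ⋂ (k) (_ : n ≤ k), {t | |h (b k + t) - h (b k)| ≤ ε/2} with hS
  have hSmeas : ∀ b n, MeasurableSet (S b n) := by
    intro b n
    refine measurableSet_Icc.inter (MeasurableSet.iInter fun k => MeasurableSet.iInter fun _ => ?_)
    exact measurableSet_le (((hmeas.comp (measurable_const_add (b k))).sub measurable_const).abs)
      measurable_const
  have hSsub : ∀ b n, S b n ⊆ Icc 0 2 := fun b n => inter_subset_left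
  have hSmono : ∀ b, Monotone (S b) := by
    intro b m n hmn
    refine inter_subset_inter le_rfl (iInter_mono fun k => ?_)
    exact iInter_mono' fun hk => ⟨hmn.trans hk, le_rfl⟩
  have main : ∀ b : ℕ → ℝ, Tendsto b atTop atTop →
      ∃ N, ∀ n, N ≤ n → (7/4 : ENNReal) < volume (S b n) := by
    intro b hb
    have hUnion : ⋃ n, S b n = Icc 0 2 := by
      apply subset_antisymm (iUnion_subset fun n => hSsub b n)
      intro t ht
      have h1 : Tendsto (fun k => |h (b k + t) - h (b k)|) atTop (nhds 0) := by
        simpa using ((hpt t).comp hb).abs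
      have h2 : ∀ᶠ k in atTop, |h (b k + t) - h (b k)| ≤ ε/2 :=
        h1.eventually (eventually_le_nhds (half_pos hε))
      obtain ⟨N, hN⟩ := eventually_atTop.1 h2
      exact mem_iUnion.2 ⟨N, ht, by simpa using fun k hk => hN k hk⟩
    have htend : Tendsto (fun n => volume (S b n)) atTop (nhds (volume (⋃ n, S b n))) :=
      tendsto_measure_iUnion_atTop (hSmono b)
    rw [hUnion] at htend
    have hvol : volume (Icc (0:ℝ) 2) = 2 := by
      rw [Real.volume_Icc]; norm_num
    rw [hvol] at htend
    have h74 : (7/4 : ENNReal) < 2 := by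
      rw [ENNReal.div_lt_iff (by norm_num) (by norm_num)]; norm_num
    have := htend.eventually (eventually_gt_nhds h74)
    exact eventually_atTop.1 this
  obtain ⟨N₁, hN₁⟩ := main x hx_top
  obtain ⟨N₂, hN₂⟩ := main (fun n => x n + u n) hxu_top
  set N := max N₁ N₂ with hNdef
  set A := S x N with hA
  set B := (fun t => t + (- u N)) ⁻¹' (S (fun n => x n + u n) N) with hB
  have hAvol : (7/4 : ENNReal) < volume A := hN₁ N (le_max_left _ _)
  have hBvol : (7/4 : ENNReal) < volume B := by
    rw [hB, measure_preimage_add_right]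
    exact hN₂ N (le_max_right _ _)
  have hBmeas : MeasurableSet B := (hSmeas _ _).preimage (measurable_add_const _)
  have hsub3 : A ∪ B ⊆ Icc (0:ℝ) 3 := by
    rintro t (ht | ht)
    · have h2 := hSsub x N ht
      rw [mem_Icc] at h2 ⊢
      exact ⟨h2.1, h2.2.trans (by norm_num)⟩
    · have h2 := hSsub (fun n => x n + u n) N ht
      rw [mem_Icc] at h2
      have h0 := (hu N).1
      have h1 := (hu N).2
      simp only at h2
      rw [mem_Icc]
      constructor <;> [linarith [h2.1]; linarith [h2.2]]
  have hABvol : volume (A ∩ B) ≠ 0 := by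
    intro h0
    have heq : volume (A ∪ B) + volume (A ∩ B) = volume A + volume B :=
      measure_union_add_inter A hBmeas
    rw [h0, add_zero] at heq
    have hle : volume (A ∪ B) ≤ volume (Icc (0:ℝ) 3) := measure_mono hsub3
    have h3 : volume (Icc (0:ℝ) 3) = 3 := by rw [Real.volume_Icc]; norm_num
    rw [h3, heq] at hle
    have hgt3 : (3 : ENNReal) < volume A + volume B :=
      lt_of_lt_of_le (by
        rw [ENNReal.div_add_div_same, ENNReal.lt_div_iff_mul_lt (by norm_num) (by norm_num)]
        norm_num) (add_le_add hAvol.le hBvol.le)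
    exact absurd hle (not_le.2 hgt3)
  obtain ⟨t, htA, htB⟩ := nonempty_of_measure_ne_zero hABvol
  have h1 : |h (x N + t) - h (x N)| ≤ ε/2 := by
    have := htA.2
    simp only [mem_iInter] at this
    exact this N le_rfl
  have h2 : |h (x N + t) - h (x N + u N)| ≤ ε/2 := by
    have h3 := (mem_preimage.1 htB).2
    simp only [mem_iInter] at h3
    have h4 := h3 N le_rfl
    simp only [mem_setOf_eq] at h4
    have : x N + u N + (t + -u N) = x N + t := by ring
    rwa [this] at h4
  have : |h (x N + u N) - h (x N)| ≤ ε := by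
    calc |h (x N + u N) - h (x N)|
        ≤ |h (x N + u N) - h (x N + t)| + |h (x N + t) - h (x N)| := abs_sub_le _ _ _
      _ ≤ ε/2 + ε/2 := add_le_add (by rwa [abs_sub_comm]) h1
      _ = ε := add_halves ε
  exact absurd (hgt N) (not_lt.2 this)

open MeasureTheory Filter Real Set

lemma karamata_potter (h : ℝ → ℝ) {δ X : ℝ} (hδ : 0 < δ)
    (hX : ∀ x ≥ X, ∀ u ∈ Icc (0:ℝ) 1, |h (x + u) - h x| ≤ δ) :
    ∀ x, X ≤ x → ∀ y, x ≤ y → h y ≤ h x + δ * (y - x + 1) := by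
  intro x hx
  have key : ∀ n : ℕ, ∀ y, x ≤ y → y ≤ x + n + 1 → h y ≤ h x + δ * (n + 1) := by
    intro n
    induction n with
    | zero =>
      intro y h1 h2
      push_cast at h2 ⊢
      have hb := hX x hx (y - x) ⟨by linarith, by linarith⟩
      rw [add_sub_cancel] at hb
      have := (abs_le.1 hb).2
      linarith
    | succ n ih =>
      intro y h1 h2
      push_cast at h2 ⊢
      rcases le_or_gt y (x + n + 1) with h3 | h3
      · have := ih y h1 (by push_cast; linarith)
        push_cast at this
        nlinarith
      · have ihy := ih (y - 1) (by linarith) (by push_cast; linarith)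
        push_cast at ihy
        have hstep := hX (y - 1) (by linarith) 1 ⟨zero_le_one, le_rfl⟩
        rw [sub_add_cancel] at hstep
        have := (abs_le.1 hstep).2
        linarith
  intro y hy
  have h1 : y - x < ⌊y - x⌋₊ + 1 := Nat.lt_floor_add_one (y - x)
  have h2 : (⌊y - x⌋₊ : ℝ) ≤ y - x := Nat.floor_le (sub_nonneg.2 hy)
  have h3 := key ⌊y - x⌋₊ y hy (by linarith)
  nlinarith



set_option maxHeartbeats 1000000 in
/-- Karamata: if `L` is slowly varying at `∞` and `α < 0`, then for all sufficiently large `t`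
the integral `∫_t^∞ L(u) (-α) u^{α-1} du` is finite, and it is asymptotically equivalent to
`t^α L(t)` as `t → ∞`. -/
theorem stmt_2 (L : ℝ → ℝ) (hLmeas : Measurable L) (hLpos : ∀ t > 0, 0 < L t)
    (hL : SlowlyVaryingAtTop L) (α : ℝ) (hα : α < 0) :
    (∀ᶠ t in Filter.atTop,
      MeasureTheory.IntegrableOn (fun u => L u * (-α * u ^ (α - 1))) (Set.Ioi t)) ∧
    Filter.Tendsto
      (fun t => (∫ u in Set.Ioi t, L u * (-α * u ^ (α - 1))) / (t ^ α * L t))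
      Filter.atTop (nhds 1) := by
  set δ : ℝ := -α / 2 with hδdef
  have hδ : 0 < δ := by simp [hδdef]; linarith
  have hexp : α - 1 + δ < -1 := by rw [hδdef]; linarith
  set h : ℝ → ℝ := fun x => Real.log (L (Real.exp x)) with hh
  have hmeas_h : Measurable h := Real.measurable_log.comp (hLmeas.comp Real.measurable_exp)
  have hpt : ∀ u : ℝ, Tendsto (fun x => h (x + u) - h x) atTop (nhds 0) := by
    intro u
    have h1 : Tendsto (fun x => L (Real.exp u * Real.exp x) / L (Real.exp x)) atTop (nhds 1) :=
      (hL (Real.exp u) (Real.exp_pos u)).comp Real.tendsto_exp_atTop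
    have h2 : Tendsto (fun x => Real.log (L (Real.exp u * Real.exp x) / L (Real.exp x)))
        atTop (nhds 0) := by
      have := (Real.continuousAt_log one_ne_zero).tendsto.comp h1
      simpa [Function.comp_def] using this
    refine h2.congr fun x => ?_
    rw [Real.log_div (hLpos _ (by positivity)).ne' (hLpos _ (by positivity)).ne']
    simp only [hh]
    rw [Real.exp_add, mul_comm]
  obtain ⟨X, hX⟩ := karamata_unif h hmeas_h hpt hδ
  have Potter := karamata_potter h hδ hX
  set T : ℝ := max (Real.exp X) 1 with hT
  have hT1 : (1:ℝ) ≤ T := le_max_right _ _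
  have hTpos : (0:ℝ) < T := zero_lt_one.trans_le hT1
  -- multiplicative Potter bound
  have hPot : ∀ t, T ≤ t → ∀ s, t ≤ s → L s ≤ Real.exp δ * (s/t) ^ δ * L t := by
    intro t ht s hs
    have htpos : 0 < t := hTpos.trans_le ht
    have hspos : 0 < s := htpos.trans_le hs
    have hXt : X ≤ Real.log t :=
      (Real.le_log_iff_exp_le htpos).2 ((le_max_left _ _).trans ht)
    have hlts : Real.log t ≤ Real.log s := Real.log_le_log htpos hs
    have hP := Potter (Real.log t) hXt (Real.log s) hlts
    simp only [hh, Real.exp_log hspos, Real.exp_log htpos] at hP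
    calc L s = Real.exp (Real.log (L s)) := (Real.exp_log (hLpos s hspos)).symm
      _ ≤ Real.exp (Real.log (L t) + δ * (Real.log s - Real.log t + 1)) := Real.exp_le_exp.2 hP
      _ = Real.exp δ * (s/t) ^ δ * L t := by
          rw [Real.rpow_def_of_pos (div_pos hspos htpos), Real.log_div hspos.ne' htpos.ne']
          rw [show Real.log (L t) + δ * (Real.log s - Real.log t + 1)
              = δ + ((Real.log s - Real.log t) * δ + Real.log (L t)) by ring]
          rw [Real.exp_add, Real.exp_add, Real.exp_log (hLpos t htpos)]
          ring
  set g : ℝ → ℝ := fun u => L u * (-α * u ^ (α - 1)) with hg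
  have hgmeas : Measurable g :=
    hLmeas.mul (measurable_const.mul (show Measurable fun x : ℝ => x ^ (α - 1) by measurability))
  -- Part 1: integrability
  have hInt : ∀ t, T ≤ t → IntegrableOn g (Ioi t) := by
    intro t ht
    have htpos : 0 < t := hTpos.trans_le ht
    refine Integrable.mono'
      (((integrableOn_Ioi_rpow_of_lt hexp htpos).const_mul
        (Real.exp δ * (-α) * L t / t ^ δ))) hgmeas.aestronglyMeasurable.restrict ?_
    filter_upwards [ae_restrict_mem measurableSet_Ioi] with u hu
    have hupos : 0 < u := htpos.trans hu
    have hgnn : 0 ≤ g u :=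
      mul_nonneg (hLpos u hupos).le
        (mul_nonneg (by linarith) (Real.rpow_pos_of_pos hupos _).le)
    rw [Real.norm_eq_abs, abs_of_nonneg hgnn]
    have hb := hPot t ht u (le_of_lt hu)
    have htδ : (0:ℝ) < t ^ δ := Real.rpow_pos_of_pos htpos _
    calc g u = L u * (-α * u ^ (α - 1)) := rfl
      _ ≤ (Real.exp δ * (u/t) ^ δ * L t) * (-α * u ^ (α - 1)) := by
          apply mul_le_mul_of_nonneg_right hb
          have : (0:ℝ) < u ^ (α - 1) := Real.rpow_pos_of_pos hupos _
          nlinarith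
      _ = Real.exp δ * (-α) * L t / t ^ δ * u ^ (α - 1 + δ) := by
          rw [Real.div_rpow hupos.le htpos.le, Real.rpow_add hupos]
          field_simp
  -- Part 2: dominated convergence
  set F : ℝ → ℝ → ℝ := fun t s => (L (t * s) / L t) * (-α * s ^ (α - 1)) with hF
  have hDCT : Tendsto (fun t => ∫ s in Ioi 1, F t s) atTop
      (nhds (∫ s in Ioi (1:ℝ), -α * s ^ (α - 1))) := by
    refine tendsto_integral_filter_of_dominated_convergence
      (fun s => Real.exp δ * (-α) * s ^ (α - 1 + δ)) ?_ ?_ ?_ ?_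
    · refine Eventually.of_forall fun t => ?_
      exact (((hLmeas.comp (measurable_const_mul t)).div_const (L t)).mul
        (measurable_const.mul (show Measurable fun x : ℝ => x ^ (α - 1) by measurability))).aestronglyMeasurable.restrict
    · filter_upwards [eventually_ge_atTop T] with t ht
      filter_upwards [ae_restrict_mem measurableSet_Ioi] with s hs
      have htpos : 0 < t := hTpos.trans_le ht
      have hs1 : (1:ℝ) < s := hs
      have hspos : 0 < s := zero_lt_one.trans hs1
      have hts : t ≤ t * s := le_mul_of_one_le_right htpos.le hs1.le
      have hb := hPot t ht (t * s) hts
      rw [mul_div_cancel_left₀ s htpos.ne'] at hb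
      have hFnn : 0 ≤ F t s :=
        mul_nonneg (div_nonneg (hLpos (t*s) (by positivity)).le (hLpos t htpos).le)
          (mul_nonneg (by linarith) (Real.rpow_pos_of_pos hspos _).le)
      rw [Real.norm_eq_abs, abs_of_nonneg hFnn]
      have hdiv : L (t * s) / L t ≤ Real.exp δ * s ^ δ := by
        rw [div_le_iff₀ (hLpos t htpos)]
        calc L (t * s) ≤ Real.exp δ * s ^ δ * L t := hb
          _ = Real.exp δ * s ^ δ * L t := rfl
      calc F t s = (L (t * s) / L t) * (-α * s ^ (α - 1)) := rfl
        _ ≤ (Real.exp δ * s ^ δ) * (-α * s ^ (α - 1)) := by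
            apply mul_le_mul_of_nonneg_right hdiv
            have : (0:ℝ) < s ^ (α - 1) := Real.rpow_pos_of_pos hspos _
            nlinarith
        _ = Real.exp δ * (-α) * s ^ (α - 1 + δ) := by
            rw [Real.rpow_add hspos]
            ring
    · exact (integrableOn_Ioi_rpow_of_lt hexp one_pos).const_mul _
    · filter_upwards [ae_restrict_mem measurableSet_Ioi] with s hs
      have hspos : 0 < s := zero_lt_one.trans hs
      have h1 := hL s hspos
      have h2 : Tendsto (fun t => L (t * s) / L t) atTop (nhds 1) :=
        h1.congr fun t => by rw [mul_comm]
      have h3 := h2.mul_const (-α * s ^ (α - 1))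
      rw [one_mul] at h3
      exact h3
  have hlim1 : (∫ s in Ioi (1:ℝ), -α * s ^ (α - 1)) = 1 := by
    rw [integral_const_mul, integral_Ioi_rpow_of_lt (by linarith) one_pos, Real.one_rpow]
    have : α - 1 + 1 = α := by ring
    rw [this]
    field_simp
    exact div_self hα.ne
  rw [hlim1] at hDCT
  have hcongr : ∀ᶠ t in atTop, (∫ s in Ioi 1, F t s)
      = (∫ u in Ioi t, g u) / (t ^ α * L t) := by
    filter_upwards [eventually_gt_atTop 0] with t htpos
    have hcv : ∫ s in Ioi (1:ℝ), g (t * s) = t⁻¹ * ∫ u in Ioi t, g u := by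
      have hcv0 := integral_comp_mul_left_Ioi g 1 htpos
      rw [smul_eq_mul, mul_one] at hcv0
      exact hcv0
    have ht1 : t ^ (1 - α) * t ^ (α - 1) = 1 := by
      rw [← Real.rpow_add htpos]
      norm_num
    have hEq : EqOn (F t) (fun s => (t ^ (1 - α) / L t) * g (t * s)) (Ioi 1) := by
      intro s hs
      have hspos : 0 < s := zero_lt_one.trans hs
      show (L (t * s) / L t) * (-α * s ^ (α - 1))
        = (t ^ (1 - α) / L t) * (L (t * s) * (-α * (t * s) ^ (α - 1)))
      rw [Real.mul_rpow htpos.le hspos.le]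
      have hLt := (hLpos t htpos).ne'
      symm
      calc (t ^ (1 - α) / L t) * (L (t * s) * (-α * (t ^ (α - 1) * s ^ (α - 1))))
          = (t ^ (1 - α) * t ^ (α - 1)) * (L (t * s) / L t * (-α * s ^ (α - 1))) := by
            field_simp
        _ = L (t * s) / L t * (-α * s ^ (α - 1)) := by rw [ht1, one_mul]
    calc (∫ s in Ioi (1:ℝ), F t s)
        = ∫ s in Ioi (1:ℝ), (t ^ (1 - α) / L t) * g (t * s) :=
          setIntegral_congr_fun measurableSet_Ioi hEq
      _ = (t ^ (1 - α) / L t) * ∫ s in Ioi (1:ℝ), g (t * s) := integral_const_mul _ _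
      _ = (t ^ (1 - α) / L t) * (t⁻¹ * ∫ u in Ioi t, g u) := by rw [hcv]
      _ = (∫ u in Ioi t, g u) / (t ^ α * L t) := by
          have h1 : t ^ (1 - α) = t * (t ^ α)⁻¹ := by
            rw [Real.rpow_sub htpos, Real.rpow_one, div_eq_mul_inv]
          rw [h1]
          have hLt := (hLpos t htpos).ne'
          have htα : t ^ α ≠ 0 := (Real.rpow_pos_of_pos htpos α).ne'
          field_simp
  constructor
  · exact eventually_atTop.2 ⟨T, hInt⟩
  · exact (hDCT.congr' hcongr)
end

section
/- Let l : (0,∞) → (0,∞) be slowly varying at 0 and let s₀ ∈ (0,∞) be such that l is bounded on every compact subset of (0, s₀]. If α < 0, then ∫_{s}^{s₀} l(u) (−α) u^{α−1} du is asymptotically equivalent to s^α l(s) as s → 0+, i.e. (∫_{s}^{s₀} l(u) (−α) u^{α−1} du) / (s^α l(s)) → 1 as s → 0+. -/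
open MeasureTheory Filter Real Set
open scoped ENNReal

/-- `l : (0,∞) → (0,∞)` is slowly varying at `0`: for every `u > 0`,
`l(ut)/l(t) → 1` as `t → 0+`. -/
def SlowlyVaryingAtZero (l : ℝ → ℝ) : Prop :=
  ∀ u : ℝ, 0 < u →
    Filter.Tendsto (fun t => l (u * t) / l t) (nhdsWithin 0 (Set.Ioi 0)) (nhds 1)

noncomputable section KaramataAux

/-- Additive version of `l` : `kfun l x = log (l (exp (-x)))`. -/
def kfun (l : ℝ → ℝ) (x : ℝ) : ℝ := Real.log (l (Real.exp (-x)))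

lemma kfun_measurable {l : ℝ → ℝ} (hl : Measurable l) : Measurable (kfun l) :=
  Real.measurable_log.comp (hl.comp (Real.measurable_exp.comp measurable_neg))

lemma kfun_tendsto {l : ℝ → ℝ} (hlpos : ∀ t > 0, 0 < l t) (hl : SlowlyVaryingAtZero l)
    (s : ℝ) : Tendsto (fun x => kfun l (x + s) - kfun l x) atTop (nhds 0) := by
  have hexp : Tendsto (fun x : ℝ => Real.exp (-x)) atTop (nhdsWithin 0 (Set.Ioi 0)) := by
    apply tendsto_nhdsWithin_of_tendsto_nhds_of_eventually_within
    · exact Real.tendsto_exp_atBot.comp tendsto_neg_atTop_atBot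
    · exact Eventually.of_forall fun x => Real.exp_pos _
  have h1 := (hl (Real.exp (-s)) (Real.exp_pos _)).comp hexp
  have h2 := (Real.continuousAt_log (by norm_num : (1:ℝ) ≠ 0)).tendsto.comp h1
  rw [Real.log_one] at h2
  refine h2.congr fun x => ?_
  have hx : (0:ℝ) < Real.exp (-x) := Real.exp_pos _
  have hxs : (0:ℝ) < l (Real.exp (-x)) := hlpos _ hx
  have hus : (0:ℝ) < l (Real.exp (-s) * Real.exp (-x)) := hlpos _ (by positivity)
  simp only [Function.comp_apply]
  rw [Real.log_div hus.ne' hxs.ne']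
  have : Real.exp (-s) * Real.exp (-x) = Real.exp (-(x + s)) := by
    rw [← Real.exp_add]; ring_nf
  rw [this]
  rfl

/-- Uniform convergence theorem for slowly varying functions (additive form). -/
lemma kfun_uct {l : ℝ → ℝ} (hk : Measurable (kfun l))
    (hA : ∀ s : ℝ, Tendsto (fun x => kfun l (x + s) - kfun l x) atTop (nhds 0))
    {ε : ℝ} (hε : 0 < ε) :
    ∃ X : ℝ, ∀ x ≥ X, ∀ s ∈ Icc (0:ℝ) 1, |kfun l (x + s) - kfun l x| ≤ ε := by
  set k := kfun l with hkdef
  by_contra hcon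
  push_neg at hcon
  choose x hxge s hsmem hbig using hcon
  set xn : ℕ → ℝ := fun n => x (n : ℝ) with hxn_def
  set sn : ℕ → ℝ := fun n => s (n : ℝ) with hsn_def
  have hxn : Tendsto xn atTop atTop :=
    tendsto_atTop_mono (fun n => hxge (n : ℝ)) tendsto_natCast_atTop_atTop
  have hyn : Tendsto (fun n => xn n + sn n) atTop atTop := by
    apply tendsto_atTop_mono (fun n => ?_) hxn
    have := (hsmem (n : ℝ)).1
    linarith
  set A : ℕ → Set ℝ := fun n => {t ∈ Icc (0:ℝ) 2 | ε/2 ≤ |k (xn n + t) - k (xn n)|} with hA_def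
  set B : ℕ → Set ℝ := fun n =>
    {t ∈ Icc (-1:ℝ) 2 | ε/2 ≤ |k ((xn n + sn n) + t) - k (xn n + sn n)|} with hB_def
  have hkm : Measurable k := hk
  have hAm : ∀ n, MeasurableSet (A n) := by
    intro n
    apply measurableSet_Icc.inter
    exact measurableSet_le measurable_const
      ((hkm.comp (measurable_const.add measurable_id)).sub measurable_const).abs
  have hBm : ∀ n, MeasurableSet (B n) := by
    intro n
    apply measurableSet_Icc.inter
    exact measurableSet_le measurable_const
      ((hkm.comp (measurable_const.add measurable_id)).sub measurable_const).abs
  -- both measures tend to 0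
  have hAtend : Tendsto (fun n => volume (A n)) atTop (nhds 0) := by
    have := tendsto_measure_of_ae_tendsto_indicator (μ := volume) atTop
      (MeasurableSet.empty) hAm (measurableSet_Icc : MeasurableSet (Icc (0:ℝ) 2))
      (by simp [Real.volume_Icc]) (Eventually.of_forall fun n => fun t ht => ht.1)
      ?_
    · simpa using this
    · refine Eventually.of_forall fun t => ?_
      have h4 : ∀ᶠ n in atTop, |k (xn n + t) - k (xn n)| < ε/2 := by
        have h5 := ((hA t).comp hxn).abs
        rw [abs_zero] at h5
        exact (h5.eventually_lt_const (by linarith : (0:ℝ) < ε/2)).mono fun n hn => by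
          simpa using hn
      filter_upwards [h4] with n hn
      simp only [mem_empty_iff_false, iff_false]
      intro htA
      exact absurd htA.2 (not_le.mpr hn)
  have hBtend : Tendsto (fun n => volume (B n)) atTop (nhds 0) := by
    have := tendsto_measure_of_ae_tendsto_indicator (μ := volume) atTop
      (MeasurableSet.empty) hBm (measurableSet_Icc : MeasurableSet (Icc (-1:ℝ) 2))
      (by simp [Real.volume_Icc]) (Eventually.of_forall fun n => fun t ht => ht.1)
      ?_
    · simpa using this
    · refine Eventually.of_forall fun t => ?_
      have h4 : ∀ᶠ n in atTop, |k ((xn n + sn n) + t) - k (xn n + sn n)| < ε/2 := by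
        have h5 := ((hA t).comp hyn).abs
        rw [abs_zero] at h5
        exact (h5.eventually_lt_const (by linarith : (0:ℝ) < ε/2)).mono fun n hn => by
          simpa using hn
      filter_upwards [h4] with n hn
      simp only [mem_empty_iff_false, iff_false]
      intro htB
      exact absurd htB.2 (not_le.mpr hn)
  -- covering
  have hcover : ∀ n, Icc (0:ℝ) 2 ⊆ A n ∪ ((fun t => t + -(sn n)) ⁻¹' B n) := by
    intro n t ht
    by_cases hA' : ε/2 ≤ |k (xn n + t) - k (xn n)|
    · exact Or.inl ⟨ht, hA'⟩
    · right
      have hsn1 := hsmem (n : ℝ)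
      have key : ε < |k (xn n + sn n) - k (xn n)| := hbig (n : ℝ)
      have tri : |k (xn n + sn n) - k (xn n)| ≤
          |k (xn n + t) - k (xn n)| + |k (xn n + sn n) - k (xn n + t)| := by
        have := abs_sub_abs_le_abs_sub (k (xn n + sn n) - k (xn n)) 0
        calc |k (xn n + sn n) - k (xn n)|
            = |(k (xn n + t) - k (xn n)) + (k (xn n + sn n) - k (xn n + t))| := by ring_nf
          _ ≤ _ := abs_add_le _ _
      have h6 : ε/2 ≤ |k (xn n + sn n) - k (xn n + t)| := by
        push_neg at hA'
        linarith
      simp only [mem_preimage]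
      have ht1 : (0:ℝ) ≤ t := ht.1
      have ht2 : t ≤ 2 := ht.2
      have hs1 : (0:ℝ) ≤ sn n := hsn1.1
      have hs2 : sn n ≤ 1 := hsn1.2
      refine ⟨⟨by linarith, by linarith⟩, ?_⟩
      · have e : (xn n + sn n) + (t + -(sn n)) = xn n + t := by ring
        rw [e]
        rwa [abs_sub_comm]
  have h2le : ∀ n, (2:ℝ≥0∞) ≤ volume (A n) + volume (B n) := by
    intro n
    calc (2:ℝ≥0∞) = volume (Icc (0:ℝ) 2) := by
          rw [Real.volume_Icc]; norm_num
      _ ≤ volume (A n ∪ ((fun t => t + -(sn n)) ⁻¹' B n)) := measure_mono (hcover n)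
      _ ≤ volume (A n) + volume ((fun t => t + -(sn n)) ⁻¹' B n) := measure_union_le _ _
      _ = volume (A n) + volume (B n) := by
          rw [measure_preimage_add_right]
  have hsum : Tendsto (fun n => volume (A n) + volume (B n)) atTop (nhds 0) := by
    simpa using hAtend.add hBtend
  have := hsum.eventually_lt_const (by norm_num : (0:ℝ≥0∞) < 2)
  obtain ⟨n, hn⟩ := this.exists
  exact absurd (h2le n) (not_le.mpr hn)

/-- Potter-type bound (additive form). -/
lemma kfun_potter {l : ℝ → ℝ} (hk : Measurable (kfun l))
    (hA : ∀ s : ℝ, Tendsto (fun x => kfun l (x + s) - kfun l x) atTop (nhds 0))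
    {ε : ℝ} (hε : 0 < ε) :
    ∃ X : ℝ, ∀ x ≥ X, ∀ s ≥ (0:ℝ), |kfun l (x + s) - kfun l x| ≤ ε * (s + 1) := by
  obtain ⟨X, hX⟩ := kfun_uct hk hA hε
  refine ⟨X, ?_⟩
  have key : ∀ n : ℕ, ∀ s ∈ Icc (n:ℝ) (n+1), ∀ x ≥ X,
      |kfun l (x + s) - kfun l x| ≤ ε * (n + 1) := by
    intro n
    induction n with
    | zero =>
      intro u hu x hx
      have := hX x hx u (by simpa using hu)
      push_cast
      linarith
    | succ m ih =>
      intro u hu x hx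
      have h1 : |kfun l (x + 1) - kfun l x| ≤ ε := hX x hx 1 ⟨zero_le_one, le_refl 1⟩
      have hu1 : u - 1 ∈ Icc (m:ℝ) (m+1) := by
        obtain ⟨ha, hb⟩ := hu
        push_cast at ha hb ⊢
        constructor <;> linarith
      have h2 := ih (u-1) hu1 (x+1) (by linarith)
      have e : (x+1)+(u-1) = x + u := by ring
      rw [e] at h2
      calc |kfun l (x+u) - kfun l x|
          = |(kfun l (x+u) - kfun l (x+1)) + (kfun l (x+1) - kfun l x)| := by ring_nf
        _ ≤ |kfun l (x+u) - kfun l (x+1)| + |kfun l (x+1) - kfun l x| := abs_add_le _ _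
        _ ≤ ε * (m+1) + ε := add_le_add h2 h1
        _ = ε * ((m+1 : ℕ) + 1) := by push_cast; ring
  intro x hx u hu
  have h1 : ((⌊u⌋₊ : ℝ)) ≤ u := Nat.floor_le hu
  have h2 : u ≤ (⌊u⌋₊ : ℝ) + 1 := (Nat.lt_floor_add_one u).le
  have h3 := key ⌊u⌋₊ u ⟨h1, h2⟩ x hx
  have : ε * ((⌊u⌋₊ : ℝ) + 1) ≤ ε * (u + 1) := by nlinarith
  linarith

/-- Potter bound (multiplicative form, at 0). -/
lemma potter_mul {l : ℝ → ℝ} (hlmeas : Measurable l) (hlpos : ∀ t > 0, 0 < l t)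
    (hl : SlowlyVaryingAtZero l) {ε : ℝ} (hε : 0 < ε) (c : ℝ) (hc : 0 < c) :
    ∃ t₀ : ℝ, 0 < t₀ ∧ t₀ ≤ c ∧ ∀ t > (0:ℝ), ∀ u ≥ (1:ℝ), u * t ≤ t₀ →
      l (u * t) / l t ≤ Real.exp ε * u ^ ε ∧
      Real.exp (-ε) * u ^ (-ε) ≤ l (u * t) / l t := by
  obtain ⟨X, hX⟩ := kfun_potter (kfun_measurable hlmeas) (kfun_tendsto hlpos hl) hε
  set X' := max X (-Real.log c) with hX'def
  refine ⟨Real.exp (-X'), Real.exp_pos _, ?_, ?_⟩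
  · have : -X' ≤ Real.log c := by
      have := le_max_right X (-Real.log c); linarith
    calc Real.exp (-X') ≤ Real.exp (Real.log c) := Real.exp_le_exp.mpr this
      _ = c := Real.exp_log hc
  intro t ht u hu hut
  have hu0 : (0:ℝ) < u := lt_of_lt_of_le one_pos hu
  have hut0 : (0:ℝ) < u * t := mul_pos hu0 ht
  set x := -Real.log (u*t) with hxdef
  set s := Real.log u with hsdef
  have hxX : x ≥ X := by
    have h7 : Real.log (u*t) ≤ -X' := by
      calc Real.log (u*t) ≤ Real.log (Real.exp (-X')) :=
            Real.log_le_log hut0 hut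
        _ = -X' := Real.log_exp _
    have := le_max_left X (-Real.log c)
    simp only [hxdef]
    linarith
  have hs0 : s ≥ 0 := Real.log_nonneg hu
  have hb := hX x hxX s hs0
  have e1 : Real.exp (-x) = u * t := by
    simp only [hxdef, neg_neg]; exact Real.exp_log hut0
  have e2 : Real.exp (-(x+s)) = t := by
    have : -(x+s) = Real.log (u*t) - Real.log u := by simp [hxdef, hsdef]; ring
    rw [this, Real.log_mul hu0.ne' ht.ne']
    simpa using Real.exp_log ht
  have hkx : kfun l x = Real.log (l (u*t)) := by rw [kfun, e1]
  have hkxs : kfun l (x+s) = Real.log (l t) := by rw [kfun, e2]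
  rw [hkxs, hkx] at hb
  have hlt : (0:ℝ) < l t := hlpos t ht
  have hlut : (0:ℝ) < l (u*t) := hlpos _ hut0
  have hratio : l (u*t) / l t = Real.exp (Real.log (l (u*t)) - Real.log (l t)) := by
    rw [Real.exp_sub, Real.exp_log hlut, Real.exp_log hlt]
  have habs : |Real.log (l (u*t)) - Real.log (l t)| ≤ ε * (s + 1) := by
    rwa [abs_sub_comm] at hb
  rw [abs_le] at habs
  have hupow : Real.exp (ε * s) = u ^ ε := by
    rw [Real.rpow_def_of_pos hu0, hsdef]; ring_nf
  constructor
  · rw [hratio]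
    calc Real.exp (Real.log (l (u*t)) - Real.log (l t))
        ≤ Real.exp (ε * (s+1)) := Real.exp_le_exp.mpr (by linarith [habs.2])
      _ = Real.exp ε * u ^ ε := by
          rw [← hupow, ← Real.exp_add]; ring_nf
  · rw [hratio]
    have : Real.exp (-ε) * u ^ (-ε) = Real.exp (-(ε * (s+1))) := by
      rw [Real.rpow_def_of_pos hu0, ← Real.exp_add, hsdef]; ring_nf
    rw [this]
    exact Real.exp_le_exp.mpr (by linarith [habs.1])

end KaramataAux

set_option maxHeartbeats 2000000 in
/-- If `l` is slowly varying at `0` and locally bounded on `(0, s₀]`, and `α < 0`, then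
`∫_s^{s₀} l(u) (-α) u^{α-1} du ∼ s^α l(s)` as `s → 0+`. -/
theorem stmt_3 (l : ℝ → ℝ) (hlmeas : Measurable l) (hlpos : ∀ t > 0, 0 < l t)
    (hl : SlowlyVaryingAtZero l) (s₀ : ℝ) (hs₀ : 0 < s₀)
    (hbdd : ∀ K : Set ℝ, IsCompact K → K ⊆ Set.Ioc 0 s₀ → ∃ M : ℝ, ∀ t ∈ K, l t ≤ M)
    (α : ℝ) (hα : α < 0) :
    Filter.Tendsto
      (fun s => (∫ u in Set.Ioc s s₀, l u * (-α * u ^ (α - 1))) / (s ^ α * l s))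
      (nhdsWithin 0 (Set.Ioi 0)) (nhds 1) := by
  set ε := -α/2 with hεdef
  have hε : 0 < ε := by simp only [hεdef]; linarith
  obtain ⟨t₀, ht₀pos, ht₀le, hpot⟩ := potter_mul hlmeas hlpos hl hε s₀ hs₀
  set f : ℝ → ℝ := fun u => l u * (-α * u ^ (α - 1)) with hfdef
  have hfmeas : Measurable f := by
    apply hlmeas.mul
    apply measurable_const.mul
    measurability
  -- integrability of f on Ioc a s₀ for a > 0
  have hint : ∀ a : ℝ, 0 < a → IntegrableOn f (Ioc a s₀) := by
    intro a ha
    rcases le_or_gt a s₀ with has | has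
    · obtain ⟨M, hM⟩ := hbdd (Icc a s₀) isCompact_Icc
        (fun t htm => ⟨lt_of_lt_of_le ha htm.1, htm.2⟩)
      apply Measure.integrableOn_of_bounded (M := M * (-α * a ^ (α - 1)))
        measure_Ioc_lt_top.ne hfmeas.aestronglyMeasurable
      filter_upwards [ae_restrict_mem measurableSet_Ioc] with u hu
      have hu0 : 0 < u := lt_trans ha hu.1
      have h1 : l u ≤ M := hM u ⟨hu.1.le, hu.2⟩
      have h2 : u ^ (α-1) ≤ a ^ (α-1) :=
        Real.rpow_le_rpow_of_nonpos ha hu.1.le (by linarith)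
      have h3 : 0 < u ^ (α-1) := Real.rpow_pos_of_pos hu0 _
      have h4 : 0 < l u := hlpos u hu0
      have h5 : 0 < a ^ (α-1) := Real.rpow_pos_of_pos ha _
      rw [hfdef]
      simp only [Real.norm_eq_abs]
      rw [abs_of_nonneg (mul_nonneg h4.le (by nlinarith))]
      have hM0 : 0 < M := lt_of_lt_of_le h4 h1
      calc l u * (-α * u ^ (α-1)) ≤ M * (-α * u ^ (α-1)) :=
            mul_le_mul_of_nonneg_right h1 (by nlinarith)
        _ = (M * -α) * u ^ (α-1) := by ring
        _ ≤ (M * -α) * a ^ (α-1) := mul_le_mul_of_nonneg_left h2 (by nlinarith)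
        _ = M * (-α * a ^ (α-1)) := by ring
    · rw [Set.Ioc_eq_empty (not_lt.mpr has.le)]
      exact integrableOn_empty
  set C := ∫ u in Ioc t₀ s₀, f u with hCdef
  -- denominator tends to infinity
  have hlowbound : ∀ s : ℝ, 0 < s → s ≤ t₀ →
      (l t₀ * (Real.exp ε)⁻¹ * (t₀ ^ ε)⁻¹) * s ^ (α + ε) ≤ s ^ α * l s := by
    intro s hs0 hst
    have hls : 0 < l s := hlpos s hs0
    have hu1 : (1:ℝ) ≤ t₀ / s := (one_le_div hs0).mpr hst
    have hut : (t₀ / s) * s ≤ t₀ := by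
      rw [div_mul_cancel₀ _ hs0.ne']
    have hup := (hpot s hs0 (t₀/s) hu1 hut).1
    rw [div_mul_cancel₀ _ hs0.ne'] at hup
    -- hup : l t₀ / l s ≤ exp ε * (t₀/s) ^ ε
    have hdivpow : (t₀ / s) ^ ε = t₀ ^ ε / s ^ ε := Real.div_rpow ht₀pos.le hs0.le ε
    have hQ : 0 < s ^ ε := Real.rpow_pos_of_pos hs0 _
    have hP : 0 < t₀ ^ ε := Real.rpow_pos_of_pos ht₀pos _
    have hE : 0 < Real.exp ε := Real.exp_pos _
    have hsα : 0 < s ^ α := Real.rpow_pos_of_pos hs0 _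
    have h7 : l t₀ ≤ Real.exp ε * (t₀ ^ ε / s ^ ε) * l s := by
      have h7' := (div_le_iff₀ hls).mp hup
      rw [hdivpow] at h7'
      linarith
    have h8 : l t₀ * s ^ ε ≤ Real.exp ε * t₀ ^ ε * l s := by
      have := mul_le_mul_of_nonneg_right h7 hQ.le
      calc l t₀ * s ^ ε ≤ (Real.exp ε * (t₀ ^ ε / s ^ ε) * l s) * s ^ ε := this
        _ = Real.exp ε * t₀ ^ ε * l s := by field_simp
    have h9 : l t₀ * (Real.exp ε)⁻¹ * (t₀ ^ ε)⁻¹ * s ^ ε ≤ l s := by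
      rw [show l t₀ * (Real.exp ε)⁻¹ * (t₀ ^ ε)⁻¹ * s ^ ε
          = (l t₀ * s ^ ε) / (Real.exp ε * t₀ ^ ε) by field_simp]
      rw [div_le_iff₀ (by positivity)]
      linarith
    calc (l t₀ * (Real.exp ε)⁻¹ * (t₀ ^ ε)⁻¹) * s ^ (α + ε)
        = (l t₀ * (Real.exp ε)⁻¹ * (t₀ ^ ε)⁻¹ * s ^ ε) * s ^ α := by
          rw [Real.rpow_add hs0]; ring
      _ ≤ l s * s ^ α := mul_le_mul_of_nonneg_right h9 hsα.le
      _ = s ^ α * l s := mul_comm _ _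
  have hdenom : Tendsto (fun s => s ^ α * l s) (nhdsWithin 0 (Set.Ioi 0)) atTop := by
    have hpow : Tendsto (fun s : ℝ => s ^ (α + ε)) (nhdsWithin 0 (Set.Ioi 0)) atTop := by
      have h1 : Tendsto (fun s : ℝ => (s⁻¹) ^ (-(α + ε))) (nhdsWithin 0 (Set.Ioi 0)) atTop :=
        (tendsto_rpow_atTop (by simp only [hεdef]; linarith : 0 < -(α + ε))).comp
          tendsto_inv_nhdsGT_zero
      apply h1.congr'
      filter_upwards [self_mem_nhdsWithin] with s hs
      have hs0 : (0:ℝ) < s := hs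
      rw [Real.rpow_neg (by positivity), Real.inv_rpow hs0.le, inv_inv]
    have hcpos : 0 < l t₀ * (Real.exp ε)⁻¹ * (t₀ ^ ε)⁻¹ :=
      mul_pos (mul_pos (hlpos t₀ ht₀pos) (inv_pos.mpr (Real.exp_pos ε)))
        (inv_pos.mpr (Real.rpow_pos_of_pos ht₀pos ε))
    apply tendsto_atTop_mono' _ _ (hpow.const_mul_atTop hcpos)
    filter_upwards [Ioo_mem_nhdsGT_of_mem (⟨le_refl 0, ht₀pos⟩ :
      (0:ℝ) ∈ Ico (0:ℝ) t₀)] with s hs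
    exact hlowbound s hs.1 hs.2.le
  have hC0 : Tendsto (fun s => C / (s ^ α * l s)) (nhdsWithin 0 (Set.Ioi 0)) (nhds 0) :=
    tendsto_const_nhds.div_atTop hdenom
  -- main term via dominated convergence
  set G : ℝ → ℝ := fun v => -α * v ^ (α - 1) with hGdef
  set F : ℝ → ℝ → ℝ := fun s v =>
    Set.indicator (Ioc 1 (t₀/s)) (fun v => (l (v * s) / l s) * (-α * v ^ (α - 1))) v with hFdef
  have hlim1 : ∫ v in Ioi (1:ℝ), G v = 1 := by
    rw [hGdef, MeasureTheory.integral_const_mul,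
      integral_Ioi_rpow_of_lt (by linarith : α - 1 < -1) one_pos]
    rw [Real.one_rpow]
    field_simp
    rw [sub_add_cancel]
    exact div_self hα.ne
  have hIconv : Tendsto (fun s => ∫ v in Ioi (1:ℝ), F s v)
      (nhdsWithin 0 (Set.Ioi 0)) (nhds 1) := by
    have hIconv' : Tendsto (fun s => ∫ v in Ioi (1:ℝ), F s v)
        (nhdsWithin 0 (Set.Ioi 0)) (nhds (∫ v in Ioi (1:ℝ), G v)) := ?_
    · rwa [hlim1] at hIconv'
    apply tendsto_integral_filter_of_dominated_convergence
      (bound := fun v => (Real.exp ε * -α) * v ^ (ε + α - 1))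
    · refine Eventually.of_forall fun s => ?_
      apply Measurable.aestronglyMeasurable
      apply Measurable.indicator _ measurableSet_Ioc
      apply Measurable.mul
      · exact (hlmeas.comp (measurable_id.mul_const s)).div_const (l s)
      · apply measurable_const.mul; measurability
    · filter_upwards [Ioo_mem_nhdsGT_of_mem (⟨le_refl 0, ht₀pos⟩ :
        (0:ℝ) ∈ Ico (0:ℝ) t₀)] with s hs
      filter_upwards [ae_restrict_mem measurableSet_Ioi] with v hv
      have hv1 : (1:ℝ) < v := hv
      have hv0 : (0:ℝ) < v := lt_trans one_pos hv1
      have hs0 : (0:ℝ) < s := hs.1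
      have hrpow : v ^ ε * v ^ (α - 1) = v ^ (ε + α - 1) := by
        rw [← Real.rpow_add hv0]; ring_nf
      by_cases hmem : v ∈ Ioc 1 (t₀/s)
      · rw [hFdef]
        simp only [Set.indicator_of_mem hmem]
        have hvs : v * s ≤ t₀ := by
          have := hmem.2
          rwa [le_div_iff₀ hs0] at this
        have hrat := (hpot s hs0 v hv1.le hvs).1
        have hls : 0 < l s := hlpos s hs0
        have hlvs : 0 < l (v * s) := hlpos _ (mul_pos hv0 hs0)
        have hpos2 : 0 < -α * v ^ (α - 1) := by
          have := Real.rpow_pos_of_pos hv0 (α - 1); nlinarith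
        rw [Real.norm_eq_abs, abs_of_nonneg (mul_nonneg (div_nonneg hlvs.le hls.le) hpos2.le)]
        calc (l (v * s) / l s) * (-α * v ^ (α - 1))
            ≤ (Real.exp ε * v ^ ε) * (-α * v ^ (α - 1)) :=
              mul_le_mul_of_nonneg_right hrat hpos2.le
          _ = (Real.exp ε * -α) * (v ^ ε * v ^ (α - 1)) := by ring
          _ = (Real.exp ε * -α) * v ^ (ε + α - 1) := by rw [hrpow]
      · rw [hFdef]
        simp only [Set.indicator_of_notMem hmem]
        have : 0 < v ^ (ε + α - 1) := Real.rpow_pos_of_pos hv0 _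
        rw [norm_zero]
        exact le_of_lt (mul_pos (mul_pos (Real.exp_pos ε) (by linarith)) this)
    · apply Integrable.const_mul
      exact integrableOn_Ioi_rpow_of_lt (by simp only [hεdef]; linarith) one_pos
    · filter_upwards [ae_restrict_mem measurableSet_Ioi] with v hv
      have hv1 : (1:ℝ) < v := hv
      have hv0 : (0:ℝ) < v := lt_trans one_pos hv1
      have hveq : ∀ᶠ s in nhdsWithin 0 (Set.Ioi 0),
          F s v = (l (v * s) / l s) * (-α * v ^ (α - 1)) := by
        filter_upwards [Ioo_mem_nhdsGT_of_mem (⟨le_refl 0, by positivity⟩ : (0:ℝ) ∈ Ico (0:ℝ) (t₀/v))] with s hs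
        have hs0 : (0:ℝ) < s := hs.1
        rw [hFdef]
        apply Set.indicator_of_mem
        refine ⟨hv1, ?_⟩
        rw [le_div_iff₀ hs0]
        have := hs.2
        rw [lt_div_iff₀ hv0] at this
        nlinarith
      have hmul : Tendsto (fun s => (l (v * s) / l s) * (-α * v ^ (α - 1)))
          (nhdsWithin 0 (Set.Ioi 0)) (nhds (G v)) := by
        have := (hl v hv0).mul_const (-α * v ^ (α - 1))
        rwa [one_mul] at this
      exact hmul.congr' (Filter.EventuallyEq.symm hveq)
  -- identification of the ratio
  have hkey : ∀ᶠ s in nhdsWithin 0 (Set.Ioi 0),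
      (∫ u in Set.Ioc s s₀, l u * (-α * u ^ (α - 1))) / (s ^ α * l s)
        = (∫ v in Ioi (1:ℝ), F s v) + C / (s ^ α * l s) := by
    filter_upwards [Ioo_mem_nhdsGT_of_mem (⟨le_refl 0, ht₀pos⟩ :
      (0:ℝ) ∈ Ico (0:ℝ) t₀)] with s hs
    have hs0 : (0:ℝ) < s := hs.1
    have hst : s < t₀ := hs.2
    have hls : 0 < l s := hlpos s hs0
    have hsα : 0 < s ^ α := Real.rpow_pos_of_pos hs0 _
    have hD : s ^ α * l s ≠ 0 := (mul_pos hsα hls).ne'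
    -- split the integral
    have hsplit : ∫ u in Set.Ioc s s₀, f u = (∫ u in Set.Ioc s t₀, f u) + C := by
      rw [hCdef, ← setIntegral_union (Ioc_disjoint_Ioc_of_le le_rfl) measurableSet_Ioc
        ((hint s hs0).mono_set (Ioc_subset_Ioc_right ht₀le)) (hint t₀ ht₀pos),
        Ioc_union_Ioc_eq_Ioc hst.le ht₀le]
    -- substitution
    have hsub : ∫ u in Set.Ioc s t₀, f u
        = (s ^ α * l s) * ∫ v in Set.Ioc 1 (t₀/s), (l (v * s) / l s) * (-α * v ^ (α - 1)) := by
      have h1le : (1:ℝ) ≤ t₀ / s := (one_le_div hs0).mpr hst.le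
      have e1 : ∫ u in Set.Ioc s t₀, f u = ∫ u in s..t₀, f u :=
        (intervalIntegral.integral_of_le hst.le).symm
      have e2 : s • ∫ v in (1:ℝ)..(t₀/s), f (s * v) = ∫ u in (s * 1)..(s * (t₀/s)), f u :=
        intervalIntegral.smul_integral_comp_mul_left f s
      rw [mul_one, mul_div_cancel₀ _ hs0.ne'] at e2
      rw [e1, ← e2, ← intervalIntegral.integral_smul,
        intervalIntegral.integral_of_le h1le]
      rw [← MeasureTheory.integral_const_mul]
      apply setIntegral_congr_fun measurableSet_Ioc
      intro v hvm
      have hv0 : (0:ℝ) < v := lt_trans one_pos hvm.1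
      have hsv : (s * v) ^ (α - 1) = s ^ (α - 1) * v ^ (α - 1) :=
        Real.mul_rpow hs0.le hv0.le
      have hsα' : s ^ α = s ^ (α - 1) * s := by
        rw [show α = (α - 1) + 1 by ring, Real.rpow_add hs0, Real.rpow_one]
        ring_nf
      simp only [smul_eq_mul, hfdef]
      rw [hsv, mul_comm v s]
      rw [hsα']
      field_simp
    rw [hsplit, add_div, hsub, mul_div_cancel_left₀ _ hD]
    congr 1
    -- relate the set integral to the indicator integral over Ioi 1
    rw [hFdef]
    rw [MeasureTheory.integral_indicator measurableSet_Ioc,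
      Measure.restrict_restrict measurableSet_Ioc,
      Set.inter_eq_left.mpr Ioc_subset_Ioi_self]
  have hfinal := hIconv.add hC0
  rw [add_zero] at hfinal
  exact Filter.Tendsto.congr' (Filter.EventuallyEq.symm hkey) hfinal
end

section
/- Let l : (0,∞) → (0,∞) be slowly varying at 0. If α > 0, then ∫_{0}^{s} l(u) α u^{α−1} du < ∞ for all sufficiently small s > 0, and this integral is asymptotically equivalent to s^α l(s) as s → 0+, i.e. (∫_{0}^{s} l(u) α u^{α−1} du) / (s^α l(s)) → 1 as s → 0+. -/
open MeasureTheory Filter Real Set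

lemma uct_aux (k : ℝ → ℝ) (hkm : Measurable k)
    (hk : ∀ y : ℝ, Tendsto (fun x => k (x + y) - k x) atTop (nhds 0))
    {ε : ℝ} (hε : 0 < ε) :
    ∃ X : ℝ, ∀ x ≥ X, ∀ y ∈ Icc (0:ℝ) 1, |k (x + y) - k x| ≤ ε := by
  by_contra hcon
  push_neg at hcon
  -- hcon : ∀ X, ∃ x ≥ X, ∃ y ∈ Icc 0 1, ε < |k (x+y) - k x|
  choose xf hxf yf hyf hbig using hcon
  set xs : ℕ → ℝ := fun n => xf (n : ℝ) with hxs
  set ys : ℕ → ℝ := fun n => yf (n : ℝ) with hys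
  have hysmem : ∀ n, ys n ∈ Icc (0:ℝ) 1 := fun n => hyf _
  have hxs_tendsto : Tendsto xs atTop atTop :=
    tendsto_atTop_mono (fun n => hxf (n : ℝ)) tendsto_natCast_atTop_atTop
  have hxys_tendsto : Tendsto (fun n => xs n + ys n) atTop atTop :=
    tendsto_atTop_mono (fun n => le_add_of_nonneg_right (hysmem n).1) hxs_tendsto
  set F : ℕ → ℝ → ℝ := fun n y =>
    |k (xs n + y) - k (xs n)| + |k (xs n + ys n + y) - k (xs n + ys n)| with hF
  have hFmeas : ∀ n, StronglyMeasurable (F n) := by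
    intro n
    apply Measurable.stronglyMeasurable
    exact (((hkm.comp (measurable_const_add _)).sub measurable_const).abs).add
      (((hkm.comp (measurable_const_add _)).sub measurable_const).abs)
  have hFtendsto : ∀ y : ℝ, Tendsto (fun n => F n y) atTop (nhds 0) := by
    intro y
    have h1 : Tendsto (fun n => k (xs n + y) - k (xs n)) atTop (nhds 0) :=
      (hk y).comp hxs_tendsto
    have h2 : Tendsto (fun n => k (xs n + ys n + y) - k (xs n + ys n)) atTop (nhds 0) :=
      (hk y).comp hxys_tendsto
    have := (h1.abs.add h2.abs)
    simpa using this
  -- Egorov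
  obtain ⟨t, hts, htm, htle, hunif⟩ :=
    MeasureTheory.tendstoUniformlyOn_of_ae_tendsto (μ := volume) (s := Icc (0:ℝ) 2)
      hFmeas stronglyMeasurable_const measurableSet_Icc
      (by simp [Real.volume_Icc]) (Eventually.of_forall fun y _ => hFtendsto y)
      (ε := 1/4) (by norm_num)
  set E : Set ℝ := Icc (0:ℝ) 2 \ t with hE
  have hEm : MeasurableSet E := measurableSet_Icc.diff htm
  have hEsub : E ⊆ Icc (0:ℝ) 2 := diff_subset
  have hEvol : ENNReal.ofReal (7/4) ≤ volume E := by
    have h1 : volume (Icc (0:ℝ) 2) ≤ volume t + volume E := by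
      refine le_trans (measure_mono ?_) (measure_union_le t E)
      intro z hz
      by_cases h : z ∈ t
      · exact Or.inl h
      · exact Or.inr ⟨hz, h⟩
    have h2 : volume (Icc (0:ℝ) 2) = ENNReal.ofReal 2 := by simp [Real.volume_Icc]
    rw [h2] at h1
    have h3 : ENNReal.ofReal 2 - ENNReal.ofReal (1/4) ≤ volume E := by
      refine tsub_le_iff_left.mpr (le_trans h1 ?_)
      exact add_le_add htle le_rfl
    calc ENNReal.ofReal (7/4) = ENNReal.ofReal 2 - ENNReal.ofReal (1/4) := by
          rw [← ENNReal.ofReal_sub _ (by norm_num)]; norm_num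
      _ ≤ volume E := h3
  -- get uniform smallness
  rw [Metric.tendstoUniformlyOn_iff] at hunif
  obtain ⟨m, hm⟩ := (hunif (ε/2) (half_pos hε)).exists
  -- intersect E with its translate by ys m
  set B : Set ℝ := (fun z => -(ys m) + z) ⁻¹' E with hB
  have hBm : MeasurableSet B := hEm.preimage (measurable_const_add _)
  have hBvol : volume B = volume E := measure_preimage_add volume _ E
  have hBsub : B ⊆ Icc (0:ℝ) 3 := by
    intro z hz
    have h1 : -(ys m) + z ∈ Icc (0:ℝ) 2 := hEsub hz
    have h2 := hysmem m
    constructor <;> [linarith [h1.1, h2.1]; linarith [h1.2, h2.2]]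
  have hnonempty : (E ∩ B).Nonempty := by
    by_contra hempty
    rw [not_nonempty_iff_eq_empty] at hempty
    have hdisj : Disjoint E B := disjoint_iff_inter_eq_empty.mpr hempty
    have h1 : volume (E ∪ B) = volume E + volume B := measure_union hdisj hBm
    have h2 : volume (E ∪ B) ≤ volume (Icc (0:ℝ) 3) := by
      refine measure_mono (union_subset ?_ hBsub)
      exact hEsub.trans (Icc_subset_Icc_right (by norm_num))
    rw [h1, hBvol] at h2
    have h3 : ENNReal.ofReal (7/4) + ENNReal.ofReal (7/4) ≤ ENNReal.ofReal 3 := by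
      refine le_trans (add_le_add hEvol hEvol) (h2.trans_eq ?_)
      simp [Real.volume_Icc]
    rw [← ENNReal.ofReal_add (by norm_num) (by norm_num)] at h3
    rw [ENNReal.ofReal_le_ofReal_iff (by norm_num)] at h3
    norm_num at h3
  obtain ⟨z, hzE, hzB⟩ := hnonempty
  have habs : ∀ w ∈ E,
      |k (xs m + w) - k (xs m)| + |k (xs m + ys m + w) - k (xs m + ys m)| < ε/2 := by
    intro w hw
    have h1 := hm w hw
    rw [Real.dist_eq] at h1
    have hnn : (0:ℝ) ≤ |k (xs m + w) - k (xs m)| + |k (xs m + ys m + w) - k (xs m + ys m)| :=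
      add_nonneg (abs_nonneg _) (abs_nonneg _)
    have h2 : |(0:ℝ) - F m w| = F m w := by
      rw [abs_sub_comm, sub_zero, abs_of_nonneg]
      exact hnn
    rw [h2] at h1
    exact h1
  have hz1 : |k (xs m + z) - k (xs m)| < ε/2 := by
    have h := habs z hzE
    linarith [abs_nonneg (k (xs m + ys m + z) - k (xs m + ys m))]
  have hzB' : -(ys m) + z ∈ E := hzB
  have hz2 : |k (xs m + ys m + (-(ys m) + z)) - k (xs m + ys m)| < ε/2 := by
    have h := habs _ hzB'
    linarith [abs_nonneg (k (xs m + (-(ys m) + z)) - k (xs m))]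
  have hz2' : |k (xs m + z) - k (xs m + ys m)| < ε/2 := by
    have heq : xs m + ys m + (-(ys m) + z) = xs m + z := by ring
    rwa [heq] at hz2
  have hfinal : |k (xs m + ys m) - k (xs m)| < ε :=
    calc |k (xs m + ys m) - k (xs m)|
        ≤ |k (xs m + ys m) - k (xs m + z)| + |k (xs m + z) - k (xs m)| := abs_sub_le _ _ _
      _ < ε/2 + ε/2 := by
          rw [abs_sub_comm]
          exact add_lt_add hz2' hz1
      _ = ε := by ring
  exact absurd hfinal (not_lt.mpr (le_of_lt (hbig (m : ℝ))))

lemma potter_add (k : ℝ → ℝ) (hkm : Measurable k)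
    (hk : ∀ y : ℝ, Tendsto (fun x => k (x + y) - k x) atTop (nhds 0))
    {δ : ℝ} (hδ : 0 < δ) :
    ∃ X : ℝ, ∀ x ≥ X, ∀ w ≥ (0:ℝ), |k (x + w) - k x| ≤ δ * (w + 1) := by
  obtain ⟨X, hX⟩ := uct_aux k hkm hk hδ
  refine ⟨X, ?_⟩
  have key : ∀ n : ℕ, ∀ x ≥ X, ∀ w, 0 ≤ w → w ≤ (n:ℝ) → |k (x + w) - k x| ≤ δ * (w + 1) := by
    intro n
    induction n with
    | zero =>
      intro x hx w hw0 hwn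
      have : w = 0 := le_antisymm (by exact_mod_cast hwn) hw0
      subst this
      simp only [add_zero, sub_self, abs_zero]
      nlinarith
    | succ n ih =>
      intro x hx w hw0 hwn
      by_cases h1 : w ≤ 1
      · have := hX x hx w ⟨hw0, h1⟩
        nlinarith
      · push_neg at h1
        have hw1 : (0:ℝ) ≤ w - 1 := by linarith
        have hwn' : w - 1 ≤ (n:ℝ) := by push_cast at hwn ⊢; linarith
        have h2 := ih x hx (w - 1) hw1 hwn'
        have h3 := hX (x + (w - 1)) (by linarith) 1 ⟨zero_le_one, le_refl 1⟩
        have heq : x + (w - 1) + 1 = x + w := by ring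
        rw [heq] at h3
        calc |k (x + w) - k x|
            ≤ |k (x + w) - k (x + (w - 1))| + |k (x + (w - 1)) - k x| := abs_sub_le _ _ _
          _ ≤ δ + δ * (w - 1 + 1) := by
              refine add_le_add ?_ h2
              have : k (x + w) - k (x + (w - 1)) = -(k (x + (w - 1)) - k (x + w)) := by ring
              rw [this, abs_neg, abs_sub_comm]
              exact h3
          _ ≤ δ * (w + 1) := by nlinarith
  intro x hx w hw
  exact key ⌈w⌉₊ x hx w hw (Nat.le_ceil w)

/-- If `l` is slowly varying at `0` and `α > 0`, then `∫_0^s l(u) α u^{α-1} du` is finite for all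
sufficiently small `s > 0`, and it is asymptotically equivalent to `s^α l(s)` as `s → 0+`. -/
theorem stmt_4 (l : ℝ → ℝ) (hlmeas : Measurable l) (hlpos : ∀ t > 0, 0 < l t)
    (hl : SlowlyVaryingAtZero l) (α : ℝ) (hα : 0 < α) :
    (∀ᶠ s in nhdsWithin (0 : ℝ) (Set.Ioi 0),
      MeasureTheory.IntegrableOn (fun u => l u * (α * u ^ (α - 1))) (Set.Ioo 0 s)) ∧
    Filter.Tendsto
      (fun s => (∫ u in Set.Ioo 0 s, l u * (α * u ^ (α - 1))) / (s ^ α * l s))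
      (nhdsWithin 0 (Set.Ioi 0)) (nhds 1) := by
  have hδ : 0 < α / 2 := half_pos hα
  set δ : ℝ := α / 2 with hδdef
  -- the additive version of `l`
  set k : ℝ → ℝ := fun x => Real.log (l (Real.exp (-x))) with hkdef
  have hkm : Measurable k :=
    Real.measurable_log.comp (hlmeas.comp (Real.measurable_exp.comp measurable_neg))
  have htendsexp : Tendsto (fun x : ℝ => Real.exp (-x)) atTop (nhdsWithin 0 (Ioi 0)) := by
    refine tendsto_nhdsWithin_of_tendsto_nhds_of_eventually_within _
      ?_ (Eventually.of_forall fun x => Real.exp_pos _)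
    exact Real.tendsto_exp_atBot.comp tendsto_neg_atTop_atBot
  have hk : ∀ y : ℝ, Tendsto (fun x => k (x + y) - k x) atTop (nhds 0) := by
    intro y
    have hu : (0:ℝ) < Real.exp (-y) := Real.exp_pos _
    have h1 : Tendsto (fun x : ℝ => l (Real.exp (-y) * Real.exp (-x)) / l (Real.exp (-x)))
        atTop (nhds 1) := (hl _ hu).comp htendsexp
    have h2 : Tendsto
        (fun x : ℝ => Real.log (l (Real.exp (-y) * Real.exp (-x)) / l (Real.exp (-x))))
        atTop (nhds 0) := by
      have hcont := (Real.continuousAt_log one_ne_zero).tendsto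
      have := hcont.comp h1
      simpa [Function.comp_def] using this
    refine h2.congr fun x => ?_
    have he : Real.exp (-(x + y)) = Real.exp (-y) * Real.exp (-x) := by
      rw [← Real.exp_add]; ring_nf
    have hp1 : 0 < l (Real.exp (-y) * Real.exp (-x)) := hlpos _ (by positivity)
    have hp2 : 0 < l (Real.exp (-x)) := hlpos _ (Real.exp_pos _)
    rw [Real.log_div hp1.ne' hp2.ne']
    simp only [hkdef]
    rw [he]
  obtain ⟨X, hX⟩ := potter_add k hkm hk hδ
  set s₀ : ℝ := Real.exp (-X) with hs₀def
  have hs₀ : 0 < s₀ := Real.exp_pos _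
  -- multiplicative Potter bound
  have hPot : ∀ s, 0 < s → s ≤ s₀ → ∀ v, 0 < v → v ≤ 1 →
      l (v * s) ≤ l s * Real.exp δ * v ^ (-δ) := by
    intro s hs hss v hv hv1
    set x : ℝ := -Real.log s with hxdef
    have hxX : X ≤ x := by
      have h1 : Real.log s ≤ Real.log s₀ := Real.log_le_log hs hss
      rw [hs₀def, Real.log_exp] at h1
      simp only [hxdef]; linarith
    set w : ℝ := -Real.log v with hwdef
    have hw0 : (0:ℝ) ≤ w := by
      have := Real.log_nonpos hv.le hv1
      simp only [hwdef]; linarith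
    have hkb := hX x hxX w hw0
    have hsx : Real.exp (-x) = s := by
      simp only [hxdef, neg_neg]; exact Real.exp_log hs
    have hvsx : Real.exp (-(x + w)) = v * s := by
      have h7 : -(x + w) = -w + -x := by ring
      rw [h7, Real.exp_add, hsx]
      have h8 : Real.exp (-w) = v := by
        simp only [hwdef, neg_neg]; exact Real.exp_log hv
      rw [h8]
    have hkey : Real.log (l (v * s)) - Real.log (l s) ≤ δ * (w + 1) := by
      have h9 := (abs_le.mp hkb).2
      simp only [hkdef] at h9
      rwa [hvsx, hsx] at h9
    have hlvs : 0 < l (v * s) := hlpos _ (mul_pos hv hs)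
    have hls : 0 < l s := hlpos _ hs
    have h2 : l (v * s) ≤ l s * Real.exp (δ * (w + 1)) := by
      rw [← Real.exp_log hlvs, ← Real.exp_log hls, ← Real.exp_add]
      exact Real.exp_le_exp.mpr (by linarith)
    calc l (v * s) ≤ l s * Real.exp (δ * (w + 1)) := h2
      _ = l s * Real.exp δ * v ^ (-δ) := by
          rw [Real.rpow_def_of_pos hv, mul_assoc, ← Real.exp_add]
          congr 2
          simp only [hwdef]; ring
  -- integrability on (0, s) for s ≤ s₀
  have hIntOn : ∀ s, 0 < s → s ≤ s₀ →
      IntegrableOn (fun u => l u * (α * u ^ (α - 1))) (Ioo 0 s) := by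
    intro s hs hss
    have hls : 0 < l s := hlpos s hs
    have hrint : IntegrableOn (fun u : ℝ => u ^ (α - 1 - δ)) (Ioo 0 s) := by
      have h1 : IntervalIntegrable (fun u : ℝ => u ^ (α - 1 - δ)) volume 0 s :=
        intervalIntegral.intervalIntegrable_rpow' (by simp only [hδdef]; linarith)
      rwa [intervalIntegrable_iff_integrableOn_Ioo_of_le hs.le] at h1
    have hbint : IntegrableOn
        (fun u : ℝ => (l s * Real.exp δ * s ^ δ * α) * u ^ (α - 1 - δ)) (Ioo 0 s) :=
      hrint.const_mul _
    refine Integrable.mono' hbint ?_ ?_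
    · exact (hlmeas.mul ((measurable_id.pow measurable_const).const_mul α)).aestronglyMeasurable
    · filter_upwards [ae_restrict_mem measurableSet_Ioo] with u hu
      obtain ⟨hu0, hus⟩ := hu
      have hPo := hPot s hs hss (u / s) (div_pos hu0 hs) ((div_le_one hs).mpr hus.le)
      rw [div_mul_cancel₀ _ hs.ne'] at hPo
      have husr : (u / s) ^ (-δ) = s ^ δ * u ^ (-δ) := by
        rw [Real.div_rpow hu0.le hs.le, Real.rpow_neg hs.le, div_eq_mul_inv, inv_inv]
        ring
      rw [husr] at hPo
      have hup : (0:ℝ) < u ^ (α - 1) := Real.rpow_pos_of_pos hu0 _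
      have hlu : 0 < l u := hlpos u hu0
      rw [Real.norm_eq_abs, abs_of_nonneg (le_of_lt (mul_pos hlu (mul_pos hα hup)))]
      have hexp : u ^ (α - 1 - δ) = u ^ (-δ) * u ^ (α - 1) := by
        rw [← Real.rpow_add hu0]; ring_nf
      calc l u * (α * u ^ (α - 1))
          ≤ (l s * Real.exp δ * (s ^ δ * u ^ (-δ))) * (α * u ^ (α - 1)) :=
            mul_le_mul_of_nonneg_right hPo (le_of_lt (mul_pos hα hup))
        _ = (l s * Real.exp δ * s ^ δ * α) * u ^ (α - 1 - δ) := by rw [hexp]; ring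
  -- dominated convergence
  have hboundint : IntegrableOn (fun v : ℝ => (Real.exp δ * α) * v ^ (α - 1 - δ)) (Ioo 0 1) := by
    have h1 : IntervalIntegrable (fun v : ℝ => v ^ (α - 1 - δ)) volume 0 1 :=
      intervalIntegral.intervalIntegrable_rpow' (by simp only [hδdef]; linarith)
    rw [intervalIntegrable_iff_integrableOn_Ioo_of_le zero_le_one] at h1
    exact h1.const_mul _
  have hDCT : Tendsto (fun s => ∫ v in Ioo (0:ℝ) 1, (l (v * s) / l s) * (α * v ^ (α - 1)))
      (nhdsWithin 0 (Ioi 0)) (nhds (∫ v in Ioo (0:ℝ) 1, α * v ^ (α - 1))) := by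
    refine tendsto_integral_filter_of_dominated_convergence _ ?_ ?_ hboundint ?_
    · refine Eventually.of_forall fun s => ?_
      exact (((hlmeas.comp (measurable_id.mul_const s)).div_const (l s)).mul
        ((measurable_id.pow measurable_const).const_mul α)).aestronglyMeasurable
    · filter_upwards [Ioo_mem_nhdsGT hs₀] with s hs
      filter_upwards [ae_restrict_mem measurableSet_Ioo] with v hv
      obtain ⟨hv0, hv1⟩ := hv
      have hPo := hPot s hs.1 hs.2.le v hv0 hv1.le
      have hls : 0 < l s := hlpos s hs.1
      have hlvs : 0 < l (v * s) := hlpos _ (mul_pos hv0 hs.1)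
      have hvp : (0:ℝ) < v ^ (α - 1) := Real.rpow_pos_of_pos hv0 _
      rw [Real.norm_eq_abs,
        abs_of_nonneg (le_of_lt (mul_pos (div_pos hlvs hls) (mul_pos hα hvp)))]
      have h1 : l (v * s) / l s ≤ Real.exp δ * v ^ (-δ) := by
        rw [div_le_iff₀ hls]
        calc l (v * s) ≤ l s * Real.exp δ * v ^ (-δ) := hPo
          _ = Real.exp δ * v ^ (-δ) * l s := by ring
      have hexp : v ^ (α - 1 - δ) = v ^ (-δ) * v ^ (α - 1) := by
        rw [← Real.rpow_add hv0]; ring_nf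
      calc (l (v * s) / l s) * (α * v ^ (α - 1))
          ≤ (Real.exp δ * v ^ (-δ)) * (α * v ^ (α - 1)) :=
            mul_le_mul_of_nonneg_right h1 (le_of_lt (mul_pos hα hvp))
        _ = (Real.exp δ * α) * v ^ (α - 1 - δ) := by rw [hexp]; ring
    · filter_upwards [ae_restrict_mem measurableSet_Ioo] with v hv
      have := (hl v hv.1).mul_const (α * v ^ (α - 1))
      simpa using this
  have hval : (∫ v in Ioo (0:ℝ) 1, α * v ^ (α - 1)) = 1 := by
    rw [← integral_Ioc_eq_integral_Ioo, ← intervalIntegral.integral_of_le zero_le_one,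
      intervalIntegral.integral_const_mul, integral_rpow (Or.inl (by linarith))]
    have h7 : α - 1 + 1 = α := by ring
    rw [h7, Real.one_rpow, Real.zero_rpow hα.ne']
    field_simp
    norm_num
  -- eventual equality of the ratio with the rescaled integral
  have heq : ∀ᶠ s in nhdsWithin (0:ℝ) (Ioi 0),
      (∫ u in Ioo (0:ℝ) s, l u * (α * u ^ (α - 1))) / (s ^ α * l s)
        = ∫ v in Ioo (0:ℝ) 1, (l (v * s) / l s) * (α * v ^ (α - 1)) := by
    filter_upwards [Ioo_mem_nhdsGT hs₀] with s hs
    obtain ⟨hs0, hss0⟩ := hs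
    have hls : 0 < l s := hlpos s hs0
    have key : (∫ u in Ioo (0:ℝ) s, l u * (α * u ^ (α - 1)))
        = s ^ α * l s * ∫ v in Ioo (0:ℝ) 1, (l (v * s) / l s) * (α * v ^ (α - 1)) := by
      have h1 : (∫ u in Ioo (0:ℝ) s, l u * (α * u ^ (α - 1)))
          = ∫ u in (0:ℝ)..s, l u * (α * u ^ (α - 1)) := by
        rw [intervalIntegral.integral_of_le hs0.le, integral_Ioc_eq_integral_Ioo]
      have h2 : (s • ∫ v in (0:ℝ)..1, l (s * v) * (α * (s * v) ^ (α - 1)))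
          = ∫ u in (0:ℝ)..s, l u * (α * u ^ (α - 1)) := by
        have := intervalIntegral.smul_integral_comp_mul_left (a := (0:ℝ)) (b := 1)
          (fun u => l u * (α * u ^ (α - 1))) s
        simpa using this
      have h3 : (∫ v in (0:ℝ)..1, l (s * v) * (α * (s * v) ^ (α - 1)))
          = ∫ v in Ioo (0:ℝ) 1, l (s * v) * (α * (s * v) ^ (α - 1)) := by
        rw [intervalIntegral.integral_of_le zero_le_one, integral_Ioc_eq_integral_Ioo]
      have h4 : (∫ v in Ioo (0:ℝ) 1, l (s * v) * (α * (s * v) ^ (α - 1)))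
          = ∫ v in Ioo (0:ℝ) 1,
              (s ^ (α - 1) * l s) * ((l (v * s) / l s) * (α * v ^ (α - 1))) := by
        refine setIntegral_congr_fun measurableSet_Ioo fun v hv => ?_
        obtain ⟨hv0, hv1⟩ := hv
        rw [Real.mul_rpow hs0.le hv0.le, mul_comm s v]
        field_simp
      have h5 : (∫ v in Ioo (0:ℝ) 1,
            (s ^ (α - 1) * l s) * ((l (v * s) / l s) * (α * v ^ (α - 1))))
          = (s ^ (α - 1) * l s) * ∫ v in Ioo (0:ℝ) 1, (l (v * s) / l s) * (α * v ^ (α - 1)) :=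
        integral_const_mul _ _
      rw [h1, ← h2, h3, h4, h5, smul_eq_mul]
      have hss : s * s ^ (α - 1) = s ^ α := by
        nth_rewrite 1 [← Real.rpow_one s]
        rw [← Real.rpow_add hs0]
        norm_num
      rw [← hss]; ring
    rw [key]
    exact mul_div_cancel_left₀ _ (mul_pos (Real.rpow_pos_of_pos hs0 α) hls).ne'
  constructor
  · filter_upwards [Ioo_mem_nhdsGT hs₀] with s hs
    exact hIntOn s hs.1 hs.2.le
  · rw [hval] at hDCT
    exact Tendsto.congr' (EventuallyEq.symm heq) hDCT
end

section
/- Let (E, ℰ) be a measurable space, ρ a finite nonzero measure on (E, ℰ), and α : E → ℝ a bounded measurable function whose essential infimum α₀ := sup{ r ∈ ℝ : ρ({x : α(x) < r}) = 0 } is a real number. Then the function t ↦ ∫_E t^{α(x)} ρ(dx) on (0,∞) is regularly varying at 0 with index α₀, i.e. for every u > 0, (∫_E (ut)^{α(x)} ρ(dx)) / (∫_E t^{α(x)} ρ(dx)) → u^{α₀} as t → 0+. -/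
open MeasureTheory Filter Real Set

private lemma abs_rpow_sub_one_mono {u b d : ℝ} (hu : 0 < u) (hb : 0 ≤ b) (hbd : b ≤ d) :
    |u ^ b - 1| ≤ |u ^ d - 1| := by
  rcases le_total u 1 with h1 | h1
  · have h2 : u ^ d ≤ u ^ b := Real.rpow_le_rpow_of_exponent_ge hu h1 hbd
    have h3 : u ^ b ≤ u ^ (0:ℝ) := Real.rpow_le_rpow_of_exponent_ge hu h1 hb
    rw [Real.rpow_zero] at h3
    rw [abs_of_nonpos (by linarith), abs_of_nonpos (by linarith)]
    linarith
  · have h2 : u ^ b ≤ u ^ d := Real.rpow_le_rpow_of_exponent_le h1 hbd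
    have h3 : u ^ (0:ℝ) ≤ u ^ b := Real.rpow_le_rpow_of_exponent_le h1 hb
    rw [Real.rpow_zero] at h3
    rw [abs_of_nonneg (by linarith), abs_of_nonneg (by linarith)]
    linarith

private lemma integrable_rpow' {E : Type*} [MeasurableSpace E] (ρ : Measure E)
    [IsFiniteMeasure ρ] {β : E → ℝ} (hm : Measurable β) {M : ℝ} (hM : ∀ x, |β x| ≤ M)
    {t : ℝ} (ht : 0 < t) : Integrable (fun x => t ^ β x) ρ := by
  apply (integrable_const (max (t ^ M) (t ^ (-M)))).mono'
  · have heq : (fun x => t ^ β x) = fun x => Real.exp (Real.log t * β x) := by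
      funext x; rw [Real.rpow_def_of_pos ht]
    rw [heq]
    exact ((hm.const_mul _).exp).aestronglyMeasurable
  · filter_upwards with x
    rw [Real.norm_eq_abs, abs_of_nonneg (Real.rpow_nonneg ht.le _)]
    rcases le_total t 1 with h1 | h1
    · exact le_max_of_le_right
        (Real.rpow_le_rpow_of_exponent_ge ht h1 ((abs_le.1 (hM x)).1))
    · exact le_max_of_le_left
        (Real.rpow_le_rpow_of_exponent_le h1 ((abs_le.1 (hM x)).2))

private lemma lower_bound' {E : Type*} [MeasurableSpace E] (ρ : Measure E)
    [IsFiniteMeasure ρ] {β : E → ℝ} (hm : Measurable β) {M : ℝ} (hM : ∀ x, |β x| ≤ M)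
    {t δ : ℝ} (ht : 0 < t) (ht1 : t ≤ 1) :
    (ρ {x | β x < δ}).toReal * t ^ δ ≤ ∫ x, t ^ β x ∂ρ := by
  have hA : MeasurableSet {x | β x < δ} := hm measurableSet_Iio
  have h1 : (ρ {x | β x < δ}).toReal * t ^ δ = ∫ _x in {x | β x < δ}, t ^ δ ∂ρ := by
    rw [setIntegral_const, smul_eq_mul]
    rfl
  rw [h1]
  have h2 : ∫ _x in {x | β x < δ}, t ^ δ ∂ρ ≤ ∫ x in {x | β x < δ}, t ^ β x ∂ρ := by
    apply setIntegral_mono_on (integrable_const _).integrableOn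
      ((integrable_rpow' ρ hm hM ht).integrableOn) hA
    intro x hx
    exact Real.rpow_le_rpow_of_exponent_ge ht ht1 (le_of_lt hx)
  refine h2.trans (setIntegral_le_integral (integrable_rpow' ρ hm hM ht) ?_)
  filter_upwards with x using Real.rpow_nonneg ht.le _

private lemma core' {E : Type*} [MeasurableSpace E] (ρ : Measure E) [IsFiniteMeasure ρ]
    {β : E → ℝ} (hm : Measurable β) {M : ℝ} (hM : ∀ x, |β x| ≤ M)
    (h0 : ∀ᵐ x ∂ρ, 0 ≤ β x) (hpos : ∀ ε, 0 < ε → ρ {x | β x < ε} ≠ 0)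
    {u : ℝ} (hu : 0 < u) :
    Tendsto (fun t => (∫ x, (u * t) ^ β x ∂ρ) / (∫ x, t ^ β x ∂ρ))
      (nhdsWithin 0 (Set.Ioi 0)) (nhds 1) := by
  rw [Metric.tendsto_nhds]
  intro ε hε
  -- choose δ
  have hcont : Tendsto (fun d : ℝ => |u ^ d - 1|) (nhdsWithin 0 (Set.Ioi 0)) (nhds 0) := by
    have h1 : ContinuousAt (fun d : ℝ => |u ^ d - 1|) 0 := by
      exact ((Real.continuousAt_const_rpow hu.ne').sub continuousAt_const).abs
    have h2 : |u ^ (0:ℝ) - 1| = 0 := by simp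
    have := h1.tendsto
    rw [h2] at this
    exact this.mono_left nhdsWithin_le_nhds
  obtain ⟨δ, hδ, hδε⟩ : ∃ δ : ℝ, δ ∈ Set.Ioi (0:ℝ) ∧ |u ^ δ - 1| < ε / 2 := by
    exact (eventually_mem_nhdsWithin.and (hcont.eventually_lt_const (half_pos hε))).exists
  rw [Set.mem_Ioi] at hδ
  set a' : ℝ := (ρ {x | β x < δ / 2}).toReal with ha'def
  have ha' : 0 < a' :=
    ENNReal.toReal_pos (hpos _ (half_pos hδ)) (measure_ne_top ρ _)
  set B : ℝ := (max 1 u) ^ M + 1 with hBdef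
  have hB : 0 < B := by
    have : (0:ℝ) < (max 1 u) ^ M := Real.rpow_pos_of_pos (lt_of_lt_of_le one_pos (le_max_left _ _)) _
    linarith
  set K : ℝ := B * (ρ Set.univ).toReal with hKdef
  have hK : 0 ≤ K := mul_nonneg hB.le ENNReal.toReal_nonneg
  set C : ℝ := K / a' with hCdef
  have hC : 0 ≤ C := div_nonneg hK ha'.le
  have hIoo : ∀ᶠ t in nhdsWithin 0 (Set.Ioi 0), t ∈ Set.Ioo (0:ℝ) 1 :=
    Filter.eventually_of_mem (Ioo_mem_nhdsGT_of_mem ⟨le_rfl, one_pos⟩) fun x hx => hx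
  have hsmall : ∀ᶠ t in nhdsWithin 0 (Set.Ioi 0), C * t ^ (δ / 2) < ε / 2 := by
    have h2 : Tendsto (fun t : ℝ => t ^ (δ / 2)) (nhdsWithin 0 (Set.Ioi 0)) (nhds 0) := by
      have hc : ContinuousAt (fun t : ℝ => t ^ (δ / 2)) 0 :=
        Real.continuousAt_rpow_const 0 (δ / 2) (Or.inr (by positivity))
      have := hc.tendsto
      rw [Real.zero_rpow (by positivity)] at this
      exact this.mono_left nhdsWithin_le_nhds
    have h3 := h2.const_mul C
    rw [mul_zero] at h3
    exact h3.eventually_lt_const (half_pos hε)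
  filter_upwards [hIoo, hsmall] with t htIoo htsmall
  obtain ⟨ht, ht1⟩ := htIoo
  have hut : 0 < u * t := mul_pos hu ht
  have hi1 : Integrable (fun x => (u * t) ^ β x) ρ := integrable_rpow' ρ hm hM hut
  have hi2 : Integrable (fun x => t ^ β x) ρ := integrable_rpow' ρ hm hM ht
  have hgpos : 0 < ∫ x, t ^ β x ∂ρ := by
    have := lower_bound' ρ hm hM (δ := δ / 2) ht ht1.le
    have hpos' : 0 < a' * t ^ (δ / 2) := mul_pos ha' (Real.rpow_pos_of_pos ht _)
    linarith [this]
  -- main difference bound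
  have hdiff : |(∫ x, (u * t) ^ β x ∂ρ) - ∫ x, t ^ β x ∂ρ|
      ≤ |u ^ δ - 1| * (∫ x, t ^ β x ∂ρ) + K * t ^ δ := by
    rw [← integral_sub hi1 hi2]
    have habs : |∫ x, ((u * t) ^ β x - t ^ β x) ∂ρ|
        ≤ ∫ x, |(u * t) ^ β x - t ^ β x| ∂ρ := by
      simpa [Real.norm_eq_abs] using
        norm_integral_le_integral_norm (μ := ρ) (fun x => (u * t) ^ β x - t ^ β x)
    refine habs.trans ?_
    have hrhs : Integrable (fun x => |u ^ δ - 1| * t ^ β x + B * t ^ δ) ρ :=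
      (hi2.const_mul _).add (integrable_const _)
    have hmono : ∫ x, |(u * t) ^ β x - t ^ β x| ∂ρ
        ≤ ∫ x, (|u ^ δ - 1| * t ^ β x + B * t ^ δ) ∂ρ := by
      refine integral_mono_ae ((hi1.sub hi2).abs) hrhs ?_
      filter_upwards [h0] with x hx
      have hmul : (u * t) ^ β x = u ^ β x * t ^ β x := Real.mul_rpow hu.le ht.le
      have htb : (0:ℝ) ≤ t ^ β x := Real.rpow_nonneg ht.le _
      have heq : |(u * t) ^ β x - t ^ β x| = |u ^ β x - 1| * t ^ β x := by
        rw [hmul, show u ^ β x * t ^ β x - t ^ β x = (u ^ β x - 1) * t ^ β x by ring,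
          abs_mul, abs_of_nonneg htb]
      rw [heq]
      rcases le_or_gt (β x) δ with hle | hgt
      · have h1 := abs_rpow_sub_one_mono hu hx hle
        have h2 : |u ^ β x - 1| * t ^ β x ≤ |u ^ δ - 1| * t ^ β x :=
          mul_le_mul_of_nonneg_right h1 htb
        have h3 : (0:ℝ) ≤ B * t ^ δ := mul_nonneg hB.le (Real.rpow_nonneg ht.le _)
        linarith
      · have h1 : |u ^ β x - 1| ≤ B := by
          have hub : u ^ β x ≤ (max 1 u) ^ M := by
            calc u ^ β x ≤ (max 1 u) ^ β x :=
                  Real.rpow_le_rpow hu.le (le_max_right _ _) hx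
              _ ≤ (max 1 u) ^ M :=
                  Real.rpow_le_rpow_of_exponent_le (le_max_left _ _) ((abs_le.1 (hM x)).2)
          have := abs_sub (u ^ β x) (1:ℝ)
          have hup : (0:ℝ) ≤ u ^ β x := Real.rpow_nonneg hu.le _
          rw [abs_of_nonneg hup, abs_one] at this
          linarith
        have h2 : t ^ β x ≤ t ^ δ := Real.rpow_le_rpow_of_exponent_ge ht ht1.le hgt.le
        have h3 : (0:ℝ) ≤ |u ^ δ - 1| * t ^ β x := mul_nonneg (abs_nonneg _) htb
        nlinarith [abs_nonneg (u ^ β x - 1), Real.rpow_nonneg ht.le δ]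
    refine hmono.trans ?_
    rw [integral_add (hi2.const_mul _) (integrable_const _), integral_const_mul, integral_const,
      smul_eq_mul, measureReal_def]
    have hKe : K * t ^ δ = (ρ Set.univ).toReal * (B * t ^ δ) := by rw [hKdef]; ring
    linarith [hKe.le, hKe.ge]
  have hlow : a' * t ^ (δ / 2) ≤ ∫ x, t ^ β x ∂ρ := by
    have := lower_bound' ρ hm hM (δ := δ / 2) ht ht1.le
    linarith [this]
  -- conclude
  rw [Real.dist_eq]
  have hne : (∫ x, t ^ β x ∂ρ) ≠ 0 := hgpos.ne'
  have step1 : |(∫ x, (u * t) ^ β x ∂ρ) / (∫ x, t ^ β x ∂ρ) - 1|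
      = |(∫ x, (u * t) ^ β x ∂ρ) - ∫ x, t ^ β x ∂ρ| / (∫ x, t ^ β x ∂ρ) := by
    rw [div_sub_one hne, abs_div, abs_of_pos hgpos]
  rw [step1]
  have step2 : |(∫ x, (u * t) ^ β x ∂ρ) - ∫ x, t ^ β x ∂ρ| / (∫ x, t ^ β x ∂ρ)
      ≤ (|u ^ δ - 1| * (∫ x, t ^ β x ∂ρ) + K * t ^ δ) / (∫ x, t ^ β x ∂ρ) := by
    gcongr
  have step3 : (|u ^ δ - 1| * (∫ x, t ^ β x ∂ρ) + K * t ^ δ) / (∫ x, t ^ β x ∂ρ)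
      = |u ^ δ - 1| + K * t ^ δ / (∫ x, t ^ β x ∂ρ) := by
    rw [add_div, mul_div_assoc, div_self hne, mul_one]
  have hts : t ^ δ = t ^ (δ / 2) * t ^ (δ / 2) := by
    rw [← Real.rpow_add ht]; norm_num
  have step4 : K * t ^ δ / (∫ x, t ^ β x ∂ρ) ≤ C * t ^ (δ / 2) := by
    have h1 : K * t ^ δ / (∫ x, t ^ β x ∂ρ) ≤ K * t ^ δ / (a' * t ^ (δ / 2)) :=
      div_le_div_of_nonneg_left (by positivity) (by positivity) hlow
    have h2 : K * t ^ δ / (a' * t ^ (δ / 2)) = C * t ^ (δ / 2) := by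
      rw [hCdef, hts]
      have htp : t ^ (δ / 2) ≠ 0 := (Real.rpow_pos_of_pos ht _).ne'
      field_simp
    linarith [h1, h2.le, h2.ge]
  linarith [step2, step3.le, step4]

/-- Lemma 2.6 (first part): for a finite nonzero measure `ρ` and a bounded measurable
`α : E → ℝ` with essential infimum `α₀ = sup{r : ρ(α < r) = 0}`, the function
`t ↦ ∫_E t^{α(x)} ρ(dx)` is regularly varying at `0` with index `α₀`. -/
theorem stmt_8 {E : Type*} [MeasurableSpace E] (ρ : Measure E) [IsFiniteMeasure ρ]
    (hρ : ρ ≠ 0) (α : E → ℝ) (hαmeas : Measurable α) (hαbdd : ∃ M : ℝ, ∀ x, |α x| ≤ M)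
    (α₀ : ℝ) (hα₀ : IsLUB {r : ℝ | ρ {x | α x < r} = 0} α₀) :
    ∀ u : ℝ, 0 < u →
      Filter.Tendsto (fun t => (∫ x, (u * t) ^ α x ∂ρ) / (∫ x, t ^ α x ∂ρ))
        (nhdsWithin 0 (Set.Ioi 0)) (nhds (u ^ α₀)) := by
  intro u hu
  obtain ⟨M, hMb⟩ := hαbdd
  set β : E → ℝ := fun x => α x - α₀ with hβ
  have hβm : Measurable β := hαmeas.sub measurable_const
  have hβM : ∀ x, |β x| ≤ M + |α₀| := by
    intro x
    calc |α x - α₀| ≤ |α x| + |α₀| := abs_sub _ _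
      _ ≤ M + |α₀| := add_le_add_left (hMb x) _
  have hnull : ∀ r < α₀, ρ {x | α x < r} = 0 := by
    intro r hr
    have hnub : r ∉ upperBounds {r : ℝ | ρ {x | α x < r} = 0} := by
      intro hub
      exact absurd (hα₀.2 hub) (not_le.2 hr)
    rw [upperBounds, Set.mem_setOf_eq] at hnub
    push_neg at hnub
    obtain ⟨s, hs, hrs⟩ := hnub
    exact measure_mono_null (fun x hx => lt_trans hx hrs) hs
  have hae : ∀ᵐ x ∂ρ, α₀ ≤ α x := by
    have hU : ρ {x | α x < α₀} = 0 := by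
      have hsub : {x | α x < α₀} ⊆ ⋃ n : ℕ, {x | α x < α₀ - 1 / (n + 1)} := by
        intro x hx
        obtain ⟨n, hn⟩ := exists_nat_one_div_lt (ε := α₀ - α x) (sub_pos.2 hx)
        exact Set.mem_iUnion.2 ⟨n, by simp only [Set.mem_setOf_eq]; linarith⟩
      refine measure_mono_null hsub (measure_iUnion_null fun n => hnull _ ?_)
      have : (0:ℝ) < 1 / (n + 1) := by positivity
      linarith
    rw [ae_iff]
    simpa [not_le] using hU
  have h0 : ∀ᵐ x ∂ρ, 0 ≤ β x := by
    filter_upwards [hae] with x hx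
    simpa [hβ, sub_nonneg] using hx
  have hpos : ∀ ε, 0 < ε → ρ {x | β x < ε} ≠ 0 := by
    intro ε hε h
    have hset : {x | β x < ε} = {x | α x < α₀ + ε} := by
      ext x
      simp only [hβ, Set.mem_setOf_eq, sub_lt_iff_lt_add']
    rw [hset] at h
    have := hα₀.1 h
    linarith
  have key := core' ρ hβm hβM h0 hpos hu
  have final := key.const_mul (u ^ α₀)
  rw [mul_one] at final
  refine final.congr' ?_
  filter_upwards [self_mem_nhdsWithin] with t ht
  rw [Set.mem_Ioi] at ht
  have e1 : ∀ s : ℝ, 0 < s → (∫ x, s ^ α x ∂ρ) = s ^ α₀ * ∫ x, s ^ β x ∂ρ := by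
    intro s hs
    calc (∫ x, s ^ α x ∂ρ) = ∫ x, s ^ α₀ * s ^ β x ∂ρ := by
          refine integral_congr_ae (Filter.Eventually.of_forall fun x => ?_)
          show s ^ α x = s ^ α₀ * s ^ β x
          rw [← Real.rpow_add hs]
          congr 1
          simp [hβ]
      _ = s ^ α₀ * ∫ x, s ^ β x ∂ρ := integral_const_mul _ _
  have ht0 : t ^ α₀ ≠ 0 := (Real.rpow_pos_of_pos ht α₀).ne'
  rw [e1 t ht, e1 (u * t) (mul_pos hu ht), Real.mul_rpow hu.le ht.le]
  set A := ∫ x, (u * t) ^ β x ∂ρ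
  set Bb := ∫ x, t ^ β x ∂ρ
  calc u ^ α₀ * (A / Bb) = (u ^ α₀ * A) / Bb := (mul_div_assoc _ _ _).symm
    _ = (t ^ α₀ * (u ^ α₀ * A)) / (t ^ α₀ * Bb) := (mul_div_mul_left _ _ ht0).symm
    _ = (u ^ α₀ * t ^ α₀ * A) / (t ^ α₀ * Bb) := by rw [show t ^ α₀ * (u ^ α₀ * A) = u ^ α₀ * t ^ α₀ * A from by ring]
end

section
/- Let (E, ℰ) be a measurable space, ρ a finite nonzero measure on (E, ℰ), and α : E → ℝ a bounded measurable function whose essential infimum α₀ := sup{ r ∈ ℝ : ρ({x : α(x) < r}) = 0 } is a real number. If ρ({x : α(x) = α₀}) > 0, then ∫_E t^{α(x)} ρ(dx) is asymptotically equivalent to ρ({x : α(x) = α₀}) · t^{α₀} as t → 0+, i.e. (∫_E t^{α(x)} ρ(dx)) / (ρ({x : α(x) = α₀}) t^{α₀}) → 1 as t → 0+. -/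
open MeasureTheory Filter Real Set Topology

/-- Lemma 2.6 (second part): for a finite nonzero measure `ρ` and a bounded measurable
`α : E → ℝ` with essential infimum `α₀ = sup{r : ρ(α < r) = 0}`, if `ρ(α = α₀) > 0` then
`∫_E t^{α(x)} ρ(dx) ∼ ρ(α = α₀) t^{α₀}` as `t → 0+`. -/
theorem stmt_9 {E : Type*} [MeasurableSpace E] (ρ : Measure E) [IsFiniteMeasure ρ]
    (hρ : ρ ≠ 0) (α : E → ℝ) (hαmeas : Measurable α) (hαbdd : ∃ M : ℝ, ∀ x, |α x| ≤ M)
    (α₀ : ℝ) (hα₀ : IsLUB {r : ℝ | ρ {x | α x < r} = 0} α₀)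
    (hpos : 0 < ρ {x | α x = α₀}) :
    Filter.Tendsto
      (fun t => (∫ x, t ^ α x ∂ρ) / ((ρ {x | α x = α₀}).toReal * t ^ α₀))
      (nhdsWithin 0 (Set.Ioi 0)) (nhds 1) := by
  set c := (ρ {x | α x = α₀}).toReal with hc
  have hmeasset : MeasurableSet {x | α x = α₀} := hαmeas (measurableSet_singleton α₀)
  have hcpos : 0 < c := ENNReal.toReal_pos hpos.ne' (measure_ne_top ρ _)
  -- a.e. α₀ ≤ α x
  have key : ∀ q : ℝ, q < α₀ → ρ {x | α x < q} = 0 := by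
    intro q hq
    obtain ⟨r, hrS, hqr, -⟩ := hα₀.exists_between hq
    exact measure_mono_null (fun x hx => lt_trans hx hqr) hrS
  have hnull : ρ {x | α x < α₀} = 0 := by
    have hsub : {x | α x < α₀} ⊆ ⋃ n : ℕ, {x | α x < α₀ - 1 / (n + 1)} := by
      intro x hx
      obtain ⟨n, hn⟩ := exists_nat_one_div_lt (K := ℝ) (sub_pos.mpr hx)
      refine mem_iUnion.mpr ⟨n, ?_⟩
      simp only [mem_setOf_eq]
      linarith
    refine measure_mono_null hsub (measure_iUnion_null fun n => key _ ?_)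
    have : (0:ℝ) < 1 / (n + 1) := by positivity
    linarith
  have hae : ∀ᵐ x ∂ρ, α₀ ≤ α x := by
    rw [ae_iff]
    simpa using hnull
  -- dominated convergence
  have hind : c = ∫ x, ({x | α x = α₀}).indicator (fun _ => (1:ℝ)) x ∂ρ := by
    rw [integral_indicator_const _ hmeasset]
    simp [hc]
    rfl
  have hlim : Tendsto (fun t : ℝ => ∫ x, t ^ (α x - α₀) ∂ρ) (𝓝[>] (0:ℝ)) (𝓝 c) := by
    rw [hind]
    refine tendsto_integral_filter_of_dominated_convergence (fun _ => (1:ℝ))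
      ?_ ?_ (integrable_const 1) ?_
    · filter_upwards [self_mem_nhdsWithin] with t (ht : t ∈ Ioi (0:ℝ))
      have : (fun x => t ^ (α x - α₀)) = fun x => Real.exp (Real.log t * (α x - α₀)) := by
        funext x
        rw [Real.rpow_def_of_pos ht]
      rw [this]
      exact (Real.measurable_exp.comp ((hαmeas.sub measurable_const).const_mul
        _)).aestronglyMeasurable
    · filter_upwards [Ioo_mem_nhdsGT_of_mem (by exact ⟨le_refl 0, zero_lt_one⟩)] with t ht
      filter_upwards [hae] with x hx
      rw [Real.norm_eq_abs, abs_of_nonneg (Real.rpow_nonneg ht.1.le _)]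
      exact Real.rpow_le_one ht.1.le ht.2.le (sub_nonneg.mpr hx)
    · filter_upwards [hae] with x hx
      rcases eq_or_lt_of_le hx with heq | hlt
      · have hx0 : α x - α₀ = 0 := by linarith
        have hmem : x ∈ {x | α x = α₀} := heq.symm
        simp [hx0, indicator_of_mem hmem]
      · have hmem : x ∉ {x | α x = α₀} := by
          simp only [mem_setOf_eq]; linarith
        rw [indicator_of_notMem hmem]
        have hp : (0:ℝ) < α x - α₀ := by linarith
        have hcont : Tendsto (fun t : ℝ => t ^ (α x - α₀)) (𝓝 0) (𝓝 ((0:ℝ) ^ (α x - α₀))) :=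
          (Real.continuousAt_rpow_const 0 _ (Or.inr hp.le)).tendsto
        rw [Real.zero_rpow hp.ne'] at hcont
        exact hcont.mono_left nhdsWithin_le_nhds
  have hdiv : Tendsto (fun t : ℝ => (∫ x, t ^ (α x - α₀) ∂ρ) / c) (𝓝[>] (0:ℝ)) (𝓝 1) := by
    have := hlim.div_const c
    rwa [div_self hcpos.ne'] at this
  refine Tendsto.congr' ?_ hdiv
  filter_upwards [self_mem_nhdsWithin] with t (ht : t ∈ Ioi (0:ℝ))
  have ht0 : (0:ℝ) < t := ht
  have hsplit : (∫ x, t ^ α x ∂ρ) = t ^ α₀ * ∫ x, t ^ (α x - α₀) ∂ρ := by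
    rw [← integral_const_mul]
    congr 1
    funext x
    rw [← Real.rpow_add ht0]
    congr 1
    ring
  rw [hsplit]
  have htne : t ^ α₀ ≠ 0 := (Real.rpow_pos_of_pos ht0 α₀).ne'
  field_simp
end

section
/- Let α ∈ (1,2) and C > 0. Let F : [0,∞) → [0,∞) be a function such that F(θ) ≤ Cθ for all θ ≥ 0 and F(θ) ≤ C ∫_0^θ ( ∫_0^1 F(r u^{1/(α−1)})^{α−1} u^{−1} du )^{1/(α−1)} dr for all θ ≥ 0. Then F(θ) = 0 for all θ ≥ 0. -/
open MeasureTheory Filter Real Set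
open Topology

private lemma my_integral_pow_Ioo (a : ℝ) (ha : 0 ≤ a) (n : ℕ) :
    ∫ x in Set.Ioo (0:ℝ) a, x ^ n = a ^ (n+1) / (n+1) := by
  rw [← MeasureTheory.integral_Ioc_eq_integral_Ioo, ← intervalIntegral.integral_of_le ha,
    integral_pow]
  simp

private lemma my_integrableOn_pow (a : ℝ) (n : ℕ) :
    IntegrableOn (fun x : ℝ => x ^ n) (Set.Ioo 0 a) := by
  apply (IntegrableOn.mono_set · Set.Ioo_subset_Icc_self)
  exact (continuous_pow n).continuousOn.integrableOn_compact isCompact_Icc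

/-- Lemma A.1: a Gronwall-type result. If `α ∈ (1,2)`, `C > 0` and `F : [0,∞) → [0,∞)`
satisfies `F(θ) ≤ Cθ` and
`F(θ) ≤ C ∫_0^θ (∫_0^1 F(r u^{1/(α-1)})^{α-1} u⁻¹ du)^{1/(α-1)} dr` for all `θ ≥ 0`,
then `F ≡ 0` on `[0,∞)`. -/
theorem stmt_10 (α C : ℝ) (hα1 : 1 < α) (hα2 : α < 2) (hC : 0 < C)
    (F : ℝ → ℝ) (hFnonneg : ∀ θ ≥ (0 : ℝ), 0 ≤ F θ)
    (hFlin : ∀ θ ≥ (0 : ℝ), F θ ≤ C * θ)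
    (hFineq : ∀ θ ≥ (0 : ℝ), F θ ≤ C * ∫ r in Set.Ioo 0 θ,
      (∫ u in Set.Ioo (0:ℝ) 1, F (r * u ^ (1 / (α - 1))) ^ (α - 1) * u⁻¹) ^ (1 / (α - 1))) :
    ∀ θ ≥ (0 : ℝ), F θ = 0 := by
  set β := α - 1 with hβdef
  have hβ0 : 0 < β := by simp [hβdef]; linarith
  have hβ1 : β ≤ 1 := by simp [hβdef]; linarith
  have hβinv : 1 ≤ 1 / β := by
    rw [le_div_iff₀ hβ0]; linarith
  have key : ∀ n : ℕ, ∀ θ ≥ (0:ℝ), F θ ≤ C ^ (n+1) * θ ^ (n+1) / n.factorial := by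
    intro n
    induction n with
    | zero => intro θ hθ; simpa using hFlin θ hθ
    | succ n ih =>
      intro θ hθ
      set K : ℝ := C ^ (n+1) / n.factorial with hK
      have hKpos : 0 < K := by positivity
      -- nonnegativity of the inner integrand for r > 0
      have inner_nonneg : ∀ r : ℝ, 0 < r → ∀ u ∈ Set.Ioo (0:ℝ) 1,
          0 ≤ F (r * u ^ (1/β)) ^ β * u⁻¹ := by
        intro r hr u hu
        have hu0 : (0:ℝ) ≤ u := hu.1.le
        have harg : 0 ≤ r * u ^ (1/β) := mul_nonneg hr.le (Real.rpow_nonneg hu0 _)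
        exact mul_nonneg (Real.rpow_nonneg (hFnonneg _ harg) _) (inv_nonneg.2 hu0)
      -- bound on the inner integral
      have inner_bound : ∀ r ∈ Set.Ioo (0:ℝ) θ,
          (∫ u in Set.Ioo (0:ℝ) 1, F (r * u ^ (1/β)) ^ β * u⁻¹)
            ≤ (K * r ^ (n+1)) ^ β / (n+1) := by
        intro r hr
        have hr0 : 0 < r := hr.1
        have hKr : (0:ℝ) ≤ K * r ^ (n+1) := by positivity
        have hmono : (∫ u in Set.Ioo (0:ℝ) 1, F (r * u ^ (1/β)) ^ β * u⁻¹)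
            ≤ ∫ u in Set.Ioo (0:ℝ) 1, (K * r ^ (n+1)) ^ β * u ^ n := by
          apply integral_mono_of_nonneg
          · filter_upwards [ae_restrict_mem measurableSet_Ioo] with u hu
            exact inner_nonneg r hr0 u hu
          · exact (my_integrableOn_pow 1 n).const_mul _
          · filter_upwards [ae_restrict_mem measurableSet_Ioo] with u hu
            have hu0 : 0 < u := hu.1
            have hupow : (0:ℝ) ≤ u ^ (1/β) := Real.rpow_nonneg hu0.le _
            have harg : 0 ≤ r * u ^ (1/β) := mul_nonneg hr0.le hupow
            have h1 : F (r * u ^ (1/β)) ≤ K * (r * u ^ (1/β)) ^ (n+1) := by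
              calc F (r * u ^ (1/β)) ≤ C ^ (n+1) * (r * u ^ (1/β)) ^ (n+1) / n.factorial :=
                    ih _ harg
                _ = K * (r * u ^ (1/β)) ^ (n+1) := by rw [hK]; ring
            have h2 : F (r * u ^ (1/β)) ^ β ≤ (K * (r * u ^ (1/β)) ^ (n+1)) ^ β :=
              Real.rpow_le_rpow (hFnonneg _ harg) h1 hβ0.le
            have h3 : ((u : ℝ) ^ (1/β)) ^ (n+1) = u ^ ((n+1 : ℝ)/β) := by
              rw [← Real.rpow_natCast (u ^ (1/β)) (n+1), ← Real.rpow_mul hu0.le]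
              push_cast
              ring_nf
            have h4 : ((u : ℝ) ^ ((n+1:ℝ)/β)) ^ β = u ^ (n+1 : ℕ) := by
              rw [← Real.rpow_natCast u (n+1), ← Real.rpow_mul hu0.le]
              congr 1
              field_simp
              norm_cast
            have hKr' : (K * (r * u ^ (1/β)) ^ (n+1)) ^ β
                = (K * r ^ (n+1)) ^ β * u ^ (n+1 : ℕ) := by
              rw [mul_pow, h3, ← mul_assoc,
                Real.mul_rpow (by positivity) (Real.rpow_nonneg hu0.le _), h4]
            calc F (r * u ^ (1/β)) ^ β * u⁻¹
                ≤ (K * (r * u ^ (1/β)) ^ (n+1)) ^ β * u⁻¹ :=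
                  mul_le_mul_of_nonneg_right h2 (inv_nonneg.2 hu0.le)
              _ = (K * r ^ (n+1)) ^ β * u ^ n := by
                  rw [hKr', mul_assoc]
                  congr 1
                  rw [pow_succ, mul_assoc, mul_inv_cancel₀ hu0.ne', mul_one]
        calc (∫ u in Set.Ioo (0:ℝ) 1, F (r * u ^ (1/β)) ^ β * u⁻¹)
            ≤ ∫ u in Set.Ioo (0:ℝ) 1, (K * r ^ (n+1)) ^ β * u ^ n := hmono
          _ = (K * r ^ (n+1)) ^ β * ((1:ℝ) ^ (n+1) / (n+1)) := by
              rw [MeasureTheory.integral_const_mul, my_integral_pow_Ioo 1 zero_le_one n]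
          _ = (K * r ^ (n+1)) ^ β / (n+1) := by rw [one_pow, mul_one_div]
      -- bound on the outer integrand
      have outer_bound : ∀ r ∈ Set.Ioo (0:ℝ) θ,
          (∫ u in Set.Ioo (0:ℝ) 1, F (r * u ^ (1/β)) ^ β * u⁻¹) ^ (1/β)
            ≤ K / (n+1) * r ^ (n+1) := by
        intro r hr
        have hr0 : 0 < r := hr.1
        have hKr : (0:ℝ) ≤ K * r ^ (n+1) := by positivity
        have hinn : 0 ≤ ∫ u in Set.Ioo (0:ℝ) 1, F (r * u ^ (1/β)) ^ β * u⁻¹ :=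
          setIntegral_nonneg measurableSet_Ioo (inner_nonneg r hr0)
        have h5 : ((K * r ^ (n+1)) ^ β / (n+1)) ^ (1/β)
            = (K * r ^ (n+1)) / ((n+1:ℝ)) ^ ((1:ℝ)/β) := by
          rw [Real.div_rpow (Real.rpow_nonneg hKr _) (by positivity),
            ← Real.rpow_mul hKr, mul_one_div_cancel hβ0.ne', Real.rpow_one]
        calc (∫ u in Set.Ioo (0:ℝ) 1, F (r * u ^ (1/β)) ^ β * u⁻¹) ^ (1/β)
            ≤ ((K * r ^ (n+1)) ^ β / (n+1)) ^ (1/β) :=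
              Real.rpow_le_rpow hinn (inner_bound r hr) (by positivity)
          _ = (K * r ^ (n+1)) / ((n+1:ℝ)) ^ ((1:ℝ)/β) := h5
          _ ≤ (K * r ^ (n+1)) / (n+1) := by
              gcongr
              calc ((n:ℝ)+1) = ((n:ℝ)+1) ^ (1:ℝ) := by rw [Real.rpow_one]
                _ ≤ ((n:ℝ)+1) ^ ((1:ℝ)/β) :=
                  Real.rpow_le_rpow_of_exponent_le (by push_cast; linarith [Nat.cast_nonneg (α := ℝ) n]) hβinv
          _ = K / (n+1) * r ^ (n+1) := by ring
      -- combine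
      have houter : (∫ r in Set.Ioo (0:ℝ) θ,
            (∫ u in Set.Ioo (0:ℝ) 1, F (r * u ^ (1/β)) ^ β * u⁻¹) ^ (1/β))
          ≤ K / (n+1) * (θ ^ (n+2) / (n+2)) := by
        calc (∫ r in Set.Ioo (0:ℝ) θ,
              (∫ u in Set.Ioo (0:ℝ) 1, F (r * u ^ (1/β)) ^ β * u⁻¹) ^ (1/β))
            ≤ ∫ r in Set.Ioo (0:ℝ) θ, K / (n+1) * r ^ (n+1) := by
              apply integral_mono_of_nonneg
              · filter_upwards [ae_restrict_mem measurableSet_Ioo] with r hr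
                exact Real.rpow_nonneg
                  (setIntegral_nonneg measurableSet_Ioo (inner_nonneg r hr.1)) _
              · exact (my_integrableOn_pow θ (n+1)).const_mul _
              · filter_upwards [ae_restrict_mem measurableSet_Ioo] with r hr
                exact outer_bound r hr
          _ = K / (n+1) * (θ ^ (n+2) / (n+2)) := by
              rw [MeasureTheory.integral_const_mul, my_integral_pow_Ioo θ hθ (n+1)]
              push_cast
              ring_nf
      have hfinal : C * (K / (n+1) * (θ ^ (n+2) / (n+2)))
          ≤ C ^ (n+2) * θ ^ (n+2) / (n+1).factorial := by
        have heq : C * (K / (n+1) * (θ ^ (n+2) / (n+2)))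
            = (C ^ (n+2) * θ ^ (n+2) / (n+1).factorial) / (n+2) := by
          rw [hK, Nat.factorial_succ]
          push_cast
          have h1 : ((n:ℝ)+1) ≠ 0 := by positivity
          have h2 : ((n:ℝ)+2) ≠ 0 := by positivity
          have h3 : ((n.factorial :ℝ)) ≠ 0 := by positivity
          field_simp
          ring
        rw [heq]
        exact div_le_self (by positivity) (by push_cast; linarith [Nat.cast_nonneg (α := ℝ) n])
      calc F θ ≤ C * ∫ r in Set.Ioo 0 θ,
            (∫ u in Set.Ioo (0:ℝ) 1, F (r * u ^ (1/β)) ^ β * u⁻¹) ^ (1/β) := hFineq θ hθ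
        _ ≤ C * (K / (n+1) * (θ ^ (n+2) / (n+2))) := by
            exact mul_le_mul_of_nonneg_left houter hC.le
        _ ≤ C ^ (n+2) * θ ^ (n+2) / (n+1).factorial := hfinal
        _ = C ^ (n+1+1) * θ ^ (n+1+1) / (n+1).factorial := by norm_num
  intro θ hθ
  have hlim : Tendsto (fun n : ℕ => C ^ (n+1) * θ ^ (n+1) / n.factorial) atTop (𝓝 0) := by
    have t : Tendsto (fun n : ℕ => (C*θ) * ((C*θ) ^ n / n.factorial)) atTop (𝓝 ((C*θ) * 0)) :=
      (FloorSemiring.tendsto_pow_div_factorial_atTop (C*θ)).const_mul _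
    rw [mul_zero] at t
    refine t.congr fun n => ?_
    rw [mul_pow]
    ring
  have hle : F θ ≤ 0 := ge_of_tendsto' hlim fun n => key n θ hθ
  exact le_antisymm hle (hFnonneg θ hθ)
end

section
/- Let α ∈ (1,2) and C > 0. Let F : [0,∞) → [0,∞) be a function such that F(θ) ≤ Cθ for all θ ≥ 0 and F(θ) ≤ C ∫_0^θ ( ∫_0^1 F(r u^{1/(α−1)})^{α−1} u^{−1} du )^{1/(α−1)} dr for all θ ≥ 0. Then for every natural number k ≥ 1 and every θ ≥ 0, F(θ) ≤ C^k θ^k / k!. -/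
open MeasureTheory Filter Real Set

/-- The inductive bound in the proof of Lemma A.1: under the Gronwall-type hypotheses,
`F(θ) ≤ C^k θ^k / k!` for every `k ≥ 1` and `θ ≥ 0`. -/
theorem stmt_11 (α C : ℝ) (hα1 : 1 < α) (hα2 : α < 2) (hC : 0 < C)
    (F : ℝ → ℝ) (hFnonneg : ∀ θ ≥ (0 : ℝ), 0 ≤ F θ)
    (hFlin : ∀ θ ≥ (0 : ℝ), F θ ≤ C * θ)
    (hFineq : ∀ θ ≥ (0 : ℝ), F θ ≤ C * ∫ r in Set.Ioo 0 θ,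
      (∫ u in Set.Ioo (0:ℝ) 1, F (r * u ^ (1 / (α - 1))) ^ (α - 1) * u⁻¹) ^ (1 / (α - 1))) :
    ∀ k : ℕ, 1 ≤ k → ∀ θ ≥ (0 : ℝ), F θ ≤ C ^ k * θ ^ k / (Nat.factorial k : ℝ) := by
  have hβ0 : 0 < α - 1 := by linarith
  have hβne : α - 1 ≠ 0 := ne_of_gt hβ0
  have hp0 : 0 < 1 / (α - 1) := by positivity
  have hpβ : 1 / (α - 1) * (α - 1) = 1 := by field_simp
  intro k hk
  induction k with
  | zero => omega
  | succ n ih =>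
    rcases Nat.eq_zero_or_pos n with hn | hn
    · subst hn
      intro θ hθ
      simpa using hFlin θ hθ
    · have IH := ih hn
      intro θ hθ
      set p : ℝ := 1 / (α - 1) with hp
      set D : ℝ := C ^ n / (n.factorial : ℝ) with hD
      have hD0 : 0 ≤ D := by positivity
      have hn1 : (1:ℝ) ≤ (n:ℝ) := by exact_mod_cast hn
      have hn0 : (0:ℝ) < (n:ℝ) := by linarith
      -- pointwise bound on the inner integral raised to power p
      have key : ∀ r ∈ Ioo (0:ℝ) θ,
          (∫ u in Ioo (0:ℝ) 1, F (r * u ^ p) ^ (α - 1) * u⁻¹) ^ p ≤ D * r ^ n := by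
        intro r hr
        have hr0 : 0 < r := hr.1
        have hbase0 : 0 ≤ D * r ^ n := by positivity
        set A : ℝ := (D * r ^ n) ^ (α - 1) with hA
        have hA0 : 0 ≤ A := Real.rpow_nonneg hbase0 _
        have hInn : (0:ℝ) ≤ ∫ u in Ioo (0:ℝ) 1, F (r * u ^ p) ^ (α - 1) * u⁻¹ := by
          apply integral_nonneg_of_ae
          filter_upwards [ae_restrict_mem measurableSet_Ioo] with u hu
          have hx : (0:ℝ) ≤ r * u ^ p := by
            have := Real.rpow_nonneg hu.1.le p
            positivity
          exact mul_nonneg (Real.rpow_nonneg (hFnonneg _ hx) _) (inv_nonneg.2 hu.1.le)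
        have hbound : (∫ u in Ioo (0:ℝ) 1, F (r * u ^ p) ^ (α - 1) * u⁻¹)
            ≤ A / n := by
          have hle : (∫ u in Ioo (0:ℝ) 1, F (r * u ^ p) ^ (α - 1) * u⁻¹)
              ≤ ∫ u in Ioo (0:ℝ) 1, A * u ^ (n - 1) := by
            apply integral_mono_of_nonneg
            · filter_upwards [ae_restrict_mem measurableSet_Ioo] with u hu
              have hx : (0:ℝ) ≤ r * u ^ p := by
                have := Real.rpow_nonneg hu.1.le p
                positivity
              exact mul_nonneg (Real.rpow_nonneg (hFnonneg _ hx) _) (inv_nonneg.2 hu.1.le)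
            · exact ((continuous_const.mul (continuous_pow _)).integrableOn_Icc).mono_set
                Ioo_subset_Icc_self
            · filter_upwards [ae_restrict_mem measurableSet_Ioo] with u hu
              have hu0 : 0 < u := hu.1
              have hup : (0:ℝ) ≤ u ^ p := Real.rpow_nonneg hu0.le p
              have hx : (0:ℝ) ≤ r * u ^ p := by positivity
              have h1 : F (r * u ^ p) ^ (α - 1) ≤ (D * (r * u ^ p) ^ n) ^ (α - 1) := by
                refine Real.rpow_le_rpow (hFnonneg _ hx) ?_ hβ0.le
                have := IH (r * u ^ p) hx
                calc F (r * u ^ p) ≤ C ^ n * (r * u ^ p) ^ n / (n.factorial : ℝ) := this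
                  _ = D * (r * u ^ p) ^ n := by rw [hD]; ring
              have h2 : (D * (r * u ^ p) ^ n) ^ (α - 1) * u⁻¹ = A * u ^ (n - 1) := by
                have e1 : (u ^ p) ^ n = u ^ (p * n) := by
                  rw [← Real.rpow_natCast (u ^ p) n, ← Real.rpow_mul hu0.le]
                have e2 : D * (r * u ^ p) ^ n = (D * r ^ n) * u ^ (p * n) := by
                  rw [mul_pow, e1]; ring
                have e3 : ((D * r ^ n) * u ^ (p * n)) ^ (α - 1)
                    = A * u ^ (p * n * (α - 1)) := by
                  rw [Real.mul_rpow hbase0 (Real.rpow_nonneg hu0.le _),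
                    ← Real.rpow_mul hu0.le]
                have e4 : p * n * (α - 1) = (n : ℝ) := by
                  rw [mul_comm (p * (n:ℝ)) (α - 1)]
                  rw [hp]
                  field_simp
                have e5 : u ^ ((n:ℝ)) * u⁻¹ = u ^ (n - 1) := by
                  rw [Real.rpow_natCast]
                  have : u ^ n = u ^ (n - 1) * u := by
                    rw [← pow_succ]; congr 1; omega
                  rw [this, mul_assoc, mul_inv_cancel₀ (ne_of_gt hu0), mul_one]
                rw [e2, e3, e4, mul_assoc, e5]
              calc F (r * u ^ p) ^ (α - 1) * u⁻¹
                  ≤ (D * (r * u ^ p) ^ n) ^ (α - 1) * u⁻¹ :=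
                    mul_le_mul_of_nonneg_right h1 (inv_nonneg.2 hu0.le)
                _ = A * u ^ (n - 1) := h2
          have hval : (∫ u in Ioo (0:ℝ) 1, A * u ^ (n - 1)) = A / n := by
            rw [← integral_Ioc_eq_integral_Ioo,
              ← intervalIntegral.integral_of_le (zero_le_one),
              intervalIntegral.integral_const_mul, integral_pow]
            have : n - 1 + 1 = n := by omega
            rw [this]
            rw [one_pow, zero_pow (by omega : n ≠ 0)]
            field_simp
            rw [Nat.cast_sub (by omega : 1 ≤ n), Nat.cast_one]; ring
          linarith [hle, hval.le, hval.ge]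
        have hmono : (∫ u in Ioo (0:ℝ) 1, F (r * u ^ p) ^ (α - 1) * u⁻¹) ^ p
            ≤ (A / n) ^ p := Real.rpow_le_rpow hInn hbound hp0.le
        have hAp : (A / n) ^ p ≤ D * r ^ n := by
          rw [div_rpow hA0 hn0.le]
          have hAsimp : A ^ p = D * r ^ n := by
            rw [hA, ← Real.rpow_mul hbase0,
              show (α - 1) * p = 1 by rw [hp]; field_simp, Real.rpow_one]
          rw [hAsimp]
          have hden : (1:ℝ) ≤ (n:ℝ) ^ p := Real.one_le_rpow hn1 hp0.le
          exact div_le_self hbase0 hden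
        linarith
      -- nonnegativity of the outer integrand
      have houtnn : ∀ r ∈ Ioo (0:ℝ) θ,
          (0:ℝ) ≤ (∫ u in Ioo (0:ℝ) 1, F (r * u ^ p) ^ (α - 1) * u⁻¹) ^ p := by
        intro r hr
        apply Real.rpow_nonneg
        apply integral_nonneg_of_ae
        filter_upwards [ae_restrict_mem measurableSet_Ioo] with u hu
        have hx : (0:ℝ) ≤ r * u ^ p := by
          have h1 := Real.rpow_nonneg hu.1.le p
          have := hr.1
          positivity
        exact mul_nonneg (Real.rpow_nonneg (hFnonneg _ hx) _) (inv_nonneg.2 hu.1.le)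
      have houter : (∫ r in Ioo (0:ℝ) θ,
            (∫ u in Ioo (0:ℝ) 1, F (r * u ^ p) ^ (α - 1) * u⁻¹) ^ p)
          ≤ D * θ ^ (n + 1) / (n + 1) := by
        have hle : (∫ r in Ioo (0:ℝ) θ,
              (∫ u in Ioo (0:ℝ) 1, F (r * u ^ p) ^ (α - 1) * u⁻¹) ^ p)
            ≤ ∫ r in Ioo (0:ℝ) θ, D * r ^ n := by
          apply integral_mono_of_nonneg
          · filter_upwards [ae_restrict_mem measurableSet_Ioo] with r hr
            exact houtnn r hr
          · exact ((continuous_const.mul (continuous_pow _)).integrableOn_Icc).mono_set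
              Ioo_subset_Icc_self
          · filter_upwards [ae_restrict_mem measurableSet_Ioo] with r hr
            exact key r hr
        have hval : (∫ r in Ioo (0:ℝ) θ, D * r ^ n) = D * θ ^ (n + 1) / (n + 1) := by
          rw [← integral_Ioc_eq_integral_Ioo,
            ← intervalIntegral.integral_of_le hθ,
            intervalIntegral.integral_const_mul, integral_pow]
          rw [zero_pow (by omega : n + 1 ≠ 0)]
          ring
        linarith [hle, hval.le]
      calc F θ ≤ C * ∫ r in Ioo (0:ℝ) θ,
            (∫ u in Ioo (0:ℝ) 1, F (r * u ^ p) ^ (α - 1) * u⁻¹) ^ p := hFineq θ hθ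
        _ ≤ C * (D * θ ^ (n + 1) / (n + 1)) :=
            mul_le_mul_of_nonneg_left houter hC.le
        _ = C ^ (n + 1) * θ ^ (n + 1) / ((n + 1).factorial : ℝ) := by
            rw [hD, Nat.factorial_succ]
            have hfac : (0:ℝ) < (n.factorial : ℝ) := by positivity
            field_simp
            push_cast
            ring
end

section
/- Let α ∈ (1,2). Define G : [0,∞) → [0,∞) by G(0) = 0 and G(θ) = (1 + θ^{−(α−1)})^{−1/(α−1)} for θ > 0. Then G satisfies the nonlinear delay equation G(θ) = ∫_0^θ exp{ − (α/(α−1)) ∫_0^1 G(r u^{1/(α−1)})^{α−1} u^{−1} du } dr for all θ ≥ 0. -/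
open MeasureTheory Filter Real Set

lemma aux_inner (b : ℝ) (hb : 0 < b) (r : ℝ) (hr : 0 < r) :
    ∫ u in Set.Ioo (0:ℝ) 1, ((1 + (r * u ^ (1/b)) ^ (-b)) ^ (-(1/b))) ^ b * u⁻¹
      = Real.log (1 + r ^ b) := by
  have hc : 0 < r ^ (-b) := rpow_pos_of_pos hr _
  set c := r ^ (-b) with hcdef
  have hstep : ∀ u ∈ Set.Ioo (0:ℝ) 1,
      ((1 + (r * u ^ (1/b)) ^ (-b)) ^ (-(1/b))) ^ b * u⁻¹ = (u + c)⁻¹ := by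
    intro u hu
    obtain ⟨hu0, hu1⟩ := hu
    have hub : (0:ℝ) < u ^ (1/b) := rpow_pos_of_pos hu0 _
    have h1 : (r * u ^ (1/b)) ^ (-b) = c * u⁻¹ := by
      rw [mul_rpow hr.le hub.le, ← rpow_mul hu0.le]
      have : 1/b * (-b) = -1 := by field_simp
      rw [this, rpow_neg_one]
    rw [h1]
    have hX : (0:ℝ) < 1 + c * u⁻¹ := by positivity
    have h2 : ((1 + c * u⁻¹) ^ (-(1/b))) ^ b = (1 + c * u⁻¹)⁻¹ := by
      rw [← rpow_mul hX.le]
      have : -(1/b) * b = -1 := by field_simp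
      rw [this, rpow_neg_one]
    rw [h2, ← mul_inv]
    congr 1
    field_simp
  rw [setIntegral_congr_fun measurableSet_Ioo hstep,
    ← MeasureTheory.integral_Ioc_eq_integral_Ioo,
    ← intervalIntegral.integral_of_le zero_le_one]
  have h3 := intervalIntegral.integral_comp_add_right (a := (0:ℝ)) (b := 1) (fun x => x⁻¹) c
  simp only [zero_add] at h3
  rw [show (fun u : ℝ => (u + c)⁻¹) = (fun u : ℝ => (fun x => x⁻¹) (u + c)) from rfl, h3,
    integral_inv (by
      rw [uIcc_of_le (by linarith)]
      rintro ⟨h1, -⟩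
      exact absurd h1 (not_le.mpr hc))]
  congr 1
  rw [hcdef, rpow_neg hr.le]
  have hrb : (0:ℝ) < r ^ b := rpow_pos_of_pos hr b
  field_simp
  ring

lemma aux_deriv (b : ℝ) (hb : 0 < b) (r : ℝ) (hr : 0 < r) :
    HasDerivAt (fun x : ℝ => x * (1 + x ^ b) ^ (-(1/b)))
      ((1 + r ^ b) ^ (-((b+1)/b))) r := by
  have hrb : (0:ℝ) < r ^ b := rpow_pos_of_pos hr b
  have hX : (0:ℝ) < 1 + r ^ b := by positivity
  have h1 : HasDerivAt (fun x : ℝ => 1 + x ^ b) (b * r ^ (b-1)) r :=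
    (Real.hasDerivAt_rpow_const (Or.inl hr.ne')).const_add 1
  have h3 : HasDerivAt (fun x : ℝ => (1 + x ^ b) ^ (-(1/b)))
      (b * r ^ (b-1) * (-(1/b)) * (1 + r ^ b) ^ (-(1/b) - 1)) r :=
    h1.rpow_const (Or.inl hX.ne')
  have h4 := (hasDerivAt_id r).mul h3
  refine HasDerivAt.congr_deriv h4 ?_
  have hrr : r * r ^ (b-1) = r ^ b := by
    rw [← rpow_one_add' hr.le (by linarith)]; ring_nf
  have hXX : (1 + r ^ b) ^ (-(1/b)) = (1 + r ^ b) ^ (-(1/b) - 1) * (1 + r ^ b) := by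
    rw [show (1 + r ^ b) ^ (-(1/b) - 1) * (1 + r ^ b)
        = (1 + r ^ b) ^ (-(1/b) - 1) * (1 + r ^ b) ^ (1:ℝ) by rw [rpow_one],
      ← rpow_add hX]
    ring_nf
  have he : -((b+1)/b) = -(1/b) - 1 := by field_simp; ring
  rw [he, id_eq, one_mul, hXX]
  rw [show r * (b * r ^ (b-1) * (-(1/b)) * (1 + r ^ b) ^ (-(1/b) - 1))
      = -((1/b) * b) * (r * r ^ (b-1)) * (1 + r ^ b) ^ (-(1/b) - 1) by ring,
    hrr, one_div, inv_mul_cancel₀ hb.ne']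
  ring

lemma aux_cont (b : ℝ) (hb : 0 < b) (p : ℝ) (θ : ℝ) :
    ContinuousOn (fun x : ℝ => (1 + x ^ b) ^ p) (Icc 0 θ) := by
  intro x hx
  have hx0 : 0 ≤ x := hx.1
  have hX : (0:ℝ) < 1 + x ^ b := by positivity
  have h1 : ContinuousAt (fun x : ℝ => 1 + x ^ b) x :=
    continuousAt_const.add (Real.continuousAt_rpow_const x b (Or.inr hb.le))
  exact (h1.rpow_const (Or.inl hX.ne')).continuousWithinAt

lemma aux_outer (b : ℝ) (hb : 0 < b) (θ : ℝ) (hθ : 0 < θ) :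
    ∫ r in Set.Ioo (0:ℝ) θ, (1 + r ^ b) ^ (-((b+1)/b))
      = θ * (1 + θ ^ b) ^ (-(1/b)) := by
  rw [← MeasureTheory.integral_Ioc_eq_integral_Ioo,
    ← intervalIntegral.integral_of_le hθ.le]
  have key := intervalIntegral.integral_eq_sub_of_hasDerivAt_of_le hθ.le
    (f := fun x : ℝ => x * (1 + x ^ b) ^ (-(1/b)))
    (f' := fun r : ℝ => (1 + r ^ b) ^ (-((b+1)/b)))
    (continuousOn_id.mul (aux_cont b hb _ θ))
    (fun x hx => aux_deriv b hb x hx.1)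
    (((aux_cont b hb _ θ).intervalIntegrable_of_Icc hθ.le))
  rw [key]
  norm_num

lemma aux_alg (b : ℝ) (hb : 0 < b) (θ : ℝ) (hθ : 0 < θ) :
    (1 + θ ^ (-b)) ^ (-(1/b)) = θ * (1 + θ ^ b) ^ (-(1/b)) := by
  have hθb : (0:ℝ) < θ ^ b := rpow_pos_of_pos hθ b
  have hθnb : (0:ℝ) < θ ^ (-b) := rpow_pos_of_pos hθ _
  have h1 : 1 + θ ^ (-b) = θ ^ (-b) * (1 + θ ^ b) := by
    rw [mul_add, mul_one, ← rpow_add hθ]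
    norm_num [add_comm]
  rw [h1, mul_rpow hθnb.le (by positivity), ← rpow_mul hθ.le]
  have : -b * -(1/b) = 1 := by field_simp
  rw [this, rpow_one]

/-- Lemma A.2 (verification part): for `α ∈ (1,2)`, the function `G` with `G(0) = 0` and
`G(θ) = (1 + θ^{-(α-1)})^{-1/(α-1)}` for `θ > 0` satisfies the nonlinear delay equation
`G(θ) = ∫_0^θ exp{-(α/(α-1)) ∫_0^1 G(r u^{1/(α-1)})^{α-1} u⁻¹ du} dr` for all `θ ≥ 0`. -/
theorem stmt_12 (α : ℝ) (hα1 : 1 < α) (hα2 : α < 2)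
    (G : ℝ → ℝ) (hG0 : G 0 = 0)
    (hGpos : ∀ θ > (0 : ℝ), G θ = (1 + θ ^ (-(α - 1))) ^ (-(1 / (α - 1)))) :
    ∀ θ ≥ (0 : ℝ), G θ = ∫ r in Set.Ioo 0 θ,
      Real.exp (-(α / (α - 1)) *
        ∫ u in Set.Ioo (0:ℝ) 1, G (r * u ^ (1 / (α - 1))) ^ (α - 1) * u⁻¹) := by
  set b := α - 1 with hbdef
  have hb : 0 < b := by simp [hbdef]; linarith
  intro θ hθ
  rcases eq_or_lt_of_le hθ with h0 | h0
  · simp only [← h0, Set.Ioo_self, Measure.restrict_empty, integral_zero_measure]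
    exact hG0
  · have hcong : ∀ r ∈ Set.Ioo (0:ℝ) θ,
        Real.exp (-(α / b) * ∫ u in Set.Ioo (0:ℝ) 1, G (r * u ^ (1/b)) ^ b * u⁻¹)
          = (1 + r ^ b) ^ (-((b+1)/b)) := by
      intro r hr
      have hr0 : 0 < r := hr.1
      have hX : (0:ℝ) < 1 + r ^ b := by positivity
      have hinner : (∫ u in Set.Ioo (0:ℝ) 1, G (r * u ^ (1/b)) ^ b * u⁻¹)
          = Real.log (1 + r ^ b) := by
        rw [← aux_inner b hb r hr0]
        apply setIntegral_congr_fun measurableSet_Ioo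
        intro u hu
        have hru : 0 < r * u ^ (1/b) := by
          have := rpow_pos_of_pos hu.1 (1/b); positivity
        simp only [hGpos _ hru]
      rw [hinner, Real.rpow_def_of_pos hX]
      congr 1
      have : b + 1 = α := by rw [hbdef]; ring
      rw [← this]; ring
    rw [setIntegral_congr_fun measurableSet_Ioo hcong, aux_outer b hb θ h0,
      hGpos θ h0, aux_alg b hb θ h0]
end

section
/- Let α ∈ (1,2). If G : [0,∞) → [0,∞) is a measurable function satisfying G(θ) = ∫_0^θ exp{ − (α/(α−1)) ∫_0^1 G(r u^{1/(α−1)})^{α−1} u^{−1} du } dr for all θ ≥ 0, then G(0) = 0 and G(θ) = (1 + θ^{−(α−1)})^{−1/(α−1)} for all θ > 0. In particular, the nonlinear delay equation has a unique solution. -/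
open MeasureTheory Filter Real Set intervalIntegral


lemma L_exp_lip {x y : ℝ} (hx : 0 ≤ x) (hy : 0 ≤ y) :
    |Real.exp (-x) - Real.exp (-y)| ≤ |x - y| := by
  wlog h : y ≤ x generalizing x y
  · rw [abs_sub_comm, abs_sub_comm x y]; exact this hy hx (le_of_not_ge h)
  rw [abs_of_nonpos (by simp [Real.exp_le_exp]; linarith), abs_of_nonneg (by linarith)]
  have h1 : Real.exp (-x) - Real.exp (-y) = Real.exp (-y) * (Real.exp (-(x-y)) - 1) := by
    rw [mul_sub, ← Real.exp_add]; ring_nf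
  have h2 : Real.exp (-(x-y)) - 1 ≥ -(x - y) := by
    have := Real.add_one_le_exp (-(x-y)); linarith
  have h3 : Real.exp (-y) ≤ 1 := Real.exp_le_one_iff.2 (by linarith)
  have h4 : Real.exp (-y) * (Real.exp (-(x-y)) - 1) ≥ Real.exp (-y) * (-(x-y)) := by
    apply mul_le_mul_of_nonneg_left h2 (Real.exp_nonneg _)
  nlinarith [Real.exp_nonneg (-y), Real.exp_pos (-(x-y))]

lemma L_bern {β : ℝ} (hβ0 : 0 < β) (hβ1 : β ≤ 1) {a b : ℝ} (ha : 0 < a) (hab : a ≤ b) :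
    b ^ β - a ^ β ≤ β * a ^ (β - 1) * (b - a) := by
  have hs : (0:ℝ) ≤ (b - a) / a := div_nonneg (by linarith) ha.le
  have key : (1 + (b-a)/a) ^ β ≤ 1 + β * ((b-a)/a) :=
    rpow_one_add_le_one_add_mul_self (by linarith) hβ0.le hβ1
  have hb' : b = a * (1 + (b-a)/a) := by field_simp; ring
  have h2 : b ^ β = a ^ β * (1 + (b-a)/a) ^ β := by
    nth_rewrite 1 [hb']
    rw [Real.mul_rpow ha.le (by linarith)]
  have h3 : a ^ β * (1 + (b-a)/a) ^ β ≤ a ^ β * (1 + β * ((b-a)/a)) :=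
    mul_le_mul_of_nonneg_left key (Real.rpow_nonneg ha.le β)
  have h4 : a ^ (β - 1) = a ^ β / a := by
    rw [Real.rpow_sub ha, Real.rpow_one]
  rw [h2, h4]
  have : a ^ β * (1 + β * ((b-a)/a)) = a ^ β + β * (a ^ β / a) * (b - a) := by
    field_simp
  linarith

lemma L_abs_rpow {β m a b : ℝ} (hβ0 : 0 < β) (hβ1 : β ≤ 1) (hm : 0 < m)
    (ha : m ≤ a) (hb : m ≤ b) : |a ^ β - b ^ β| ≤ β * m ^ (β - 1) * |a - b| := by
  have hmono : ∀ x y : ℝ, m ≤ x → m ≤ y → x ≤ y → y ^ β - x ^ β ≤ β * m ^ (β-1) * (y - x) := by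
    intro x y hx hy hxy
    calc y ^ β - x ^ β ≤ β * x ^ (β - 1) * (y - x) := L_bern hβ0 hβ1 (hm.trans_le hx) hxy
      _ ≤ β * m ^ (β - 1) * (y - x) := by
        apply mul_le_mul_of_nonneg_right _ (by linarith)
        apply mul_le_mul_of_nonneg_left _ hβ0.le
        exact Real.rpow_le_rpow_of_nonpos hm hx (by linarith)
  rcases le_total a b with h | h
  · rw [abs_sub_comm, abs_of_nonneg (by nlinarith [Real.rpow_le_rpow (by linarith : (0:ℝ) ≤ a) h hβ0.le]), abs_sub_comm, abs_of_nonneg (by linarith)]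
    exact hmono a b ha hb h
  · rw [abs_of_nonneg (by nlinarith [Real.rpow_le_rpow (by linarith : (0:ℝ) ≤ b) h hβ0.le]), abs_of_nonneg (by linarith)]
    exact hmono b a hb ha h

lemma L_xpow {β : ℝ} (hβ0 : 0 < β) {r u : ℝ} (hr : 0 ≤ r) (hu : 0 ≤ u) :
    (r * u ^ (1/β)) ^ β = r ^ β * u := by
  rw [Real.mul_rpow hr (Real.rpow_nonneg hu _), ← Real.rpow_mul hu,
    one_div, inv_mul_cancel₀ hβ0.ne', Real.rpow_one]

lemma L_pt {β : ℝ} (hβ0 : 0 < β) {F : ℝ → ℝ} (hF0 : ∀ x ≥ (0:ℝ), 0 ≤ F x)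
    (hF1 : ∀ x ≥ (0:ℝ), F x ≤ x) {r u : ℝ} (hr : 0 < r) (hu : u ∈ Ioo (0:ℝ) 1) :
    F (r * u ^ (1/β)) ^ β * u⁻¹ ∈ Icc (0:ℝ) (r ^ β) := by
  obtain ⟨hu0, hu1⟩ := hu
  have hx0 : 0 ≤ r * u ^ (1/β) := by positivity
  constructor
  · exact mul_nonneg (Real.rpow_nonneg (hF0 _ hx0) _) (inv_nonneg.2 hu0.le)
  · have h1 : F (r * u ^ (1/β)) ^ β ≤ (r * u ^ (1/β)) ^ β :=
      Real.rpow_le_rpow (hF0 _ hx0) (hF1 _ hx0) hβ0.le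
    rw [L_xpow hβ0 hr.le hu0.le] at h1
    calc F (r * u ^ (1/β)) ^ β * u⁻¹ ≤ (r ^ β * u) * u⁻¹ :=
          mul_le_mul_of_nonneg_right h1 (inv_nonneg.2 hu0.le)
      _ = r ^ β := by field_simp

lemma L_meas_inner {β : ℝ} {F : ℝ → ℝ} (hF : Measurable F) :
    Measurable (fun p : ℝ × ℝ => F (p.1 * p.2 ^ (1/β)) ^ β * p.2⁻¹) := by
  fun_prop

lemma L_meas_inner1 {β : ℝ} {F : ℝ → ℝ} (hF : Measurable F) (r : ℝ) :
    Measurable (fun u : ℝ => F (r * u ^ (1/β)) ^ β * u⁻¹) := by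
  fun_prop

lemma L_int_inner {β : ℝ} (hβ0 : 0 < β) {F : ℝ → ℝ} (hF : Measurable F)
    (hF0 : ∀ x ≥ (0:ℝ), 0 ≤ F x) (hF1 : ∀ x ≥ (0:ℝ), F x ≤ x) {r : ℝ} (hr : 0 < r) :
    IntegrableOn (fun u => F (r * u ^ (1/β)) ^ β * u⁻¹) (Ioo 0 1) := by
  apply Integrable.mono' (g := fun _ => r ^ β)
    (integrableOn_const measure_Ioo_lt_top.ne)
    ((L_meas_inner1 hF r).aestronglyMeasurable)
  rw [ae_restrict_iff' measurableSet_Ioo]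
  filter_upwards with u hu
  have h := L_pt hβ0 hF0 hF1 hr hu
  rw [Real.norm_eq_abs, abs_of_nonneg h.1]
  exact h.2

lemma L_I_nonneg {β : ℝ} {F : ℝ → ℝ} (hF0 : ∀ x ≥ (0:ℝ), 0 ≤ F x) {r : ℝ} (hr : 0 < r) :
    0 ≤ ∫ u in Ioo (0:ℝ) 1, F (r * u ^ (1/β)) ^ β * u⁻¹ := by
  apply setIntegral_nonneg measurableSet_Ioo
  intro u hu
  have hx0 : 0 ≤ r * u ^ (1/β) := mul_nonneg hr.le (Real.rpow_nonneg hu.1.le _)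
  exact mul_nonneg (Real.rpow_nonneg (hF0 _ hx0) _) (inv_nonneg.2 hu.1.le)

lemma L_I_le {β : ℝ} (hβ0 : 0 < β) {F : ℝ → ℝ} (hF0 : ∀ x ≥ (0:ℝ), 0 ≤ F x)
    (hF1 : ∀ x ≥ (0:ℝ), F x ≤ x) {r : ℝ} (hr : 0 < r) :
    (∫ u in Ioo (0:ℝ) 1, F (r * u ^ (1/β)) ^ β * u⁻¹) ≤ r ^ β := by
  have h2 : (∫ u in Ioo (0:ℝ) 1, F (r * u ^ (1/β)) ^ β * u⁻¹)
      ≤ ∫ _u in Ioo (0:ℝ) 1, r ^ β := by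
    apply integral_mono_of_nonneg
    · filter_upwards [ae_restrict_mem measurableSet_Ioo] with u hu
      exact (L_pt hβ0 hF0 hF1 hr hu).1
    · exact integrableOn_const measure_Ioo_lt_top.ne
    · filter_upwards [ae_restrict_mem measurableSet_Ioo] with u hu
      exact (L_pt hβ0 hF0 hF1 hr hu).2
  calc _ ≤ _ := h2
    _ = r ^ β := by
      rw [setIntegral_const, measureReal_def, Real.volume_Ioo]
      norm_num

lemma L_meas_I {β : ℝ} {F : ℝ → ℝ} (hF : Measurable F) :
    Measurable (fun r : ℝ => ∫ u in Ioo (0:ℝ) 1, F (r * u ^ (1/β)) ^ β * u⁻¹) := by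
  have h : StronglyMeasurable (fun p : ℝ × ℝ => F (p.1 * p.2 ^ (1/β)) ^ β * p.2⁻¹) :=
    (L_meas_inner hF).stronglyMeasurable
  exact (StronglyMeasurable.integral_prod_right' (ν := volume.restrict (Ioo 0 1)) h).measurable


noncomputable def gsol (β θ : ℝ) : ℝ := θ * (1 + θ ^ β) ^ (-(1/β))

lemma L_g_nonneg {β θ : ℝ} (hθ : 0 ≤ θ) : 0 ≤ gsol β θ :=
  mul_nonneg hθ (Real.rpow_nonneg (by positivity) _)

lemma L_g_le {β θ : ℝ} (hβ0 : 0 < β) (hθ : 0 ≤ θ) : gsol β θ ≤ θ := by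
  have h1 : (1 + θ ^ β) ^ (-(1/β)) ≤ 1 :=
    Real.rpow_le_one_of_one_le_of_nonpos
      (by nlinarith [Real.rpow_nonneg hθ β]) (neg_nonpos.2 (by positivity))
  calc gsol β θ ≤ θ * 1 := mul_le_mul_of_nonneg_left h1 hθ
    _ = θ := mul_one θ

lemma L_g_ge {β θ T : ℝ} (hβ0 : 0 < β) (hθ : 0 ≤ θ) (hθT : θ ≤ T) :
    (1 + T ^ β) ^ (-(1/β)) * θ ≤ gsol β θ := by
  rw [gsol, mul_comm ((1 + T ^ β) ^ (-(1/β))) θ]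
  apply mul_le_mul_of_nonneg_left _ hθ
  apply Real.rpow_le_rpow_of_nonpos (by positivity) _ (neg_nonpos.2 (by positivity))
  have : θ ^ β ≤ T ^ β := Real.rpow_le_rpow hθ hθT hβ0.le
  linarith

lemma L_g_meas {β : ℝ} : Measurable (gsol β) := by
  unfold gsol; fun_prop

lemma L_g_cont {β : ℝ} (hβ0 : 0 < β) : ContinuousOn (gsol β) (Ici 0) := by
  apply ContinuousOn.mul continuousOn_id
  apply ContinuousOn.rpow_const
  · exact (continuous_const.add (Real.continuous_rpow_const hβ0.le)).continuousOn
  · intro x hx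
    have : (0:ℝ) ≤ x ^ β := Real.rpow_nonneg hx _
    exact Or.inl (by positivity)

lemma L_g_pow {β x : ℝ} (hβ0 : 0 < β) (hx : 0 ≤ x) :
    gsol β x ^ β = x ^ β * (1 + x ^ β)⁻¹ := by
  have hy : (0:ℝ) < 1 + x ^ β := by positivity
  rw [gsol, Real.mul_rpow hx (Real.rpow_nonneg hy.le _), ← Real.rpow_mul hy.le]
  congr 1
  rw [show -(1/β) * β = -1 by field_simp, Real.rpow_neg_one]

/-- inner integral for the explicit solution -/
lemma L_g_inner {β r : ℝ} (hβ0 : 0 < β) (hr : 0 < r) :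
    ∫ u in Ioo (0:ℝ) 1, gsol β (r * u ^ (1/β)) ^ β * u⁻¹ = Real.log (1 + r ^ β) := by
  have hrβ : (0:ℝ) < r ^ β := Real.rpow_pos_of_pos hr _
  have hcongr : ∀ u ∈ Ioo (0:ℝ) 1,
      gsol β (r * u ^ (1/β)) ^ β * u⁻¹ = r ^ β / (1 + r ^ β * u) := by
    intro u hu
    have hu0 : (0:ℝ) < u := hu.1
    have hx : (0:ℝ) ≤ r * u ^ (1/β) := by positivity
    rw [L_g_pow hβ0 hx]
    rw [show (r * u ^ (1/β)) ^ β = r ^ β * u by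
      rw [Real.mul_rpow hr.le (Real.rpow_nonneg hu0.le _), ← Real.rpow_mul hu0.le,
        one_div, inv_mul_cancel₀ hβ0.ne', Real.rpow_one]]
    have hden : (0:ℝ) < 1 + r ^ β * u := by positivity
    field_simp
  rw [setIntegral_congr_fun measurableSet_Ioo hcongr]
  have hderiv : ∀ u ∈ uIcc (0:ℝ) 1,
      HasDerivAt (fun u => Real.log (1 + r ^ β * u)) (r ^ β / (1 + r ^ β * u)) u := by
    intro u hu
    rw [uIcc_of_le zero_le_one] at hu
    have hden : (0:ℝ) < 1 + r ^ β * u := by nlinarith [hu.1, hrβ]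
    have h1 : HasDerivAt (fun u : ℝ => 1 + r ^ β * u) (r ^ β) u := by
      simpa using ((hasDerivAt_id u).const_mul (r ^ β)).const_add 1
    simpa using h1.log hden.ne'
  have hcont : ContinuousOn (fun u : ℝ => r ^ β / (1 + r ^ β * u)) (uIcc 0 1) := by
    rw [uIcc_of_le zero_le_one]
    apply ContinuousOn.div continuousOn_const
      (continuous_const.add (continuous_const.mul continuous_id)).continuousOn
    intro u hu
    have : (0:ℝ) < 1 + r ^ β * u := by nlinarith [hu.1, hrβ]
    exact this.ne'
  have hint : IntervalIntegrable (fun u : ℝ => r ^ β / (1 + r ^ β * u)) volume 0 1 :=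
    hcont.intervalIntegrable
  have := integral_eq_sub_of_hasDerivAt hderiv hint
  rw [intervalIntegral.integral_of_le zero_le_one, integral_Ioc_eq_integral_Ioo] at this
  rw [this]
  simp

/-- outer FTC for the explicit solution -/
lemma L_g_outer {β θ : ℝ} (hβ0 : 0 < β) (hθ : 0 < θ) :
    ∫ r in Ioo (0:ℝ) θ, (1 + r ^ β) ^ (-((β+1)/β)) = gsol β θ := by
  have hcont : ContinuousOn (gsol β) (Icc 0 θ) :=
    (L_g_cont hβ0).mono (Icc_subset_Ici_self)
  have hderiv : ∀ r ∈ Ioo (0:ℝ) θ,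
      HasDerivAt (gsol β) ((1 + r ^ β) ^ (-((β+1)/β))) r := by
    intro r hr
    have hr0 : (0:ℝ) < r := hr.1
    have hy : (0:ℝ) < 1 + r ^ β := by positivity
    have h1 : HasDerivAt (fun x : ℝ => x ^ β) (β * r ^ (β-1)) r :=
      Real.hasDerivAt_rpow_const (Or.inl hr0.ne')
    have h2 : HasDerivAt (fun x : ℝ => 1 + x ^ β) (β * r ^ (β-1)) r := h1.const_add 1
    have h3 : HasDerivAt (fun y : ℝ => y ^ (-(1/β)))
        (-(1/β) * (1 + r ^ β) ^ (-(1/β) - 1)) (1 + r ^ β) :=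
      Real.hasDerivAt_rpow_const (Or.inl hy.ne')
    have h4 : HasDerivAt (fun x : ℝ => (1 + x ^ β) ^ (-(1/β)))
        (-(1/β) * (1 + r ^ β) ^ (-(1/β) - 1) * (β * r ^ (β-1))) r := by
        have h := h3.comp r h2; exact h
    have h5 := (hasDerivAt_id r).mul h4
    have key : 1 * (1 + r ^ β) ^ (-(1/β)) +
        r * (-(1/β) * (1 + r ^ β) ^ (-(1/β) - 1) * (β * r ^ (β-1)))
        = (1 + r ^ β) ^ (-((β+1)/β)) := by
      have e1 : r * r ^ (β - 1) = r ^ β := by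
        rw [← Real.rpow_one_add' hr0.le (by rw [show (1:ℝ) + (β - 1) = β by ring]; exact hβ0.ne')]
        congr 1
        ring
      have e2 : (1 + r ^ β) ^ (-(1/β)) = (1 + r ^ β) * (1 + r ^ β) ^ (-(1/β) - 1) := by
        rw [← Real.rpow_one_add' hy.le (by
          rw [show (1:ℝ) + (-(1/β) - 1) = -(1/β) by ring]
          exact neg_ne_zero.2 (one_div_ne_zero hβ0.ne'))]
        congr 1
        ring
      have e3 : -(1/β) - 1 = -((β+1)/β) := by field_simp; ring
      have h6 : r * (-(1/β) * (1 + r ^ β) ^ (-(1/β) - 1) * (β * r ^ (β-1)))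
          = -(r ^ β * (1 + r ^ β) ^ (-(1/β) - 1)) := by
        have hββ : (1/β) * β = 1 := by field_simp
        calc r * (-(1/β) * (1 + r ^ β) ^ (-(1/β) - 1) * (β * r ^ (β-1)))
            = -((1/β)*β) * (1 + r ^ β) ^ (-(1/β) - 1) * (r * r ^ (β-1)) := by ring
          _ = -(r ^ β * (1 + r ^ β) ^ (-(1/β) - 1)) := by rw [hββ, e1]; ring
      rw [← e3, e2, h6]
      ring
    rw [← key]
    exact h5
  have hintcont : ContinuousOn (fun r : ℝ => (1 + r ^ β) ^ (-((β+1)/β))) (Icc 0 θ) := by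
    apply ContinuousOn.rpow_const
    · exact (continuous_const.add (Real.continuous_rpow_const hβ0.le)).continuousOn
    · intro x hx
      have : (0:ℝ) ≤ x ^ β := Real.rpow_nonneg hx.1 _
      exact Or.inl (by positivity)
  have hint : IntervalIntegrable (fun r : ℝ => (1 + r ^ β) ^ (-((β+1)/β))) volume 0 θ := by
    rw [intervalIntegrable_iff_integrableOn_Icc_of_le hθ.le]
    exact hintcont.integrableOn_compact isCompact_Icc
  have := integral_eq_sub_of_hasDerivAt_of_le hθ.le hcont hderiv hint
  rw [intervalIntegral.integral_of_le hθ.le, integral_Ioc_eq_integral_Ioo] at this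
  rw [this]
  simp [gsol]

lemma L_intOn_rpow {s x : ℝ} (hs : -1 < s) (hx : 0 ≤ x) :
    IntegrableOn (fun r : ℝ => r ^ s) (Ioo 0 x) := by
  have h := intervalIntegral.intervalIntegrable_rpow' (a := 0) (b := x) hs
  rw [intervalIntegrable_iff] at h
  exact h.mono_set (by rw [uIoc_of_le hx]; exact Ioo_subset_Ioc_self)

lemma L_int_rpow {s x : ℝ} (hs : -1 < s) (hx : 0 ≤ x) :
    ∫ r in Ioo (0:ℝ) x, r ^ s = x ^ (s+1) / (s+1) := by
  rw [← integral_Ioc_eq_integral_Ioo, ← intervalIntegral.integral_of_le hx,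
    integral_rpow (Or.inl hs), Real.zero_rpow (by linarith : s + 1 ≠ 0)]
  ring

lemma L_int_monomial (n : ℕ) : ∫ u in Ioo (0:ℝ) 1, u ^ (n:ℝ) = 1/(n+1) := by
  have h : (-1:ℝ) < n := lt_of_lt_of_le (by norm_num) (Nat.cast_nonneg n)
  rw [L_int_rpow h zero_le_one, Real.one_rpow]

lemma L_int_e {β κ : ℝ} (hκ : 0 ≤ κ) {F : ℝ → ℝ} (hF : Measurable F)
    (hF0 : ∀ x ≥ (0:ℝ), 0 ≤ F x) (x : ℝ) :
    IntegrableOn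
      (fun r => Real.exp (-κ * ∫ u in Ioo (0:ℝ) 1, F (r * u ^ (1/β)) ^ β * u⁻¹))
      (Ioo 0 x) := by
  apply Integrable.mono' (g := fun _ => (1:ℝ))
    (integrableOn_const measure_Ioo_lt_top.ne)
    (((L_meas_I hF).const_mul (-κ)).exp.aestronglyMeasurable)
  filter_upwards [ae_restrict_mem measurableSet_Ioo] with r hr
  rw [Real.norm_eq_abs, abs_of_pos (Real.exp_pos _), Real.exp_le_one_iff]
  exact mul_nonpos_of_nonpos_of_nonneg (neg_nonpos.2 hκ) (L_I_nonneg hF0 hr.1)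

lemma L_g_form {β θ : ℝ} (hβ0 : 0 < β) (hθ : 0 < θ) :
    gsol β θ = (1 + θ ^ (-β)) ^ (-(1/β)) := by
  have hmul : θ ^ (-β) * θ ^ β = 1 := by
    rw [← Real.rpow_add hθ]; simp
  have h1 : 1 + θ ^ (-β) = θ ^ (-β) * (1 + θ ^ β) := by
    rw [mul_add, mul_one, hmul, add_comm]
  rw [h1, Real.mul_rpow (Real.rpow_nonneg hθ.le _) (by positivity),
    ← Real.rpow_mul hθ.le, show (-β) * (-(1/β)) = 1 by field_simp, Real.rpow_one, gsol]

/-- Lemma A.2 (uniqueness part): for `α ∈ (1,2)`, any measurable `G : [0,∞) → [0,∞)` solving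
the nonlinear delay equation
`G(θ) = ∫_0^θ exp{-(α/(α-1)) ∫_0^1 G(r u^{1/(α-1)})^{α-1} u⁻¹ du} dr`, `θ ≥ 0`,
satisfies `G(0) = 0` and `G(θ) = (1 + θ^{-(α-1)})^{-1/(α-1)}` for `θ > 0`. -/
theorem stmt_13 (α : ℝ) (hα1 : 1 < α) (hα2 : α < 2)
    (G : ℝ → ℝ) (hGmeas : Measurable G) (hGnonneg : ∀ θ ≥ (0 : ℝ), 0 ≤ G θ)
    (hGeq : ∀ θ ≥ (0 : ℝ), G θ = ∫ r in Set.Ioo 0 θ,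
      Real.exp (-(α / (α - 1)) *
        ∫ u in Set.Ioo (0:ℝ) 1, G (r * u ^ (1 / (α - 1))) ^ (α - 1) * u⁻¹)) :
    G 0 = 0 ∧ ∀ θ > (0 : ℝ), G θ = (1 + θ ^ (-(α - 1))) ^ (-(1 / (α - 1))) := by
  set β := α - 1 with hβdef
  have hβ0 : 0 < β := by rw [hβdef]; linarith
  have hβ1 : β ≤ 1 := by rw [hβdef]; linarith
  have hα0 : (0:ℝ) < α := by linarith
  have hκ0 : 0 < α / β := div_pos hα0 hβ0
  have hαc : α = β + 1 := by rw [hβdef]; ring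
  have hG0 : G 0 = 0 := by rw [hGeq 0 le_rfl, Set.Ioo_self]; simp
  -- upper bound G x ≤ x
  have hGle : ∀ x ≥ (0:ℝ), G x ≤ x := by
    intro x hx
    rw [hGeq x hx]
    calc (∫ r in Ioo (0:ℝ) x,
          Real.exp (-(α/β) * ∫ u in Ioo (0:ℝ) 1, G (r * u ^ (1/β)) ^ β * u⁻¹))
        ≤ ∫ _r in Ioo (0:ℝ) x, (1:ℝ) := by
          apply integral_mono_of_nonneg
          · filter_upwards with r using Real.exp_nonneg _
          · exact integrableOn_const measure_Ioo_lt_top.ne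
          · filter_upwards [ae_restrict_mem measurableSet_Ioo] with r hr
            rw [Real.exp_le_one_iff]
            exact mul_nonpos_of_nonpos_of_nonneg (neg_nonpos.2 hκ0.le)
              (L_I_nonneg hGnonneg hr.1)
      _ = x := by
          rw [setIntegral_const, measureReal_def, Real.volume_Ioo, smul_eq_mul, mul_one, sub_zero,
            ENNReal.toReal_ofReal hx]
  have hIle : ∀ r : ℝ, 0 < r →
      (∫ u in Ioo (0:ℝ) 1, G (r * u ^ (1/β)) ^ β * u⁻¹) ≤ r ^ β :=
    fun r hr => L_I_le hβ0 hGnonneg hGle hr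
  have hGint : ∀ x : ℝ, IntegrableOn
      (fun r => Real.exp (-(α/β) * ∫ u in Ioo (0:ℝ) 1, G (r * u ^ (1/β)) ^ β * u⁻¹))
      (Ioo 0 x) := fun x => L_int_e hκ0.le hGmeas hGnonneg x
  have hgint : ∀ x : ℝ, IntegrableOn
      (fun r => Real.exp (-(α/β) * ∫ u in Ioo (0:ℝ) 1, gsol β (r * u ^ (1/β)) ^ β * u⁻¹))
      (Ioo 0 x) :=
    fun x => L_int_e hκ0.le L_g_meas (fun y hy => L_g_nonneg hy) x
  -- lower bound for G
  have hGge : ∀ T, 0 < T → ∀ x, 0 < x → x ≤ T → Real.exp (-(α/β) * T ^ β) * x ≤ G x := by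
    intro T hT x hx hxT
    rw [hGeq x hx.le]
    have h1 : (∫ _r in Ioo (0:ℝ) x, Real.exp (-(α/β) * T ^ β))
        ≤ ∫ r in Ioo (0:ℝ) x,
          Real.exp (-(α/β) * ∫ u in Ioo (0:ℝ) 1, G (r * u ^ (1/β)) ^ β * u⁻¹) := by
      apply integral_mono_of_nonneg
      · filter_upwards with r using Real.exp_nonneg _
      · exact hGint x
      · filter_upwards [ae_restrict_mem measurableSet_Ioo] with r hr
        apply Real.exp_le_exp.2
        have h2 := hIle r hr.1
        have h3 : r ^ β ≤ T ^ β := Real.rpow_le_rpow hr.1.le (hr.2.le.trans hxT) hβ0.le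
        have h4 := mul_le_mul_of_nonpos_left (h2.trans h3) (neg_nonpos.2 hκ0.le)
        linarith
    calc Real.exp (-(α/β) * T ^ β) * x
        = ∫ _r in Ioo (0:ℝ) x, Real.exp (-(α/β) * T ^ β) := by
          rw [setIntegral_const, measureReal_def, Real.volume_Ioo, smul_eq_mul, sub_zero,
            ENNReal.toReal_ofReal hx.le, mul_comm]
      _ ≤ _ := h1
  -- the explicit solution satisfies the same equation
  have hg_eq : ∀ x : ℝ, 0 < x → gsol β x = ∫ r in Ioo (0:ℝ) x,
      Real.exp (-(α/β) * ∫ u in Ioo (0:ℝ) 1, gsol β (r * u ^ (1/β)) ^ β * u⁻¹) := by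
    intro x hx
    rw [← L_g_outer hβ0 hx]
    apply setIntegral_congr_fun measurableSet_Ioo
    intro r hr
    dsimp only
    rw [L_g_inner hβ0 hr.1,
      Real.rpow_def_of_pos (by have h := Real.rpow_pos_of_pos hr.1 β; linarith : (0:ℝ) < 1 + r ^ β)]
    congr 1
    rw [hαc]
    ring
  refine ⟨hG0, ?_⟩
  intro θ hθ
  -- constants
  set c : ℝ := min (Real.exp (-(α/β) * θ ^ β)) ((1 + θ ^ β) ^ (-(1/β))) with hcdef
  have hc0 : 0 < c := lt_min (Real.exp_pos _) (Real.rpow_pos_of_pos (by positivity) _)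
  have hlowG : ∀ x, 0 < x → x ≤ θ → c * x ≤ G x := fun x hx hxT =>
    le_trans (mul_le_mul_of_nonneg_right (min_le_left _ _) hx.le) (hGge θ hθ x hx hxT)
  have hlowg : ∀ x, 0 < x → x ≤ θ → c * x ≤ gsol β x := fun x hx hxT =>
    le_trans (mul_le_mul_of_nonneg_right (min_le_right _ _) hx.le) (L_g_ge hβ0 hx.le hxT)
  set A : ℝ := α * c ^ (β - 1) with hAdef
  have hA0 : 0 < A := mul_pos hα0 (Real.rpow_pos_of_pos hc0 _)
  -- main induction
  have main : ∀ n : ℕ, ∀ x, 0 < x → x ≤ θ →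
      |G x - gsol β x| ≤ A ^ n / (n.factorial : ℝ) * x ^ (1 + (n:ℝ) * β) := by
    intro n
    induction n with
    | zero =>
      intro x hx hxT
      simp only [pow_zero, Nat.factorial_zero, Nat.cast_one, Nat.cast_zero, zero_mul,
        add_zero, Real.rpow_one, div_one, one_mul]
      rw [abs_le]
      have h1 := hGnonneg x hx.le
      have h2 := hGle x hx.le
      have h3 := L_g_nonneg (β := β) hx.le
      have h4 := L_g_le (θ := x) hβ0 hx.le
      constructor <;> linarith
    | succ n ih =>
      intro x hx hxT
      -- pointwise bound on the inner integrand difference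
      have hptu : ∀ r, 0 < r → r ≤ θ → ∀ u ∈ Ioo (0:ℝ) 1,
          |G (r * u ^ (1/β)) ^ β * u⁻¹ - gsol β (r * u ^ (1/β)) ^ β * u⁻¹|
            ≤ β * c ^ (β-1) * (A ^ n / (n.factorial : ℝ)) * r ^ (((n:ℝ)+1) * β)
              * u ^ (n:ℝ) := by
        intro r hr hrT u hu
        obtain ⟨hu0, hu1⟩ := hu
        set y := r * u ^ (1/β) with hy
        have hy0 : 0 < y := mul_pos hr (Real.rpow_pos_of_pos hu0 _)
        have hyr : y ≤ r := by
          have h5 : u ^ (1/β) ≤ 1 := Real.rpow_le_one hu0.le hu1.le (by positivity)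
          calc y = r * u ^ (1/β) := hy
            _ ≤ r * 1 := mul_le_mul_of_nonneg_left h5 hr.le
            _ = r := mul_one r
        have hyT : y ≤ θ := hyr.trans hrT
        have hm : 0 < c * y := mul_pos hc0 hy0
        have h1 : |G y ^ β - gsol β y ^ β| ≤ β * (c*y) ^ (β-1) * |G y - gsol β y| :=
          L_abs_rpow hβ0 hβ1 hm (hlowG y hy0 hyT) (hlowg y hy0 hyT)
        have h2 : |G y - gsol β y| ≤ A ^ n / (n.factorial : ℝ) * y ^ (1 + (n:ℝ)*β) :=
          ih y hy0 hyT
        have e1 : (c*y) ^ (β-1) = c ^ (β-1) * y ^ (β-1) := Real.mul_rpow hc0.le hy0.le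
        have e2 : y ^ (β-1) * y ^ (1 + (n:ℝ)*β) = y ^ (((n:ℝ)+1) * β) := by
          rw [← Real.rpow_add hy0]; congr 1; ring
        have e3 : y ^ (((n:ℝ)+1) * β) = r ^ (((n:ℝ)+1) * β) * u ^ ((n:ℝ)+1) := by
          rw [hy, Real.mul_rpow hr.le (Real.rpow_nonneg hu0.le _), ← Real.rpow_mul hu0.le]
          congr 2
          field_simp
        have e4 : u ^ ((n:ℝ)+1) * u⁻¹ = u ^ (n:ℝ) := by
          rw [← Real.rpow_neg_one u, ← Real.rpow_add hu0]; congr 1; ring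
        rw [← sub_mul, abs_mul, abs_of_nonneg (inv_nonneg.2 hu0.le)]
        calc |G y ^ β - gsol β y ^ β| * u⁻¹
            ≤ (β * (c*y) ^ (β-1) * (A ^ n / (n.factorial : ℝ) * y ^ (1 + (n:ℝ)*β))) * u⁻¹ := by
              apply mul_le_mul_of_nonneg_right _ (inv_nonneg.2 hu0.le)
              refine h1.trans ?_
              apply mul_le_mul_of_nonneg_left h2
              positivity
          _ = β * c ^ (β-1) * (A ^ n / (n.factorial : ℝ))
              * (y ^ (β-1) * y ^ (1 + (n:ℝ)*β)) * u⁻¹ := by rw [e1]; ring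
          _ = β * c ^ (β-1) * (A ^ n / (n.factorial : ℝ))
              * (r ^ (((n:ℝ)+1) * β) * u ^ ((n:ℝ)+1)) * u⁻¹ := by rw [e2, e3]
          _ = β * c ^ (β-1) * (A ^ n / (n.factorial : ℝ))
              * r ^ (((n:ℝ)+1) * β) * (u ^ ((n:ℝ)+1) * u⁻¹) := by ring
          _ = _ := by rw [e4]
      -- bound on the inner integral difference
      have hIdiff : ∀ r, 0 < r → r ≤ θ →
          |(∫ u in Ioo (0:ℝ) 1, G (r * u ^ (1/β)) ^ β * u⁻¹)
            - ∫ u in Ioo (0:ℝ) 1, gsol β (r * u ^ (1/β)) ^ β * u⁻¹|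
          ≤ β * c ^ (β-1) * (A ^ n / (n.factorial : ℝ)) * r ^ (((n:ℝ)+1) * β)
            / ((n:ℝ)+1) := by
        intro r hr hrT
        have hiG : IntegrableOn (fun u => G (r * u ^ (1/β)) ^ β * u⁻¹) (Ioo 0 1) :=
          L_int_inner hβ0 hGmeas hGnonneg hGle hr
        have hig : IntegrableOn (fun u => gsol β (r * u ^ (1/β)) ^ β * u⁻¹) (Ioo 0 1) :=
          L_int_inner hβ0 L_g_meas (fun y hy => L_g_nonneg hy)
            (fun y hy => L_g_le hβ0 hy) hr
        rw [← integral_sub hiG hig]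
        have habs : |∫ u in Ioo (0:ℝ) 1,
              (G (r * u ^ (1/β)) ^ β * u⁻¹ - gsol β (r * u ^ (1/β)) ^ β * u⁻¹)|
            ≤ ∫ u in Ioo (0:ℝ) 1,
              |G (r * u ^ (1/β)) ^ β * u⁻¹ - gsol β (r * u ^ (1/β)) ^ β * u⁻¹| := by
          simpa [Real.norm_eq_abs] using
            norm_integral_le_integral_norm (μ := volume.restrict (Ioo (0:ℝ) 1))
              (fun u => G (r * u ^ (1/β)) ^ β * u⁻¹ - gsol β (r * u ^ (1/β)) ^ β * u⁻¹)
        refine habs.trans ?_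
        have hmono : (∫ u in Ioo (0:ℝ) 1,
              |G (r * u ^ (1/β)) ^ β * u⁻¹ - gsol β (r * u ^ (1/β)) ^ β * u⁻¹|)
            ≤ ∫ u in Ioo (0:ℝ) 1,
              β * c ^ (β-1) * (A ^ n / (n.factorial : ℝ)) * r ^ (((n:ℝ)+1) * β)
                * u ^ (n:ℝ) := by
          apply integral_mono_of_nonneg
          · filter_upwards with u using abs_nonneg _
          · exact (L_intOn_rpow (lt_of_lt_of_le (by norm_num) (Nat.cast_nonneg n))
              zero_le_one).const_mul _
          · filter_upwards [ae_restrict_mem measurableSet_Ioo] with u hu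
            exact hptu r hr hrT u hu
        refine hmono.trans (le_of_eq ?_)
        rw [MeasureTheory.integral_const_mul, L_int_monomial n]
        ring
      -- pointwise bound on the outer integrand difference
      have hpt_outer : ∀ r, r ∈ Ioo (0:ℝ) x →
          |Real.exp (-(α/β) * ∫ u in Ioo (0:ℝ) 1, G (r * u ^ (1/β)) ^ β * u⁻¹)
            - Real.exp (-(α/β) * ∫ u in Ioo (0:ℝ) 1, gsol β (r * u ^ (1/β)) ^ β * u⁻¹)|
          ≤ A ^ (n+1) / ((n+1).factorial : ℝ) * r ^ (((n:ℝ)+1) * β) := by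
        intro r hr
        have hIG0 : 0 ≤ ∫ u in Ioo (0:ℝ) 1, G (r * u ^ (1/β)) ^ β * u⁻¹ :=
          L_I_nonneg hGnonneg hr.1
        have hIg0 : 0 ≤ ∫ u in Ioo (0:ℝ) 1, gsol β (r * u ^ (1/β)) ^ β * u⁻¹ :=
          L_I_nonneg (fun y hy => L_g_nonneg hy) hr.1
        have h0 := L_exp_lip (mul_nonneg hκ0.le hIG0) (mul_nonneg hκ0.le hIg0)
        simp only [neg_mul] at h0 ⊢
        refine h0.trans ?_
        rw [← mul_sub, abs_mul, abs_of_pos hκ0]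
        have h5 := hIdiff r hr.1 (hr.2.le.trans hxT)
        have h6 := mul_le_mul_of_nonneg_left h5 hκ0.le
        refine h6.trans (le_of_eq ?_)
        have hfact : (((n+1).factorial : ℕ) : ℝ) = (n.factorial : ℝ) * ((n:ℝ)+1) := by
          rw [Nat.factorial_succ]; push_cast; ring
        rw [hfact, pow_succ, hAdef]
        have hnfac : (0:ℝ) < (n.factorial : ℝ) := by positivity
        field_simp
      -- conclude
      rw [hGeq x hx.le, hg_eq x hx, ← integral_sub (hGint x) (hgint x)]
      have habs2 : |∫ r in Ioo (0:ℝ) x,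
            (Real.exp (-(α/β) * ∫ u in Ioo (0:ℝ) 1, G (r * u ^ (1/β)) ^ β * u⁻¹)
            - Real.exp (-(α/β) * ∫ u in Ioo (0:ℝ) 1, gsol β (r * u ^ (1/β)) ^ β * u⁻¹))|
          ≤ ∫ r in Ioo (0:ℝ) x,
            |Real.exp (-(α/β) * ∫ u in Ioo (0:ℝ) 1, G (r * u ^ (1/β)) ^ β * u⁻¹)
            - Real.exp (-(α/β) * ∫ u in Ioo (0:ℝ) 1, gsol β (r * u ^ (1/β)) ^ β * u⁻¹)| := by
        simpa [Real.norm_eq_abs] using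
          norm_integral_le_integral_norm (μ := volume.restrict (Ioo (0:ℝ) x))
            (fun r => Real.exp (-(α/β) * ∫ u in Ioo (0:ℝ) 1, G (r * u ^ (1/β)) ^ β * u⁻¹)
            - Real.exp (-(α/β) * ∫ u in Ioo (0:ℝ) 1, gsol β (r * u ^ (1/β)) ^ β * u⁻¹))
      refine habs2.trans ?_
      have hs0 : (0:ℝ) < ((n:ℝ)+1) * β := by positivity
      have hmono2 : (∫ r in Ioo (0:ℝ) x,
            |Real.exp (-(α/β) * ∫ u in Ioo (0:ℝ) 1, G (r * u ^ (1/β)) ^ β * u⁻¹)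
            - Real.exp (-(α/β) * ∫ u in Ioo (0:ℝ) 1, gsol β (r * u ^ (1/β)) ^ β * u⁻¹)|)
          ≤ ∫ r in Ioo (0:ℝ) x,
            A ^ (n+1) / ((n+1).factorial : ℝ) * r ^ (((n:ℝ)+1) * β) := by
        apply integral_mono_of_nonneg
        · filter_upwards with r using abs_nonneg _
        · exact (L_intOn_rpow (by linarith) hx.le).const_mul _
        · filter_upwards [ae_restrict_mem measurableSet_Ioo] with r hr
          exact hpt_outer r hr
      refine hmono2.trans ?_
      rw [MeasureTheory.integral_const_mul, L_int_rpow (by linarith) hx.le]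
      have hxp : (0:ℝ) ≤ x ^ (((n:ℝ)+1) * β + 1) := Real.rpow_nonneg hx.le _
      have hdiv : x ^ (((n:ℝ)+1) * β + 1) / (((n:ℝ)+1) * β + 1)
          ≤ x ^ (((n:ℝ)+1) * β + 1) := by
        apply div_le_self hxp
        linarith
      have hexp : (((n:ℝ)+1) * β + 1) = 1 + ((n+1 : ℕ) : ℝ) * β := by push_cast; ring
      calc A ^ (n+1) / ((n+1).factorial : ℝ)
            * (x ^ (((n:ℝ)+1) * β + 1) / (((n:ℝ)+1) * β + 1))
          ≤ A ^ (n+1) / ((n+1).factorial : ℝ) * x ^ (((n:ℝ)+1) * β + 1) := by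
            apply mul_le_mul_of_nonneg_left hdiv
            positivity
        _ = A ^ (n+1) / ((n+1).factorial : ℝ) * x ^ (1 + ((n+1 : ℕ) : ℝ) * β) := by
            rw [hexp]
  -- pass to the limit
  have hfin : ∀ n : ℕ, |G θ - gsol β θ| ≤ θ * ((A * θ ^ β) ^ n / (n.factorial : ℝ)) := by
    intro n
    refine (main n θ hθ le_rfl).trans (le_of_eq ?_)
    have h7 : θ ^ (1 + (n:ℝ) * β) = θ * (θ ^ β) ^ n := by
      rw [Real.rpow_add hθ, Real.rpow_one, mul_comm (n:ℝ) β,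
        Real.rpow_mul_natCast hθ.le]
    rw [h7, mul_pow]
    ring
  have ht : Tendsto (fun n : ℕ => θ * ((A * θ ^ β) ^ n / (n.factorial : ℝ)))
      atTop (nhds 0) := by
    have h8 := (FloorSemiring.tendsto_pow_div_factorial_atTop (A * θ ^ β)).const_mul θ
    simpa using h8
  have h9 : |G θ - gsol β θ| ≤ 0 := ge_of_tendsto' ht hfin
  have h10 : G θ = gsol β θ :=
    sub_eq_zero.1 (abs_eq_zero.1 (le_antisymm h9 (abs_nonneg _)))
  rw [h10, L_g_form hβ0 hθ]
end
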